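/- arXiv:1603.03117 — 5 statements merged into one kernel-verified Lean document; each statement's English description precedes it below -/
import Mathlib

section
/- Assume f(0) = 0 and f'_y(0) ≠ 0. Let m > 0 and let T̃(x,y) be the unique solution of X(T̃(x,y),x,y) = −x with |T̃(x,y)| ≤ (4m/|f'_y(0)|)·y², defined for |x| ≤ m|y|³ and |y| small. Then T̃(x,y)·(y/x) → −2/f'_y(0) as |x| ≤ m|y|³, x ≠ 0, y → 0; that is, for every ε > 0 there exists δ > 0 such that |T̃(x,y)·(y/x) + 2/f'_y(0)| ≤ ε whenever 0 < |y| ≤ δ, 0 < |x| ≤ m|y|³. -/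
open Set Filter Topology

/-- Partial derivative in the second variable. -/
noncomputable def pdy (f : ℝ → ℝ → ℝ) (a b : ℝ) : ℝ := deriv (fun y => f a y) b

lemma quad_bound (F : ℝ × ℝ → ℝ) (h : ContDiffAt ℝ 2 F 0) :
    ∃ r > (0:ℝ), ∃ L : ℝ, 0 ≤ L ∧ ∀ p : ℝ × ℝ, ‖p‖ ≤ r →
      (DifferentiableAt ℝ F p ∧ |F p - F 0 - fderiv ℝ F 0 p| ≤ L * ‖p‖ ^ 2) := by
  have h1 : ContDiffAt ℝ 1 (fderiv ℝ F) 0 := h.fderiv_right (by norm_num)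
  obtain ⟨K, t, ht, hlip⟩ := h1.exists_lipschitzOnWith
  have hdiff : ∀ᶠ q in nhds (0 : ℝ × ℝ), DifferentiableAt ℝ F q ∧ q ∈ t := by
    filter_upwards [h.eventually (by norm_num), ht] with q hq hq'
    exact ⟨hq.differentiableAt (by norm_num), hq'⟩
  obtain ⟨r, hr, hball⟩ := Metric.eventually_nhds_iff_ball.mp hdiff
  refine ⟨r / 2, by linarith, K, K.2, fun p hp => ?_⟩
  have hsub : Metric.closedBall (0 : ℝ × ℝ) ‖p‖ ⊆ Metric.ball 0 r := by
    intro q hq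
    rw [Metric.mem_closedBall, dist_zero_right] at hq
    rw [Metric.mem_ball, dist_zero_right]
    linarith
  have h0mem : (0 : ℝ × ℝ) ∈ Metric.closedBall (0 : ℝ × ℝ) ‖p‖ :=
    Metric.mem_closedBall_self (norm_nonneg p)
  have hpmem : p ∈ Metric.closedBall (0 : ℝ × ℝ) ‖p‖ := by
    simp [Metric.mem_closedBall, dist_zero_right]
  have hdiff' : ∀ q ∈ Metric.closedBall (0 : ℝ × ℝ) ‖p‖, DifferentiableAt ℝ F q :=
    fun q hq => (hball q (hsub hq)).1
  have hbound : ∀ q ∈ Metric.closedBall (0 : ℝ × ℝ) ‖p‖,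
      ‖fderiv ℝ F q - fderiv ℝ F 0‖ ≤ (K : ℝ) * ‖p‖ := by
    intro q hq
    have h0t : (0 : ℝ × ℝ) ∈ t := (hball 0 (hsub h0mem)).2
    have hqt : q ∈ t := (hball q (hsub hq)).2
    have := hlip.dist_le_mul q hqt 0 h0t
    rw [dist_eq_norm, dist_zero_right] at this
    calc ‖fderiv ℝ F q - fderiv ℝ F 0‖ ≤ (K : ℝ) * ‖q‖ := this
      _ ≤ (K : ℝ) * ‖p‖ := by
          have : ‖q‖ ≤ ‖p‖ := by simpa [dist_zero_right] using hq
          exact mul_le_mul_of_nonneg_left this K.2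
  have := (convex_closedBall _ _).norm_image_sub_le_of_norm_fderiv_le' hdiff' hbound h0mem hpmem
  refine ⟨(hball p (hsub hpmem)).1, ?_⟩
  simp only [sub_zero] at this
  calc |F p - F 0 - fderiv ℝ F 0 p| ≤ (K : ℝ) * ‖p‖ * ‖p‖ := this
    _ = (K : ℝ) * ‖p‖ ^ 2 := by ring

set_option maxHeartbeats 1000000 in
/-- Lemma 2.2, asymptotics of the crossing time:
`T̃(x,y)·(y/x) → -2/f'_y(0)` as `|x| ≤ m|y|³`, `x ≠ 0`, `y → 0`. -/
theorem stmt_3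
    (f g : ℝ → ℝ → ℝ) (X Y : ℝ → ℝ → ℝ → ℝ)
    (U : Set (ℝ × ℝ)) (hU : U ∈ nhds ((0 : ℝ), (0 : ℝ)))
    (hf : ContDiffOn ℝ 4 (fun p : ℝ × ℝ => f p.1 p.2) U)
    (hg : ContDiffOn ℝ 4 (fun p : ℝ × ℝ => g p.1 p.2) U)
    (V : Set (ℝ × ℝ × ℝ)) (hV : V ∈ nhds (((0 : ℝ), (0 : ℝ), (0 : ℝ)) : ℝ × ℝ × ℝ))
    (hX : ContDiffOn ℝ 4 (fun p : ℝ × ℝ × ℝ => X p.1 p.2.1 p.2.2) V)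
    (hY : ContDiffOn ℝ 4 (fun p : ℝ × ℝ × ℝ => Y p.1 p.2.1 p.2.2) V)
    (hode : ∀ t x y : ℝ, (t, x, y) ∈ V →
      HasDerivAt (fun s => X s x y) (f (X t x y) (Y t x y)) t ∧
      HasDerivAt (fun s => Y s x y) (g (X t x y) (Y t x y)) t)
    (hinit : ∀ x y : ℝ, X 0 x y = x ∧ Y 0 x y = y)
    (hf0 : f 0 0 = 0)
    (hfy0 : pdy f 0 0 ≠ 0)
    (m : ℝ) (hm : 0 < m) (δ₀ : ℝ) (hδ₀ : 0 < δ₀)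
    (Tt : ℝ → ℝ → ℝ)
    (hTt : ∀ x y : ℝ, |x| ≤ m * |y| ^ 3 → 0 < |y| → |y| ≤ δ₀ →
      X (Tt x y) x y = -x ∧
      |Tt x y| ≤ 4 * m / |pdy f 0 0| * y ^ 2 ∧
      ∀ t : ℝ, |t| ≤ 4 * m / |pdy f 0 0| * y ^ 2 → X t x y = -x → t = Tt x y) :
    ∀ ε > (0 : ℝ), ∃ δ > (0 : ℝ), ∀ x y : ℝ,
      0 < |y| → |y| ≤ δ → 0 < |x| → |x| ≤ m * |y| ^ 3 →
      |Tt x y * (y / x) + 2 / pdy f 0 0| ≤ ε := by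
  intro ε hε
  set a : ℝ := pdy f 0 0 with ha
  have haa : (0:ℝ) < |a| := abs_pos.mpr hfy0
  set F : ℝ × ℝ → ℝ := fun p => f p.1 p.2 with hFdef
  set G : ℝ × ℝ → ℝ := fun p => g p.1 p.2 with hGdef
  have hnorm2 : ∀ u v : ℝ, ‖((u,v) : ℝ × ℝ)‖ = max |u| |v| := by
    intro u v; simp [Prod.norm_def, Real.norm_eq_abs]
  have hnorm3 : ∀ t x y : ℝ, ‖((t,x,y) : ℝ × ℝ × ℝ)‖ = max |t| (max |x| |y|) := by
    intro t x y; simp [Prod.norm_def, Real.norm_eq_abs]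
  -- Taylor expansion of F
  have hFat : ContDiffAt ℝ 2 F 0 := (hf.contDiffAt hU).of_le (by norm_num)
  obtain ⟨r, hr, L, hL, hquad⟩ := quad_bound F hFat
  have hF0 : F 0 = 0 := hf0
  set D := fderiv ℝ F 0 with hD
  have hFd0 : DifferentiableAt ℝ F 0 := (hquad 0 (by simp [le_of_lt hr])).1
  have haD : a = D (0,1) := by
    have hcomp : HasDerivAt (fun y : ℝ => f 0 y) (D (0,1)) 0 := by
      have h1 : HasDerivAt (fun y : ℝ => ((0:ℝ), y)) ((0:ℝ),(1:ℝ)) 0 :=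
        HasDerivAt.prodMk (hasDerivAt_const (0:ℝ) (0:ℝ)) (hasDerivAt_id (0:ℝ))
      have := hFd0.hasFDerivAt.comp_hasDerivAt 0 h1
      exact this
    rw [ha]; exact hcomp.deriv
  set b : ℝ := D (1,0) with hb
  have hDp : ∀ p : ℝ × ℝ, D p = b * p.1 + a * p.2 := by
    intro p
    have hp : p = p.1 • ((1:ℝ),(0:ℝ)) + p.2 • ((0:ℝ),(1:ℝ)) := by
      ext <;> simp
    rw [haD, hb]
    conv_lhs => rw [hp]
    rw [map_add, map_smul, map_smul]
    simp [smul_eq_mul, mul_comm]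
  have hTaylor : ∀ p : ℝ × ℝ, ‖p‖ ≤ r → |F p - (b * p.1 + a * p.2)| ≤ L * ‖p‖ ^ 2 := by
    intro p hp
    have := (hquad p hp).2
    rwa [hF0, sub_zero, hDp p] at this
  -- continuity and boundedness of G near 0
  have hGat : ContDiffAt ℝ 4 G 0 := hg.contDiffAt hU
  have hGev : ∀ᶠ q in nhds (0 : ℝ × ℝ), ContinuousAt G q ∧ |G q| ≤ |g 0 0| + 1 := by
    have h1 : ∀ᶠ q in nhds (0 : ℝ × ℝ), ContinuousAt G q := by
      filter_upwards [hGat.eventually (by norm_num)] with q hq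
      exact hq.continuousAt
    have h2 : ∀ᶠ q in nhds (0 : ℝ × ℝ), |G q| ≤ |g 0 0| + 1 := by
      have h3 : ∀ᶠ q in nhds (0 : ℝ × ℝ), |G q - G 0| < 1 := by
        obtain ⟨d, hd, hdd⟩ := Metric.continuousAt_iff.mp hGat.continuousAt 1 one_pos
        filter_upwards [Metric.ball_mem_nhds 0 hd] with q hq
        have := hdd hq
        rwa [Real.dist_eq] at this
      filter_upwards [h3] with q hq
      have h4 : |G q| ≤ |G q - G 0| + |G 0| := by
        calc |G q| = |(G q - G 0) + G 0| := by ring_nf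
          _ ≤ |G q - G 0| + |G 0| := abs_add_le _ _
      have hG0 : G 0 = g 0 0 := rfl
      rw [hG0] at h4 hq
      linarith
    exact h1.and h2
  obtain ⟨rg, hrg, hGball⟩ := Metric.eventually_nhds_iff_ball.mp hGev
  set r' : ℝ := min r (rg / 2) with hr'
  have hr'pos : 0 < r' := lt_min hr (by linarith)
  have hr'r : r' ≤ r := min_le_left _ _
  have hGgood : ∀ q : ℝ × ℝ, ‖q‖ ≤ r' → ContinuousAt G q ∧ |G q| ≤ |g 0 0| + 1 := by
    intro q hq
    apply hGball
    rw [Metric.mem_ball, dist_zero_right]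
    calc ‖q‖ ≤ r' := hq
      _ ≤ rg / 2 := min_le_right _ _
      _ < rg := by linarith
  -- ball inside V
  obtain ⟨ρV, hρV, hVball⟩ := Metric.nhds_basis_closedBall.mem_iff.mp hV
  set XX : ℝ × ℝ × ℝ → ℝ := fun p => X p.1 p.2.1 p.2.2 with hXXdef
  set YY : ℝ × ℝ × ℝ → ℝ := fun p => Y p.1 p.2.1 p.2.2 with hYYdef
  have hXX0 : XX 0 = 0 := (hinit 0 0).1
  have hYY0 : YY 0 = 0 := (hinit 0 0).2
  obtain ⟨ρX, hρX, hρXball⟩ := Metric.continuousAt_iff.mp (hX.contDiffAt hV).continuousAt r' hr'pos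
  obtain ⟨ρY, hρY, hρYball⟩ := Metric.continuousAt_iff.mp (hY.contDiffAt hV).continuousAt r' hr'pos
  set ρ₁ : ℝ := min ρV (min ρX ρY / 2) with hρ₁def
  have hρ₁ : 0 < ρ₁ := lt_min hρV (by positivity)
  have h000 : (((0:ℝ),(0:ℝ),(0:ℝ)) : ℝ × ℝ × ℝ) = 0 := rfl
  have hgood : ∀ p : ℝ × ℝ × ℝ, ‖p‖ ≤ ρ₁ → p ∈ V ∧ |XX p| ≤ r' ∧ |YY p| ≤ r' := by
    intro p hp
    have hd : dist p (((0:ℝ),(0:ℝ),(0:ℝ)) : ℝ × ℝ × ℝ) = ‖p‖ := by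
      rw [h000, dist_zero_right]
    have hpV : p ∈ V := hVball (by
      rw [Metric.mem_closedBall, hd]; exact hp.trans (min_le_left _ _))
    have hminXY : 0 < min ρX ρY := lt_min hρX hρY
    have hlt : ‖p‖ < min ρX ρY := by
      have h1 : ‖p‖ ≤ min ρX ρY / 2 := hp.trans (min_le_right _ _)
      linarith
    have hXp := hρXball (show dist p _ < ρX by rw [hd]; exact hlt.trans_le (min_le_left _ _))
    have hYp := hρYball (show dist p _ < ρY by rw [hd]; exact hlt.trans_le (min_le_right _ _))
    rw [h000, hXX0, Real.dist_eq, sub_zero] at hXp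
    rw [h000, hYY0, Real.dist_eq, sub_zero] at hYp
    exact ⟨hpV, le_of_lt hXp, le_of_lt hYp⟩
  -- the constants
  set K₀ : ℝ := 4 * m / |a| with hK₀def
  have hK₀ : 0 < K₀ := by rw [hK₀def]; positivity
  set Mf : ℝ := L * r' ^ 2 + (|a| + |b|) * r' with hMfdef
  have hMf : 0 ≤ Mf := by
    rw [hMfdef]; positivity
  have hFbound : ∀ q : ℝ × ℝ, ‖q‖ ≤ r' → |F q| ≤ Mf := by
    intro q hq
    have h1 := hTaylor q (hq.trans hr'r)
    have hq1 : |q.1| ≤ ‖q‖ := by rw [← Real.norm_eq_abs]; exact norm_fst_le q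
    have hq2 : |q.2| ≤ ‖q‖ := by rw [← Real.norm_eq_abs]; exact norm_snd_le q
    have h2 : |b * q.1 + a * q.2| ≤ (|a| + |b|) * ‖q‖ := by
      calc |b * q.1 + a * q.2| ≤ |b * q.1| + |a * q.2| := abs_add_le _ _
        _ = |b| * |q.1| + |a| * |q.2| := by rw [abs_mul, abs_mul]
        _ ≤ |b| * ‖q‖ + |a| * ‖q‖ := by
            have e1 := mul_le_mul_of_nonneg_left hq1 (abs_nonneg b)
            have e2 := mul_le_mul_of_nonneg_left hq2 (abs_nonneg a)
            linarith
        _ = (|a| + |b|) * ‖q‖ := by ring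
    have h3 : ‖q‖ ^ 2 ≤ r' ^ 2 := pow_le_pow_left₀ (norm_nonneg q) hq 2
    calc |F q| = |(F q - (b * q.1 + a * q.2)) + (b * q.1 + a * q.2)| := by ring_nf
      _ ≤ |F q - (b * q.1 + a * q.2)| + |b * q.1 + a * q.2| := abs_add_le _ _
      _ ≤ L * ‖q‖ ^ 2 + (|a| + |b|) * ‖q‖ := add_le_add h1 h2
      _ ≤ L * r' ^ 2 + (|a| + |b|) * r' := by
          have e1 := mul_le_mul_of_nonneg_left h3 hL
          have e2 : (|a| + |b|) * ‖q‖ ≤ (|a| + |b|) * r' :=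
            mul_le_mul_of_nonneg_left hq (by positivity)
          linarith
      _ = Mf := by rw [hMfdef]
  set Mg : ℝ := |g 0 0| + 1 with hMgdef
  have hMg : 0 ≤ Mg := by rw [hMgdef]; positivity
  set A : ℝ := m + Mf * K₀ with hAdef
  have hA : 0 ≤ A := by rw [hAdef]; positivity
  set B : ℝ := Mg * K₀ with hBdef
  have hB : 0 ≤ B := by rw [hBdef]; positivity
  set C₁ : ℝ := 1 + A + B with hC₁def
  have hC₁ : 0 < C₁ := by rw [hC₁def]; linarith
  set K' : ℝ := |b| * A + |a| * B + L * C₁ ^ 2 + 1 with hK'def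
  have hK'pos : 0 < K' := by
    rw [hK'def]
    linarith only [mul_nonneg (abs_nonneg b) hA, mul_nonneg (le_of_lt haa) hB,
      mul_nonneg hL (sq_nonneg C₁)]
  set δ : ℝ := min δ₀ (min 1 (min (ρ₁ / (1 + m + K₀)) (min (|a| / (2 * K'))
      (ε * |a| ^ 2 / (4 * K'))))) with hδdef
  have h1mK : 0 < 1 + m + K₀ := by linarith
  have hδpos : 0 < δ := by
    rw [hδdef]
    exact lt_min hδ₀ (lt_min one_pos (lt_min (by positivity) (lt_min (by positivity)
      (by positivity))))
  refine ⟨δ, hδpos, ?_⟩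
  intro x y hy hyδ hx hxm
  have hδδ₀ : δ ≤ δ₀ := by rw [hδdef]; exact min_le_left _ _
  have hδ1 : δ ≤ 1 := by rw [hδdef]; exact (min_le_right _ _).trans (min_le_left _ _)
  have hδρ : (1 + m + K₀) * δ ≤ ρ₁ := by
    have h1 : δ ≤ ρ₁ / (1 + m + K₀) := by
      rw [hδdef]
      exact (min_le_right _ _).trans ((min_le_right _ _).trans (min_le_left _ _))
    calc (1 + m + K₀) * δ ≤ (1 + m + K₀) * (ρ₁ / (1 + m + K₀)) :=
          mul_le_mul_of_nonneg_left h1 (le_of_lt h1mK)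
      _ = ρ₁ := by field_simp
  have hδa : 2 * K' * δ ≤ |a| := by
    have h1 : δ ≤ |a| / (2 * K') := by
      rw [hδdef]
      exact (min_le_right _ _).trans ((min_le_right _ _).trans ((min_le_right _ _).trans
        (min_le_left _ _)))
    calc 2 * K' * δ ≤ 2 * K' * (|a| / (2 * K')) :=
          mul_le_mul_of_nonneg_left h1 (by positivity)
      _ = |a| := by field_simp
  have hδε : 4 * K' * δ ≤ ε * |a| ^ 2 := by
    have h1 : δ ≤ ε * |a| ^ 2 / (4 * K') := by
      rw [hδdef]
      exact (min_le_right _ _).trans ((min_le_right _ _).trans ((min_le_right _ _).trans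
        (min_le_right _ _)))
    calc 4 * K' * δ ≤ 4 * K' * (ε * |a| ^ 2 / (4 * K')) :=
          mul_le_mul_of_nonneg_left h1 (by positivity)
      _ = ε * |a| ^ 2 := by field_simp
  -- apply hTt
  obtain ⟨hXT, hTb, -⟩ := hTt x y hxm hy (hyδ.trans hδδ₀)
  set T : ℝ := Tt x y with hTdef
  clear_value T
  have hTK : |T| ≤ K₀ * y ^ 2 := by rw [hK₀def]; exact hTb
  have hy1 : |y| ≤ 1 := hyδ.trans hδ1
  have hysq : y ^ 2 ≤ δ * |y| := by
    calc y ^ 2 = |y| * |y| := by rw [← sq_abs]; ring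
      _ ≤ δ * |y| := mul_le_mul_of_nonneg_right hyδ (abs_nonneg y)
  have hysq1 : y ^ 2 ≤ |y| := by
    calc y ^ 2 = |y| * |y| := by rw [← sq_abs]; ring
      _ ≤ 1 * |y| := mul_le_mul_of_nonneg_right hy1 (abs_nonneg y)
      _ = |y| := one_mul _
  have hy3' : |y| ^ 3 ≤ y ^ 2 := by
    calc |y| ^ 3 = |y| * |y| ^ 2 := by ring
      _ = |y| * y ^ 2 := by rw [sq_abs]
      _ ≤ 1 * y ^ 2 := mul_le_mul_of_nonneg_right hy1 (sq_nonneg y)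
      _ = y ^ 2 := one_mul _
  have hδρ' : δ ≤ ρ₁ := by
    have e1 : (1:ℝ) * δ ≤ (1 + m + K₀) * δ :=
      mul_le_mul_of_nonneg_right (by linarith only [hm, hK₀]) (le_of_lt hδpos)
    linarith only [e1, hδρ]
  -- membership of trajectory
  have hmem : ∀ s : ℝ, |s| ≤ K₀ * y ^ 2 → ((s, x, y) ∈ V ∧ |X s x y| ≤ r' ∧ |Y s x y| ≤ r') := by
    intro s hs
    have hns : ‖((s,x,y) : ℝ × ℝ × ℝ)‖ ≤ ρ₁ := by
      rw [hnorm3]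
      have hyδ2 : y ^ 2 ≤ δ := by
        calc y ^ 2 ≤ δ * |y| := hysq
          _ ≤ δ * 1 := mul_le_mul_of_nonneg_left hy1 (le_of_lt hδpos)
          _ = δ := mul_one _
      have h1 : |s| ≤ ρ₁ := by
        have e2 : K₀ * y ^ 2 ≤ K₀ * δ := mul_le_mul_of_nonneg_left hyδ2 (le_of_lt hK₀)
        have e3 : K₀ * δ ≤ (1 + m + K₀) * δ :=
          mul_le_mul_of_nonneg_right (by linarith only [hm]) (le_of_lt hδpos)
        linarith only [hs, e2, e3, hδρ]
      have h2 : |x| ≤ ρ₁ := by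
        have e4 : |y| ^ 3 ≤ |y| := hy3'.trans hysq1
        have e5 : m * |y| ^ 3 ≤ m * |y| := mul_le_mul_of_nonneg_left e4 (le_of_lt hm)
        have e6 : m * |y| ≤ m * δ := mul_le_mul_of_nonneg_left hyδ (le_of_lt hm)
        have e7 : m * δ ≤ (1 + m + K₀) * δ :=
          mul_le_mul_of_nonneg_right (by linarith only [hK₀]) (le_of_lt hδpos)
        linarith only [hxm, e5, e6, e7, hδρ]
      have h3 : |y| ≤ ρ₁ := hyδ.trans hδρ'
      exact max_le h1 (max_le h2 h3)
    exact hgood _ hns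
  -- derivatives along trajectory
  set φ : ℝ → ℝ := fun τ => F (X τ x y, Y τ x y) with hφdef
  set ψ : ℝ → ℝ := fun τ => G (X τ x y, Y τ x y) with hψdef
  have hder : ∀ s : ℝ, |s| ≤ K₀ * y ^ 2 →
      HasDerivAt (fun τ => X τ x y) (φ s) s ∧ HasDerivAt (fun τ => Y τ x y) (ψ s) s :=
    fun s hs => hode s x y (hmem s hs).1
  have habs_uIcc : ∀ s₀ s : ℝ, s ∈ Set.uIcc 0 s₀ → |s| ≤ |s₀| := by
    intro s₀ s hs
    rcases Set.mem_uIcc.mp hs with ⟨h1, h2⟩ | ⟨h1, h2⟩ <;> rw [abs_le] <;>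
      constructor <;> linarith [le_abs_self s₀, neg_abs_le s₀, abs_nonneg s₀]
  have hnq : ∀ s : ℝ, |s| ≤ K₀ * y ^ 2 → ‖((X s x y, Y s x y) : ℝ × ℝ)‖ ≤ r' := by
    intro s hs
    rw [hnorm2]
    exact max_le (hmem s hs).2.1 (hmem s hs).2.2
  have hcont : ∀ s₀ : ℝ, |s₀| ≤ K₀ * y ^ 2 →
      ContinuousOn φ (Set.uIcc 0 s₀) ∧ ContinuousOn ψ (Set.uIcc 0 s₀) := by
    intro s₀ hs₀
    have hXc : ContinuousOn (fun τ => X τ x y) (Set.uIcc 0 s₀) := fun τ hτ =>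
      ((hder τ ((habs_uIcc _ _ hτ).trans hs₀)).1.continuousAt).continuousWithinAt
    have hYc : ContinuousOn (fun τ => Y τ x y) (Set.uIcc 0 s₀) := fun τ hτ =>
      ((hder τ ((habs_uIcc _ _ hτ).trans hs₀)).2.continuousAt).continuousWithinAt
    have hpair : ContinuousOn (fun τ => ((X τ x y, Y τ x y) : ℝ × ℝ)) (Set.uIcc 0 s₀) :=
      hXc.prodMk hYc
    constructor
    · intro τ hτ
      have hτ' := (habs_uIcc _ _ hτ).trans hs₀
      have hFc : ContinuousAt F (X τ x y, Y τ x y) :=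
        ((hquad _ ((hnq τ hτ').trans hr'r)).1).continuousAt
      exact ContinuousAt.comp_continuousWithinAt (g := F)
        (f := fun τ => ((X τ x y, Y τ x y) : ℝ × ℝ)) hFc (hpair τ hτ)
    · intro τ hτ
      have hτ' := (habs_uIcc _ _ hτ).trans hs₀
      have hGc : ContinuousAt G (X τ x y, Y τ x y) := (hGgood _ (hnq τ hτ')).1
      exact ContinuousAt.comp_continuousWithinAt (g := G)
        (f := fun τ => ((X τ x y, Y τ x y) : ℝ × ℝ)) hGc (hpair τ hτ)
  -- FTC
  have hFTCX : ∀ s₀ : ℝ, |s₀| ≤ K₀ * y ^ 2 → X s₀ x y - x = ∫ τ in (0:ℝ)..s₀, φ τ := by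
    intro s₀ hs₀
    have := intervalIntegral.integral_eq_sub_of_hasDerivAt
      (f := fun τ => X τ x y) (f' := φ) (a := 0) (b := s₀)
      (fun τ hτ => (hder τ ((habs_uIcc _ _ hτ).trans hs₀)).1)
      ((hcont s₀ hs₀).1.intervalIntegrable)
    rw [this]
    simp only [(hinit x y).1]
  have hFTCY : ∀ s₀ : ℝ, |s₀| ≤ K₀ * y ^ 2 → Y s₀ x y - y = ∫ τ in (0:ℝ)..s₀, ψ τ := by
    intro s₀ hs₀
    have := intervalIntegral.integral_eq_sub_of_hasDerivAt
      (f := fun τ => Y τ x y) (f' := ψ) (a := 0) (b := s₀)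
      (fun τ hτ => (hder τ ((habs_uIcc _ _ hτ).trans hs₀)).2)
      ((hcont s₀ hs₀).2.intervalIntegrable)
    rw [this]
    simp only [(hinit x y).2]
  have hXdisp : ∀ s₀ : ℝ, |s₀| ≤ K₀ * y ^ 2 → |X s₀ x y - x| ≤ Mf * |s₀| := by
    intro s₀ hs₀
    rw [hFTCX s₀ hs₀, ← Real.norm_eq_abs]
    have hb' : ∀ τ ∈ Set.uIoc (0:ℝ) s₀, ‖φ τ‖ ≤ Mf := by
      intro τ hτ
      have hτ' := (habs_uIcc _ _ (Set.uIoc_subset_uIcc hτ)).trans hs₀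
      rw [Real.norm_eq_abs]
      exact hFbound _ (hnq τ hτ')
    have := intervalIntegral.norm_integral_le_of_norm_le_const hb'
    simpa using this
  have hYdisp : ∀ s₀ : ℝ, |s₀| ≤ K₀ * y ^ 2 → |Y s₀ x y - y| ≤ Mg * |s₀| := by
    intro s₀ hs₀
    rw [hFTCY s₀ hs₀, ← Real.norm_eq_abs]
    have hb' : ∀ τ ∈ Set.uIoc (0:ℝ) s₀, ‖ψ τ‖ ≤ Mg := by
      intro τ hτ
      have hτ' := (habs_uIcc _ _ (Set.uIoc_subset_uIcc hτ)).trans hs₀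
      rw [Real.norm_eq_abs]
      have := (hGgood _ (hnq τ hτ')).2
      rw [hMgdef]
      exact this
    have := intervalIntegral.norm_integral_le_of_norm_le_const hb'
    simpa using this
  -- pointwise error bound
  have herr : ∀ τ ∈ Set.uIoc (0:ℝ) T, ‖φ τ - a * y‖ ≤ K' * y ^ 2 := by
    intro τ hτ
    have hτ' : |τ| ≤ K₀ * y ^ 2 := (habs_uIcc T τ (Set.uIoc_subset_uIcc hτ)).trans hTK
    have hmm := hmem τ hτ'
    have hq : ‖((X τ x y, Y τ x y) : ℝ × ℝ)‖ ≤ r' := hnq τ hτ'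
    have hTay := hTaylor (X τ x y, Y τ x y) (hq.trans hr'r)
    have hu : |X τ x y - x| ≤ Mf * |τ| := hXdisp τ hτ'
    have hv : |Y τ x y - y| ≤ Mg * |τ| := hYdisp τ hτ'
    have huA : |X τ x y| ≤ A * y ^ 2 := by
      have h1 : |X τ x y| ≤ |x| + Mf * |τ| := by
        calc |X τ x y| = |(X τ x y - x) + x| := by ring_nf
          _ ≤ |X τ x y - x| + |x| := abs_add_le _ _
          _ ≤ Mf * |τ| + |x| := by linarith
          _ = |x| + Mf * |τ| := by ring
      calc |X τ x y| ≤ |x| + Mf * |τ| := h1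
        _ ≤ m * |y| ^ 3 + Mf * (K₀ * y ^ 2) := by
            have e1 := mul_le_mul_of_nonneg_left hτ' hMf
            linarith only [hxm, e1]
        _ ≤ m * y ^ 2 + Mf * (K₀ * y ^ 2) := by
            have e2 := mul_le_mul_of_nonneg_left hy3' (le_of_lt hm)
            linarith only [e2]
        _ = A * y ^ 2 := by rw [hAdef]; ring
    have hvB : |Y τ x y| ≤ (1 + B) * |y| := by
      have h1 : |Y τ x y| ≤ |y| + Mg * |τ| := by
        calc |Y τ x y| = |(Y τ x y - y) + y| := by ring_nf
          _ ≤ |Y τ x y - y| + |y| := abs_add_le _ _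
          _ ≤ Mg * |τ| + |y| := by linarith
          _ = |y| + Mg * |τ| := by ring
      have h2 : Mg * |τ| ≤ Mg * (K₀ * y ^ 2) := mul_le_mul_of_nonneg_left hτ' hMg
      have h3 : Mg * (K₀ * y ^ 2) ≤ B * |y| := by
        rw [hBdef]
        calc Mg * (K₀ * y ^ 2) = (Mg * K₀) * y ^ 2 := by ring
          _ ≤ (Mg * K₀) * |y| :=
            mul_le_mul_of_nonneg_left hysq1 (mul_nonneg hMg (le_of_lt hK₀))
      calc |Y τ x y| ≤ |y| + Mg * |τ| := h1
        _ ≤ |y| + B * |y| := by linarith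
        _ = (1 + B) * |y| := by ring
    have hnrm : ‖((X τ x y, Y τ x y) : ℝ × ℝ)‖ ≤ C₁ * |y| := by
      rw [hnorm2]
      apply max_le
      · calc |X τ x y| ≤ A * y ^ 2 := huA
          _ ≤ A * |y| := mul_le_mul_of_nonneg_left hysq1 hA
          _ ≤ C₁ * |y| := by
              apply mul_le_mul_of_nonneg_right _ (abs_nonneg y)
              rw [hC₁def]; linarith
      · calc |Y τ x y| ≤ (1 + B) * |y| := hvB
          _ ≤ C₁ * |y| := by
              apply mul_le_mul_of_nonneg_right _ (abs_nonneg y)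
              rw [hC₁def]; linarith
    have hφτ : φ τ = F (X τ x y, Y τ x y) := rfl
    rw [Real.norm_eq_abs, hφτ]
    have hsplit : F (X τ x y, Y τ x y) - a * y =
        (F (X τ x y, Y τ x y) - (b * X τ x y + a * Y τ x y)) +
        (b * X τ x y + a * (Y τ x y - y)) := by ring
    have hn3 : |b * X τ x y + a * (Y τ x y - y)| ≤ |b| * |X τ x y| + |a| * |Y τ x y - y| := by
      calc |b * X τ x y + a * (Y τ x y - y)| ≤ |b * X τ x y| + |a * (Y τ x y - y)| := abs_add_le _ _
        _ = |b| * |X τ x y| + |a| * |Y τ x y - y| := by rw [abs_mul, abs_mul]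
    have hn4 : L * ‖((X τ x y, Y τ x y) : ℝ × ℝ)‖ ^ 2 ≤ L * (C₁ * |y|) ^ 2 := by
      apply mul_le_mul_of_nonneg_left _ hL
      exact pow_le_pow_left₀ (norm_nonneg _) hnrm 2
    have hn5 : |b| * |X τ x y| ≤ |b| * (A * y ^ 2) :=
      mul_le_mul_of_nonneg_left huA (abs_nonneg b)
    have hn6 : |a| * |Y τ x y - y| ≤ |a| * (Mg * (K₀ * y ^ 2)) := by
      apply mul_le_mul_of_nonneg_left _ (abs_nonneg a)
      exact hv.trans (mul_le_mul_of_nonneg_left hτ' hMg)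
    have hc : L * (C₁ * |y|) ^ 2 = L * C₁ ^ 2 * y ^ 2 := by
      rw [mul_pow, sq_abs]; ring
    calc |F (X τ x y, Y τ x y) - a * y|
        ≤ |F (X τ x y, Y τ x y) - (b * X τ x y + a * Y τ x y)| +
          |b * X τ x y + a * (Y τ x y - y)| := by rw [hsplit]; exact abs_add_le _ _
      _ ≤ L * (C₁ * |y|) ^ 2 + (|b| * (A * y ^ 2) + |a| * (Mg * (K₀ * y ^ 2))) := by
          have e1 := hTay.trans hn4
          linarith only [e1, hn3, hn5, hn6]
      _ = (L * C₁ ^ 2 + |b| * A + |a| * B) * y ^ 2 := by rw [hc, hBdef]; ring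
      _ ≤ K' * y ^ 2 := by
          apply mul_le_mul_of_nonneg_right _ (sq_nonneg y)
          rw [hK'def]; linarith
  -- main integral identity
  have hintφ : IntervalIntegrable φ MeasureTheory.volume 0 T := (hcont T hTK).1.intervalIntegrable
  have hIT : ∫ τ in (0:ℝ)..T, φ τ = -x - x := by
    rw [← hFTCX T hTK, hXT]
  have hsub2 : ∫ τ in (0:ℝ)..T, (φ τ - a * y) = (-x - x) - a * y * T := by
    rw [intervalIntegral.integral_sub hintφ intervalIntegrable_const, hIT,
      intervalIntegral.integral_const]
    simp only [smul_eq_mul, sub_zero]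
    ring
  have hR : |(-x - x) - a * y * T| ≤ K' * y ^ 2 * |T| := by
    rw [← hsub2, ← Real.norm_eq_abs]
    have := intervalIntegral.norm_integral_le_of_norm_le_const herr
    simpa using this
  clear_value a b r' ρ₁ K₀ Mf Mg A B C₁ K' δ
  have hKy : K' * y ^ 2 ≤ |a| / 2 * |y| := by
    have e1 : K' * y ^ 2 ≤ K' * (δ * |y|) := mul_le_mul_of_nonneg_left hysq (le_of_lt hK'pos)
    have e3 : (2 * K' * δ) * |y| ≤ |a| * |y| := mul_le_mul_of_nonneg_right hδa (abs_nonneg y)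
    calc K' * y ^ 2 ≤ K' * (δ * |y|) := e1
      _ = (2 * K' * δ) * |y| / 2 := by ring
      _ ≤ |a| * |y| / 2 := by linarith only [e3]
      _ = |a| / 2 * |y| := by ring
  have habsT : |a * y * T| = |a| * |y| * |T| := by rw [abs_mul, abs_mul]
  have haT : |a| * |y| * |T| ≤ 4 * |x| := by
    have e1 : |a * y * T| ≤ |(-x - x) - a * y * T| + |x + x| := by
      have h := abs_add_le ((-x - x) - a * y * T) (x + x)
      have h2 : ((-x - x) - a * y * T) + (x + x) = -(a * y * T) := by ring
      rw [h2, abs_neg] at h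
      exact h
    have e2 : |x + x| = 2 * |x| := by
      rw [show x + x = 2 * x by ring, abs_mul]
      norm_num
    have e4 : K' * y ^ 2 * |T| ≤ (|a| / 2 * |y|) * |T| :=
      mul_le_mul_of_nonneg_right hKy (abs_nonneg T)
    rw [habsT] at e1
    rw [e2] at e1
    linarith only [e1, hR, e4]
  -- final algebra
  have hx0 : x ≠ 0 := abs_pos.mp hx
  have hy0 : y ≠ 0 := abs_pos.mp hy
  have hkey : T * (y / x) + 2 / a = (a * y * T + 2 * x) / (a * x) := by
    field_simp
  rw [hkey, abs_div, abs_mul]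
  rw [div_le_iff₀ (mul_pos haa hx)]
  have hnum : |a * y * T + 2 * x| ≤ K' * y ^ 2 * |T| := by
    have h : a * y * T + 2 * x = -((-x - x) - a * y * T) := by ring
    rw [h, abs_neg]
    exact hR
  have step1 : |a * y * T + 2 * x| * (|a| * |y|) ≤ (K' * y ^ 2 * |T|) * (|a| * |y|) :=
    mul_le_mul_of_nonneg_right hnum (le_of_lt (mul_pos haa hy))
  have step2 : (K' * y ^ 2 * |T|) * (|a| * |y|) = K' * y ^ 2 * (|a| * |y| * |T|) := by ring
  have step3 : K' * y ^ 2 * (|a| * |y| * |T|) ≤ K' * y ^ 2 * (4 * |x|) :=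
    mul_le_mul_of_nonneg_left haT (by positivity)
  have h41 : 4 * K' * |y| ≤ ε * |a| ^ 2 := by
    have e : 4 * K' * |y| ≤ 4 * K' * δ :=
      mul_le_mul_of_nonneg_left hyδ (by positivity)
    linarith only [e, hδε]
  have step4 : K' * y ^ 2 * (4 * |x|) ≤ ε * |a| ^ 2 * |y| * |x| := by
    have e : K' * y ^ 2 * (4 * |x|) = (4 * K' * |y|) * (|y| * |x|) := by
      rw [← sq_abs]
      ring
    rw [e]
    calc (4 * K' * |y|) * (|y| * |x|) ≤ (ε * |a| ^ 2) * (|y| * |x|) :=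
        mul_le_mul_of_nonneg_right h41 (le_of_lt (mul_pos hy hx))
      _ = ε * |a| ^ 2 * |y| * |x| := by ring
  have step5 : |a * y * T + 2 * x| * (|a| * |y|) ≤ (ε * (|a| * |x|)) * (|a| * |y|) := by
    have e : ε * |a| ^ 2 * |y| * |x| = (ε * (|a| * |x|)) * (|a| * |y|) := by ring
    linarith only [step1, step2.le, step2.ge, step3, step4, e.le, e.ge]
  exact le_of_mul_le_mul_right step5 (mul_pos haa hy)
end

section
/- Assume f(0) = 0 and f'_y(0)·g(0) ≠ 0. Let T(x,y) be the return-time function of Lemma 2.1 (the unique nonzero solution of X(T(x,y),x,y) = x near 0 for y ≠ u(x), with T(x,u(x)) = 0), and let 𝒫(x,y) = Y(T(x,y),x,y). Then for any m > 0 and every ε ∈ (0,1) there exists δ > 0 such that for all |x| ≤ m·δ³: (i) if y ∈ [∛(|x|/m), δ] then 𝒫(x,y) ∈ [−(1+ε)·δ, −(1−ε)·∛(|x|/m)], and (ii) if y ∈ [−δ, −∛(|x|/m)] then 𝒫(x,y) ∈ [(1−ε)·∛(|x|/m), (1+ε)·δ]. -/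
open Set Filter Topology

set_option maxHeartbeats 4000000

/-- Real cube root (for nonnegative arguments). -/
noncomputable def cbrt (s : ℝ) : ℝ := s ^ ((1 : ℝ) / 3)

/-- Corollary 2.3, inclusion (2.16): the map `𝒫` transforms the intervals
`[∛(|x|/m), δ]` and `[-δ, -∛(|x|/m)]` as stated, for all `|x| ≤ m δ³`. -/
theorem stmt_7
    (f g : ℝ → ℝ → ℝ) (X Y : ℝ → ℝ → ℝ → ℝ)
    (U : Set (ℝ × ℝ)) (hU : U ∈ nhds ((0 : ℝ), (0 : ℝ)))
    (hf : ContDiffOn ℝ 4 (fun p : ℝ × ℝ => f p.1 p.2) U)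
    (hg : ContDiffOn ℝ 4 (fun p : ℝ × ℝ => g p.1 p.2) U)
    (V : Set (ℝ × ℝ × ℝ)) (hV : V ∈ nhds (((0 : ℝ), (0 : ℝ), (0 : ℝ)) : ℝ × ℝ × ℝ))
    (hX : ContDiffOn ℝ 4 (fun p : ℝ × ℝ × ℝ => X p.1 p.2.1 p.2.2) V)
    (hY : ContDiffOn ℝ 4 (fun p : ℝ × ℝ × ℝ => Y p.1 p.2.1 p.2.2) V)
    (hode : ∀ t x y : ℝ, (t, x, y) ∈ V →
      HasDerivAt (fun s => X s x y) (f (X t x y) (Y t x y)) t ∧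
      HasDerivAt (fun s => Y s x y) (g (X t x y) (Y t x y)) t)
    (hinit : ∀ x y : ℝ, X 0 x y = x ∧ Y 0 x y = y)
    (hf0 : f 0 0 = 0)
    (hfg0 : pdy f 0 0 * g 0 0 ≠ 0)
    -- the data provided by Lemma 2.1 (the fold curve `u` and the return time `T`)
    (δ₁ : ℝ) (hδ₁ : 0 < δ₁) (u : ℝ → ℝ)
    (hu0 : Tendsto u (nhds 0) (nhds 0))
    (hu : ∀ x, |x| ≤ δ₁ → f x (u x) = 0)
    (T : ℝ → ℝ → ℝ)
    (hTC2 : ContDiffOn ℝ 2 (fun p : ℝ × ℝ => T p.1 p.2) (Icc (-δ₁) δ₁ ×ˢ Icc (-δ₁) δ₁))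
    (hT0 : ∀ x, |x| ≤ δ₁ → T x (u x) = 0)
    (η : ℝ) (hη : 0 < η)
    (hT : ∀ x y, |x| ≤ δ₁ → |y| ≤ δ₁ → y ≠ u x →
      T x y ≠ 0 ∧ X (T x y) x y = x ∧ |T x y| < η ∧
      ∀ t, t ≠ 0 → |t| < η → X t x y = x → t = T x y)
    (P : ℝ → ℝ → ℝ) (hP : ∀ x y, P x y = Y (T x y) x y) :
    ∀ m : ℝ, 0 < m → ∀ ε : ℝ, 0 < ε → ε < 1 →
      ∃ δ > (0 : ℝ), ∀ x : ℝ, |x| ≤ m * δ ^ 3 →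
        (∀ y ∈ Icc (cbrt (|x| / m)) δ,
          P x y ∈ Icc (-((1 + ε) * δ)) (-((1 - ε) * cbrt (|x| / m)))) ∧
        (∀ y ∈ Icc (-δ) (-(cbrt (|x| / m))),
          P x y ∈ Icc ((1 - ε) * cbrt (|x| / m)) ((1 + ε) * δ)) := by
  classical
  -- ## Basic facts
  have hfy0 : pdy f 0 0 ≠ 0 := fun h => hfg0 (by rw [h]; ring)
  have hg00 : g 0 0 ≠ 0 := fun h => hfg0 (by rw [h]; ring)
  have hu00 : u 0 = 0 := by
    by_contra h
    have h1 : {u 0}ᶜ ∈ 𝓝 (0 : ℝ) :=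
      isOpen_compl_singleton.mem_nhds (by simpa using Ne.symm h)
    have h2 := hu0 h1
    exact mem_of_mem_nhds h2 rfl
  have hT00 : T 0 0 = 0 := by
    have := hT0 0 (by simp [hδ₁.le])
    rwa [hu00] at this
  have X000 : X 0 0 0 = 0 := (hinit 0 0).1
  have Y000 : Y 0 0 0 = 0 := (hinit 0 0).2
  set Fu : ℝ × ℝ → ℝ := fun p => f p.1 p.2 with hFudef
  set F3 : ℝ × ℝ × ℝ → ℝ := fun p => X p.1 p.2.1 p.2.2 with hF3def
  set G3 : ℝ × ℝ × ℝ → ℝ := fun p => Y p.1 p.2.1 p.2.2 with hG3def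
  have hfAt : ContDiffAt ℝ 4 Fu ((0 : ℝ), (0 : ℝ)) := hf.contDiffAt hU
  set Df := fderiv ℝ Fu ((0 : ℝ), (0 : ℝ)) with hDfdef
  have hfd : HasFDerivAt Fu Df ((0 : ℝ), (0 : ℝ)) :=
    (hfAt.differentiableAt (by norm_num)).hasFDerivAt
  have hline : HasDerivAt (fun y : ℝ => ((0 : ℝ), y)) (((0 : ℝ), (1 : ℝ))) 0 :=
    (hasDerivAt_const _ _).prodMk (hasDerivAt_id _)
  have hfyD : HasDerivAt (fun y => f 0 y) (Df (0, 1)) 0 := by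
    have := hfd.comp_hasDerivAt (x := (0 : ℝ)) hline
    simpa [Function.comp_def] using this
  have hpdy : pdy f 0 0 = Df (0, 1) := hfyD.deriv
  set fy := pdy f 0 0 with hfydef
  set g0 := g 0 0 with hg0def
  set a := g0 * fy with hadef
  have ha0 : a ≠ 0 := mul_ne_zero hg00 hfy0
  have hDfa : Df (0, g0) = a := by
    have h1 : ((0 : ℝ), g0) = g0 • (((0 : ℝ), (1 : ℝ))) := by simp
    rw [h1, map_smul, smul_eq_mul, ← hpdy]
  have hVmem : (((0 : ℝ), (0 : ℝ), (0 : ℝ)) : ℝ × ℝ × ℝ) ∈ V := mem_of_mem_nhds hV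
  have hYat : ContDiffAt ℝ 4 G3 ((0 : ℝ), (0 : ℝ), (0 : ℝ)) := hY.contDiffAt hV
  -- ## The open set O
  set ι : ℝ × ℝ → ℝ × ℝ × ℝ := fun p => (p.1, 0, p.2) with hιdef
  have hιc : Continuous ι := by fun_prop
  set Z : ℝ × ℝ → ℝ × ℝ := fun p => (X p.1 0 p.2, Y p.1 0 p.2) with hZdef
  set O₀ : Set (ℝ × ℝ) := ι ⁻¹' (interior V) with hO₀def
  have hO₀o : IsOpen O₀ := isOpen_interior.preimage hιc
  have hZc : ContinuousOn Z O₀ := by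
    have hFc : ContinuousOn F3 (interior V) := (hX.mono interior_subset).continuousOn
    have hGc : ContinuousOn G3 (interior V) := (hY.mono interior_subset).continuousOn
    exact (hFc.comp hιc.continuousOn (fun p hp => hp)).prodMk
      (hGc.comp hιc.continuousOn (fun p hp => hp))
  set O : Set (ℝ × ℝ) := O₀ ∩ Z ⁻¹' (interior U) with hOdef
  have hOo : IsOpen O := hZc.isOpen_inter_preimage hO₀o isOpen_interior
  have hO0 : ((0 : ℝ), (0 : ℝ)) ∈ O := by
    constructor
    · show ι (0, 0) ∈ interior V
      simpa [hιdef] using mem_interior_iff_mem_nhds.mpr hV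
    · show Z (0, 0) ∈ interior U
      have : Z (0, 0) = ((0 : ℝ), (0 : ℝ)) := by simp [hZdef, X000, Y000]
      rw [this]
      exact mem_interior_iff_mem_nhds.mpr hU
  set W : ℝ → ℝ → ℝ := fun t y => f (X t 0 y) (Y t 0 y) with hWdef
  have hmemV : ∀ p ∈ O, ((p.1, (0 : ℝ), p.2) : ℝ × ℝ × ℝ) ∈ V := fun p hp => interior_subset hp.1
  have hmemU : ∀ p ∈ O, ((X p.1 0 p.2, Y p.1 0 p.2) : ℝ × ℝ) ∈ interior U := fun p hp => hp.2
  have hXder : ∀ p ∈ O, HasDerivAt (fun t => X t 0 p.2) (W p.1 p.2) p.1 :=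
    fun p hp => (hode p.1 0 p.2 (hmemV p hp)).1
  set Θ : ℝ × ℝ → ℝ := fun p =>
    (fderiv ℝ Fu (Z p)) (f (X p.1 0 p.2) (Y p.1 0 p.2), g (X p.1 0 p.2) (Y p.1 0 p.2)) with hΘdef
  have hWder : ∀ p ∈ O, HasDerivAt (fun t => W t p.2) (Θ p) p.1 := by
    intro p hp
    have hcurve : HasDerivAt (fun t => ((X t 0 p.2, Y t 0 p.2) : ℝ × ℝ))
        ((f (X p.1 0 p.2) (Y p.1 0 p.2), g (X p.1 0 p.2) (Y p.1 0 p.2))) p.1 :=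
      ((hode _ _ _ (hmemV p hp)).1).prodMk ((hode _ _ _ (hmemV p hp)).2)
    have hfd2 : HasFDerivAt Fu (fderiv ℝ Fu (Z p)) (Z p) := by
      have hc : ContDiffAt ℝ 4 Fu (Z p) :=
        hf.contDiffAt (mem_interior_iff_mem_nhds.mp (hmemU p hp))
      exact (hc.differentiableAt (by norm_num)).hasFDerivAt
    have := hfd2.comp_hasDerivAt (x := p.1) hcurve
    simpa [Function.comp_def, hWdef] using this
  have hWcont : ContinuousOn (fun p : ℝ × ℝ => W p.1 p.2) O := by
    have hfc : ContinuousOn Fu U := hf.continuousOn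
    exact hfc.comp (hZc.mono inter_subset_left) (fun p hp => interior_subset hp.2)
  have hgWcont : ContinuousOn (fun p : ℝ × ℝ => g (X p.1 0 p.2) (Y p.1 0 p.2)) O := by
    have hgc : ContinuousOn (fun p : ℝ × ℝ => g p.1 p.2) U := hg.continuousOn
    exact hgc.comp (hZc.mono inter_subset_left) (fun p hp => interior_subset hp.2)
  have hΘcont : ContinuousOn Θ O := by
    have hdf : ContinuousOn (fderiv ℝ Fu) (interior U) :=
      (hf.mono interior_subset).continuousOn_fderiv_of_isOpen isOpen_interior (by norm_num)
    have h1 : ContinuousOn (fun p : ℝ × ℝ => fderiv ℝ Fu (Z p)) O :=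
      hdf.comp (hZc.mono inter_subset_left) (fun p hp => hp.2)
    exact h1.clm_apply (hWcont.prodMk hgWcont)
  have hΘ00 : Θ ((0 : ℝ), (0 : ℝ)) = a := by
    have hZ00 : Z (0, 0) = ((0 : ℝ), (0 : ℝ)) := by simp [hZdef, X000, Y000]
    show (fderiv ℝ Fu (Z (0, 0))) (f (X 0 0 0) (Y 0 0 0), g (X 0 0 0) (Y 0 0 0)) = a
    rw [hZ00, X000, Y000, hf0, ← hDfdef, hDfa]
  -- ## The section s y = T 0 y and its derivative
  have hTmem : Icc (-δ₁) δ₁ ×ˢ Icc (-δ₁) δ₁ ∈ 𝓝 (((0 : ℝ), (0 : ℝ)) : ℝ × ℝ) :=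
    prod_mem_nhds (Icc_mem_nhds (by linarith) hδ₁) (Icc_mem_nhds (by linarith) hδ₁)
  have hTat : ContDiffAt ℝ 2 (fun p : ℝ × ℝ => T p.1 p.2) ((0 : ℝ), (0 : ℝ)) :=
    hTC2.contDiffAt hTmem
  set s : ℝ → ℝ := fun y => T 0 y with hsdef
  have hsat : ContDiffAt ℝ 2 s 0 := by
    have := hTat.comp (0 : ℝ) ((contDiffAt_const (c := (0 : ℝ))).prodMk contDiffAt_id)
    simpa [Function.comp_def] using this
  set lam := deriv s 0 with hlamdef
  have hsd : HasDerivAt s lam 0 := (hsat.differentiableAt (by norm_num)).hasDerivAt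
  have hs0 : s 0 = 0 := hT00
  have hslope : Tendsto (fun y => s y / y) (𝓝[≠] (0 : ℝ)) (𝓝 lam) := by
    have := hasDerivAt_iff_tendsto_slope.mp hsd
    simpa [slope_fun_def_field, hs0] using this
  have hfslope : Tendsto (fun y => f 0 y / y) (𝓝[≠] (0 : ℝ)) (𝓝 fy) := by
    have hfyD' : HasDerivAt (fun y => f 0 y) fy 0 := by rw [hpdy]; exact hfyD
    have := hasDerivAt_iff_tendsto_slope.mp hfyD'
    simpa [slope_fun_def_field, hf0] using this
  -- ## Key inequality for the derivative lam
  have hkey : ∀ ε₀ : ℝ, 0 < ε₀ → |fy + a / 2 * lam| ≤ ε₀ * |lam| := by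
    intro ε₀ hε₀
    have hΘat : ContinuousAt Θ ((0 : ℝ), (0 : ℝ)) := hΘcont.continuousAt (hOo.mem_nhds hO0)
    have hset : O ∩ {p : ℝ × ℝ | |Θ p - a| ≤ ε₀} ∈ 𝓝 (((0 : ℝ), (0 : ℝ)) : ℝ × ℝ) := by
      refine inter_mem (hOo.mem_nhds hO0) ?_
      have h1 : Metric.closedBall a ε₀ ∈ 𝓝 (Θ ((0 : ℝ), (0 : ℝ))) := by
        rw [hΘ00]; exact Metric.closedBall_mem_nhds a hε₀
      have := hΘat h1
      simpa [Metric.closedBall, Real.dist_eq] using this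
    obtain ⟨r, hr, hrsub⟩ := Metric.mem_nhds_iff.mp hset
    have hev : ∀ᶠ y in 𝓝[≠] (0 : ℝ),
        |f 0 y / y + a / 2 * (s y / y)| ≤ ε₀ * |s y / y| := by
      have h1 : ∀ᶠ y in 𝓝 (0 : ℝ), |s y| < r := by
        have hc : ContinuousAt s 0 := hsd.continuousAt
        have := hc (Metric.ball_mem_nhds (s 0) hr)
        simp [hs0, Real.dist_eq, Metric.ball] at this; exact this
      have h2 : ∀ᶠ y in 𝓝 (0 : ℝ), |y| < r := by
        have := Metric.ball_mem_nhds (0 : ℝ) hr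
        simp [Real.dist_eq, Metric.ball] at this; exact this
      have h3 : ∀ᶠ y in 𝓝 (0 : ℝ), |y| ≤ δ₁ := by
        have := Metric.closedBall_mem_nhds (0 : ℝ) hδ₁
        simp [Real.dist_eq, Metric.closedBall] at this; exact this
      filter_upwards [((h1.and h2).and h3).filter_mono nhdsWithin_le_nhds,
        self_mem_nhdsWithin] with y hy hy0
      obtain ⟨⟨hsyr, hyr⟩, hyδ₁⟩ := hy
      have hy0' : y ≠ (0 : ℝ) := hy0
      obtain ⟨hsy0, hXT, -, -⟩ := hT 0 y (by simp [hδ₁.le]) hyδ₁ (by rwa [hu00])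
      have hsy0' : s y ≠ 0 := hsy0
      -- all points (t, y) with t between 0 and s y are in the ball
      have habs : ∀ t ∈ uIcc (0 : ℝ) (s y), |t| ≤ |s y| := by
        intro t ht
        rcases mem_uIcc.mp ht with ⟨ht1, ht2⟩ | ⟨ht1, ht2⟩ <;>
          rw [abs_le] <;> constructor <;>
          nlinarith [le_abs_self (s y), neg_abs_le (s y)]
      have hsub : ∀ t ∈ uIcc (0 : ℝ) (s y),
          ((t, y) : ℝ × ℝ) ∈ Metric.ball (((0 : ℝ), (0 : ℝ)) : ℝ × ℝ) r := by
        intro t ht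
        rw [Metric.mem_ball, Prod.dist_eq]
        simp only [Real.dist_eq, sub_zero]
        exact max_lt (lt_of_le_of_lt (habs t ht) hsyr) hyr
      have hin : ∀ t ∈ uIcc (0 : ℝ) (s y), ((t, y) : ℝ × ℝ) ∈ O :=
        fun t ht => (hrsub (hsub t ht)).1
      have hΘb : ∀ t ∈ uIcc (0 : ℝ) (s y), |Θ (t, y) - a| ≤ ε₀ :=
        fun t ht => (hrsub (hsub t ht)).2
      -- FTC for X
      have hWyc : ContinuousOn (fun t => W t y) (uIcc (0 : ℝ) (s y)) := by
        have hline2 : Continuous (fun t : ℝ => ((t, y) : ℝ × ℝ)) := by fun_prop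
        exact hWcont.comp hline2.continuousOn (fun t ht => hin t ht)
      have hWi : IntervalIntegrable (fun t => W t y) MeasureTheory.volume 0 (s y) :=
        hWyc.intervalIntegrable
      have hFTC1 : ∫ t in (0 : ℝ)..(s y), W t y = 0 := by
        have := intervalIntegral.integral_eq_sub_of_hasDerivAt
          (f := fun t => X t 0 y) (f' := fun t => W t y)
          (fun t ht => hXder (t, y) (hin t ht)) hWi
        have hXT' : X (s y) 0 y = 0 := hXT
        rw [this]
        show X (s y) 0 y - X 0 0 y = 0
        rw [hXT', (hinit 0 y).1, sub_self]
      -- pointwise bound on W t y - W 0 y - a t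
      have hWsub : ∀ t ∈ uIcc (0 : ℝ) (s y), |W t y - W 0 y - a * t| ≤ ε₀ * |s y| := by
        intro t ht
        have hsubI : uIcc (0 : ℝ) t ⊆ uIcc (0 : ℝ) (s y) :=
          uIcc_subset_uIcc left_mem_uIcc ht
        have hΘyc : ContinuousOn (fun r' => Θ (r', y)) (uIcc (0 : ℝ) t) := by
          have hline2 : Continuous (fun r' : ℝ => ((r', y) : ℝ × ℝ)) := by fun_prop
          exact hΘcont.comp hline2.continuousOn (fun r' hr' => hin r' (hsubI hr'))
        have hΘi : IntervalIntegrable (fun r' => Θ (r', y)) MeasureTheory.volume 0 t :=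
          hΘyc.intervalIntegrable
        have hFTC2 : ∫ r' in (0 : ℝ)..t, Θ (r', y) = W t y - W 0 y :=
          intervalIntegral.integral_eq_sub_of_hasDerivAt
            (f := fun t => W t y) (f' := fun r' => Θ (r', y))
            (fun r' hr' => hWder (r', y) (hin r' (hsubI hr'))) hΘi
        have heq2 : W t y - W 0 y - a * t = ∫ r' in (0 : ℝ)..t, (Θ (r', y) - a) := by
          rw [intervalIntegral.integral_sub hΘi intervalIntegrable_const,
            hFTC2, intervalIntegral.integral_const]
          simp [smul_eq_mul]; ring
        rw [heq2]
        have hb := intervalIntegral.norm_integral_le_of_norm_le_const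
          (C := ε₀) (f := fun r' => Θ (r', y) - a) (a := (0 : ℝ)) (b := t)
          (fun r' hr' => by
            have : r' ∈ uIcc (0 : ℝ) (s y) := hsubI (uIoc_subset_uIcc hr')
            simpa [Real.norm_eq_abs] using hΘb r' this)
        rw [Real.norm_eq_abs] at hb
        calc |∫ r' in (0 : ℝ)..t, (Θ (r', y) - a)| ≤ ε₀ * |t - 0| := hb
          _ ≤ ε₀ * |s y| := by
              rw [sub_zero]
              exact mul_le_mul_of_nonneg_left (habs t ht) hε₀.le
      -- main integral bound
      have hpolyi : IntervalIntegrable (fun t => W 0 y + a * t) MeasureTheory.volume 0 (s y) :=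
        (continuous_const.add (continuous_const.mul continuous_id)).intervalIntegrable 0 (s y)
      have hmain : |s y * W 0 y + a * (s y) ^ 2 / 2| ≤ ε₀ * (s y) ^ 2 := by
        have e1 : ∫ t in (0 : ℝ)..(s y), (W t y - (W 0 y + a * t)) =
            (∫ t in (0 : ℝ)..(s y), W t y) - ∫ t in (0 : ℝ)..(s y), (W 0 y + a * t) :=
          intervalIntegral.integral_sub hWi hpolyi
        have e2 : ∫ t in (0 : ℝ)..(s y), (W 0 y + a * t) =
            s y * W 0 y + a * (s y) ^ 2 / 2 := by
          have hmuli : IntervalIntegrable (fun t : ℝ => a * t) MeasureTheory.volume 0 (s y) :=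
            (continuous_const.mul continuous_id).intervalIntegrable 0 (s y)
          rw [intervalIntegral.integral_add intervalIntegrable_const hmuli,
            intervalIntegral.integral_const, intervalIntegral.integral_const_mul,
            integral_id]
          simp [smul_eq_mul]; ring
        have e3 : ∫ t in (0 : ℝ)..(s y), (W t y - (W 0 y + a * t)) =
            -(s y * W 0 y + a * (s y) ^ 2 / 2) := by
          rw [e1, e2, hFTC1]; ring
        have hb := intervalIntegral.norm_integral_le_of_norm_le_const
          (C := ε₀ * |s y|) (f := fun t => W t y - (W 0 y + a * t)) (a := (0 : ℝ)) (b := s y)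
          (fun t ht => by
            have ht' : t ∈ uIcc (0 : ℝ) (s y) := uIoc_subset_uIcc ht
            have := hWsub t ht'
            simpa [Real.norm_eq_abs, sub_sub] using this)
        rw [e3, Real.norm_eq_abs, abs_neg, sub_zero] at hb
        calc |s y * W 0 y + a * (s y) ^ 2 / 2| ≤ ε₀ * |s y| * |s y| := hb
          _ = ε₀ * (s y) ^ 2 := by rw [mul_assoc, abs_mul_abs_self]; ring
      -- divide by |s y * y|
      have hW0 : W 0 y = f 0 y := by
        show f (X 0 0 y) (Y 0 0 y) = f 0 y
        rw [(hinit 0 y).1, (hinit 0 y).2]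
      have heqd : f 0 y / y + a / 2 * (s y / y) =
          (s y * W 0 y + a * (s y) ^ 2 / 2) / (s y * y) := by
        rw [hW0]; field_simp
      rw [heqd, abs_div]
      rw [div_le_iff₀ (abs_pos.mpr (mul_ne_zero hsy0' hy0'))]
      have hrhs : ε₀ * |s y / y| * |s y * y| = ε₀ * (s y) ^ 2 := by
        rw [mul_assoc, ← abs_mul]
        have h5 : s y / y * (s y * y) = (s y) ^ 2 := by field_simp
        rw [h5, abs_of_nonneg (sq_nonneg _)]
      rw [hrhs]
      exact hmain
    exact le_of_tendsto_of_tendsto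
      ((hfslope.add (tendsto_const_nhds.mul hslope)).abs)
      (tendsto_const_nhds.mul hslope.abs)
      hev
  -- ## Value of lam
  have hlamval : g0 * lam = -2 := by
    have hc : fy + a / 2 * lam = 0 := by
      by_contra hc
      set C := |fy + a / 2 * lam| with hCdef
      have hcpos : 0 < C := abs_pos.mpr hc
      have h2 : (0 : ℝ) < |lam| + 1 := by positivity
      have h1 := hkey (C / (2 * (|lam| + 1))) (by positivity)
      rw [div_mul_eq_mul_div, le_div_iff₀ (by positivity)] at h1
      nlinarith [abs_nonneg lam, mul_nonneg hcpos.le (abs_nonneg lam)]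
    have h3 : fy * (2 + g0 * lam) = 0 := by
      rw [hadef] at hc
      linear_combination 2 * hc
    rcases mul_eq_zero.mp h3 with h | h
    · exact absurd h hfy0
    · linarith
  -- ## The function q y = Y (T 0 y) 0 y and its derivative -1 at 0
  set q : ℝ → ℝ := fun y => Y (s y) 0 y with hqdef
  set DG := fderiv ℝ G3 (((0 : ℝ), (0 : ℝ), (0 : ℝ)) : ℝ × ℝ × ℝ) with hDGdef
  have hGd : HasFDerivAt G3 DG (((0 : ℝ), (0 : ℝ), (0 : ℝ)) : ℝ × ℝ × ℝ) :=
    (hYat.differentiableAt (by norm_num)).hasFDerivAt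
  have hcurve : HasDerivAt (fun y : ℝ => ((s y, ((0 : ℝ), y)) : ℝ × ℝ × ℝ))
      ((lam, ((0 : ℝ), (1 : ℝ)))) 0 :=
    hsd.prodMk ((hasDerivAt_const _ _).prodMk (hasDerivAt_id _))
  have hqd0 : HasDerivAt q (DG (lam, 0, 1)) 0 := by
    have hGd' : HasFDerivAt G3 DG ((s 0, ((0 : ℝ), (0 : ℝ))) : ℝ × ℝ × ℝ) := by
      rw [hs0]; exact hGd
    have := hGd'.comp_hasDerivAt (x := (0 : ℝ)) hcurve
    simpa [Function.comp_def] using this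
  have hDG1 : DG (1, 0, 0) = g0 := by
    have h1 : HasDerivAt (fun t => Y t 0 0) (DG (1, 0, 0)) 0 := by
      have hc : HasDerivAt (fun t : ℝ => ((t, ((0 : ℝ), (0 : ℝ))) : ℝ × ℝ × ℝ))
          ((1, ((0 : ℝ), (0 : ℝ)))) 0 :=
        (hasDerivAt_id _).prodMk (hasDerivAt_const _ _)
      have := hGd.comp_hasDerivAt (x := (0 : ℝ)) hc
      simpa [Function.comp_def] using this
    have h2 : HasDerivAt (fun t => Y t 0 0) (g (X 0 0 0) (Y 0 0 0)) 0 := (hode 0 0 0 hVmem).2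
    have h3 := h1.unique h2
    rw [h3, X000, Y000]
  have hDG3 : DG (0, 0, 1) = 1 := by
    have h1 : HasDerivAt (fun y => Y 0 0 y) (DG (0, 0, 1)) 0 := by
      have hc : HasDerivAt (fun y : ℝ => (((0 : ℝ), ((0 : ℝ), y)) : ℝ × ℝ × ℝ))
          ((0, ((0 : ℝ), (1 : ℝ)))) 0 :=
        (hasDerivAt_const _ _).prodMk ((hasDerivAt_const _ _).prodMk (hasDerivAt_id _))
      have := hGd.comp_hasDerivAt (x := (0 : ℝ)) hc
      simpa [Function.comp_def] using this
    have h2 : HasDerivAt (fun y => Y 0 0 y) 1 0 := by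
      have he : (fun y => Y 0 0 y) = fun y => y := funext fun y => (hinit 0 y).2
      rw [he]; exact hasDerivAt_id 0
    exact h1.unique h2
  have hq1 : HasDerivAt q (-1) 0 := by
    have hval : DG (lam, 0, 1) = -1 := by
      have hsplit : ((lam, (0 : ℝ), (1 : ℝ)) : ℝ × ℝ × ℝ) =
          lam • ((1 : ℝ), (0 : ℝ), (0 : ℝ)) + ((0 : ℝ), (0 : ℝ), (1 : ℝ)) := by
        simp [Prod.ext_iff]
      rw [hsplit, map_add, map_smul, hDG1, hDG3, smul_eq_mul]
      linear_combination hlamval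
    rwa [hval] at hqd0
  have hq0 : q 0 = 0 := by
    show Y (s 0) 0 0 = 0
    rw [hs0, Y000]
  -- ## Little-o estimate for q
  have hqo : ∀ ε' : ℝ, 0 < ε' → ∃ r₃ > (0 : ℝ), ∀ y : ℝ, |y| < r₃ → |q y + y| ≤ ε' * |y| := by
    intro ε' hε'
    have h1 : Tendsto (fun y => q y / y) (𝓝[≠] (0 : ℝ)) (𝓝 (-1)) := by
      have := hasDerivAt_iff_tendsto_slope.mp hq1
      simpa [slope_fun_def_field, hq0] using this
    have h2 : ∀ᶠ y in 𝓝[≠] (0 : ℝ), |q y / y + 1| ≤ ε' := by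
      have h3 := Metric.tendsto_nhds.mp h1 ε' hε'
      filter_upwards [h3] with y hy
      rw [Real.dist_eq, sub_neg_eq_add] at hy
      exact hy.le
    rw [eventually_nhdsWithin_iff, Metric.eventually_nhds_iff] at h2
    obtain ⟨r₃, hr₃, h⟩ := h2
    refine ⟨r₃, hr₃, fun y hy => ?_⟩
    rcases eq_or_ne y 0 with rfl | hy0
    · simp [hq0]
    · have h4 := h (by simpa [Real.dist_eq] using hy) hy0
      have h5 : |q y + y| = |q y / y + 1| * |y| := by
        rw [← abs_mul]
        congr 1
        field_simp
      rw [h5]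
      exact mul_le_mul_of_nonneg_right h4 (abs_nonneg y)
  -- ## Lipschitz bound for the Poincaré map in the x-direction
  set Pt : ℝ × ℝ → ℝ := fun p => Y (T p.1 p.2) p.1 p.2 with hPtdef
  have hPtc1 : ContDiffAt ℝ 1 Pt ((0 : ℝ), (0 : ℝ)) := by
    have hinner : ContDiffAt ℝ 1 (fun p : ℝ × ℝ => ((T p.1 p.2, p) : ℝ × ℝ × ℝ)) (0, 0) :=
      (hTat.of_le one_le_two).prodMk contDiffAt_id
    have hYat1 : ContDiffAt ℝ 1 G3 (((T 0 0, ((0 : ℝ), (0 : ℝ))) : ℝ × ℝ × ℝ)) := by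
      rw [hT00]; exact hYat.of_le (by norm_num)
    have := ContDiffAt.comp (g := G3)
      (f := fun p : ℝ × ℝ => ((T p.1 p.2, p) : ℝ × ℝ × ℝ)) ((0, 0) : ℝ × ℝ) hYat1 hinner
    simpa [Function.comp_def] using this
  obtain ⟨K, tset, htset, hlip⟩ := hPtc1.exists_lipschitzOnWith
  obtain ⟨r₁, hr₁, hball₁⟩ := Metric.mem_nhds_iff.mp htset
  -- ## Final assembly
  intro m hm ε hε hε1
  obtain ⟨r₃, hr₃, hqest⟩ := hqo (ε / 2) (by linarith)
  have hKpos : (0 : ℝ) < (K : ℝ) + 1 := by positivity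
  set δ : ℝ := min (min (r₁ / 2) (r₃ / 2)) (min 1 (ε / (2 * ((K : ℝ) + 1) * m))) with hδdef
  have hδpos : 0 < δ := by
    refine lt_min (lt_min (by linarith) (by linarith)) (lt_min one_pos (by positivity))
  have hδr₁ : δ < r₁ := lt_of_le_of_lt ((min_le_left _ _).trans (min_le_left _ _)) (by linarith)
  have hδr₃ : δ < r₃ := lt_of_le_of_lt ((min_le_left _ _).trans (min_le_right _ _)) (by linarith)
  have hδ1 : δ ≤ 1 := (min_le_right _ _).trans (min_le_left _ _)
  have hδK : δ ≤ ε / (2 * ((K : ℝ) + 1) * m) := (min_le_right _ _).trans (min_le_right _ _)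
  have hmδ2 : m * δ ^ 2 ≤ ε / (2 * ((K : ℝ) + 1)) := by
    have h1 : m * δ ≤ ε / (2 * ((K : ℝ) + 1)) := by
      rw [le_div_iff₀ (by positivity)] at hδK ⊢
      calc m * δ * (2 * ((K : ℝ) + 1)) = δ * (2 * ((K : ℝ) + 1) * m) := by ring
        _ ≤ ε := hδK
    nlinarith [hδpos.le, hδ1, mul_nonneg hm.le hδpos.le, h1]
  have hmδ2' : m * δ ^ 2 ≤ 1 := by
    refine hmδ2.trans ?_
    rw [div_le_one (by positivity)]
    nlinarith [K.coe_nonneg]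
  refine ⟨δ, hδpos, ?_⟩
  intro x hx
  set c : ℝ := cbrt (|x| / m) with hcdef
  have hc0 : 0 ≤ c := Real.rpow_nonneg (by positivity) _
  have hccube : c ^ 3 = |x| / m := by
    rw [hcdef]
    show ((|x| / m) ^ ((1 : ℝ) / 3)) ^ (3 : ℕ) = |x| / m
    rw [← Real.rpow_natCast ((|x| / m) ^ ((1 : ℝ) / 3)) 3, ← Real.rpow_mul (by positivity)]
    norm_num
  have hcδ : c ≤ δ := by
    have h1 : |x| / m ≤ δ ^ 3 := by
      rw [div_le_iff₀ hm]
      calc |x| ≤ m * δ ^ 3 := hx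
        _ = δ ^ 3 * m := by ring
    calc c = (|x| / m) ^ ((1 : ℝ) / 3) := rfl
      _ ≤ (δ ^ 3) ^ ((1 : ℝ) / 3) := Real.rpow_le_rpow (by positivity) h1 (by norm_num)
      _ = δ := by
          rw [← Real.rpow_natCast δ 3, ← Real.rpow_mul hδpos.le]
          norm_num
  have hkeyest : ∀ y : ℝ, c ≤ |y| → |y| ≤ δ → |P x y + y| ≤ ε * |y| := by
    intro y h1 h2
    have hxy : |x| ≤ m * |y| ^ 3 := by
      have h3 : c ^ 3 ≤ |y| ^ 3 := pow_le_pow_left₀ hc0 h1 3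
      rw [hccube, div_le_iff₀ hm] at h3
      linarith [h3]
    have hxδ : |x| ≤ δ := by
      have h4 := mul_le_mul_of_nonneg_right hmδ2' hδpos.le
      linarith [hx, h4]
    have hmem1 : ((x, y) : ℝ × ℝ) ∈ tset := by
      refine hball₁ ?_
      rw [Metric.mem_ball, Prod.dist_eq]
      simp only [Real.dist_eq, sub_zero]
      exact max_lt (lt_of_le_of_lt hxδ hδr₁) (lt_of_le_of_lt h2 hδr₁)
    have hmem2 : (((0 : ℝ), y) : ℝ × ℝ) ∈ tset := by
      refine hball₁ ?_
      rw [Metric.mem_ball, Prod.dist_eq]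
      simp only [Real.dist_eq, sub_zero, abs_zero]
      exact max_lt hr₁ (lt_of_le_of_lt h2 hδr₁)
    have hPdiff : |Pt (x, y) - Pt (0, y)| ≤ (K : ℝ) * |x| := by
      have h4 := hlip.dist_le_mul (x := ((x, y) : ℝ × ℝ)) (y := (((0 : ℝ), y) : ℝ × ℝ))
        hmem1 hmem2
      have h5 : dist ((x, y) : ℝ × ℝ) (((0 : ℝ), y) : ℝ × ℝ) = |x| := by
        rw [Prod.dist_eq]
        simp [Real.dist_eq]
      rw [Real.dist_eq, h5] at h4
      exact h4
    have hqy : |q y + y| ≤ ε / 2 * |y| := hqest y (lt_of_le_of_lt h2 hδr₃)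
    have hQP : Pt (0, y) = q y := rfl
    have hPxy : P x y = Pt (x, y) := hP x y
    have hKx : (K : ℝ) * |x| ≤ ε / 2 * |y| := by
      have h6 : |y| ^ 2 ≤ δ ^ 2 := pow_le_pow_left₀ (abs_nonneg y) h2 2
      have h6' : |y| ^ 3 ≤ δ ^ 2 * |y| := by
        have := mul_le_mul_of_nonneg_right h6 (abs_nonneg y)
        calc |y| ^ 3 = |y| ^ 2 * |y| := by ring
          _ ≤ δ ^ 2 * |y| := this
      have h7 : (K : ℝ) * |x| ≤ (K : ℝ) * (m * (δ ^ 2 * |y|)) := by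
        refine mul_le_mul_of_nonneg_left (hxy.trans ?_) K.coe_nonneg
        exact mul_le_mul_of_nonneg_left h6' hm.le
      have h9 : (K : ℝ) * (m * δ ^ 2) ≤ ε / 2 := by
        calc (K : ℝ) * (m * δ ^ 2) ≤ ((K : ℝ) + 1) * (ε / (2 * ((K : ℝ) + 1))) := by
              refine mul_le_mul (by linarith [K.coe_nonneg]) hmδ2 (by positivity)
                (by positivity)
          _ = ε / 2 := by field_simp
      have h8 := mul_le_mul_of_nonneg_right h9 (abs_nonneg y)
      linarith [h7, h8]
    calc |P x y + y| = |(Pt (x, y) - Pt (0, y)) + (q y + y)| := by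
          rw [hPxy, hQP]; ring_nf
      _ ≤ |Pt (x, y) - Pt (0, y)| + |q y + y| := abs_add_le _ _
      _ ≤ (K : ℝ) * |x| + ε / 2 * |y| := add_le_add hPdiff hqy
      _ ≤ ε / 2 * |y| + ε / 2 * |y| := by linarith [hKx]
      _ = ε * |y| := by ring
  constructor
  · rintro y ⟨hy1, hy2⟩
    have hy0 : 0 ≤ y := le_trans hc0 hy1
    have habsy : |y| = y := abs_of_nonneg hy0
    have hest := hkeyest y (by rwa [habsy]) (by rwa [habsy])
    rw [habsy, abs_le] at hest
    rw [mem_Icc]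
    constructor
    · have := mul_nonneg (by linarith : (0:ℝ) ≤ 1 + ε) (by linarith : (0:ℝ) ≤ δ - y)
      linarith [hest.1]
    · have := mul_nonneg (by linarith : (0:ℝ) ≤ 1 - ε) (by linarith : (0:ℝ) ≤ y - c)
      linarith [hest.2]
  · rintro y ⟨hy1, hy2⟩
    have hy0 : y ≤ 0 := le_trans hy2 (by linarith)
    have habsy : |y| = -y := abs_of_nonpos hy0
    have hest := hkeyest y (by rw [habsy]; linarith) (by rw [habsy]; linarith)
    rw [habsy, abs_le] at hest
    rw [mem_Icc]
    constructor
    · have := mul_nonneg (by linarith : (0:ℝ) ≤ 1 - ε) (by linarith : (0:ℝ) ≤ -y - c)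
      linarith [hest.1]
    · have := mul_nonneg (by linarith : (0:ℝ) ≤ 1 + ε) (by linarith : (0:ℝ) ≤ δ + y)
      linarith [hest.2]
end

section
/- Assume f(0) = 0 and f'_y(0)·g(0) ≠ 0. Let 𝒫(x,y) = −y + α·y² + ℛ(x,y) and 𝒫̃(x,y) = y + β·x/y + ℛ̃(x,y) be the maps provided by Lemmas 2.1 and 2.2, with α = 2·(f'_x(0) + g'_y(0))/g(0) + f''_yy(0)/f'_y(0) and β = −2·g(0)/f'_y(0). Define r(x,y) := 𝒫̃(x, 𝒫(x,y)) − (−y + α·y² − β·x/y). Then for any m > 0 the function r is C² on the region {(x,y) : 0 < ∛(|x|/m) < |y|} near the origin, and r(x,y) → 0, r'_y(x,y)/y → 0, and r'_x(x,y)·y → 0, all as |x| ≤ m|y|³, y → 0; that is, 𝒫̃(𝒫(y)) = −y + α·y² − β·x/y + r(x,y) with remainder r satisfying these three limiting relations. -/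
open Set Filter Topology

/-- Partial derivative in the first variable. -/
noncomputable def pdx (f : ℝ → ℝ → ℝ) (a b : ℝ) : ℝ := deriv (fun x => f x b) a

/-- Second partial derivative in the second variable. -/
noncomputable def pdyy (f : ℝ → ℝ → ℝ) (a b : ℝ) : ℝ := iteratedDeriv 2 (fun y => f a y) b

set_option maxHeartbeats 8000000

lemma hasDerivAt_comp2 {F : ℝ → ℝ → ℝ} {a b : ℝ}
    (hF : DifferentiableAt ℝ (fun p : ℝ × ℝ => F p.1 p.2) (a, b))
    {u v : ℝ → ℝ} {t u' v' : ℝ} (hu : HasDerivAt u u' t) (hv : HasDerivAt v v' t)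
    (ha : u t = a) (hb : v t = b) :
    HasDerivAt (fun s => F (u s) (v s)) (u' * pdx F a b + v' * pdy F a b) t := by
  subst ha hb
  set L := fderiv ℝ (fun p : ℝ × ℝ => F p.1 p.2) (u t, v t) with hLdef
  have hL : HasFDerivAt (fun p : ℝ × ℝ => F p.1 p.2) L (u t, v t) := hF.hasFDerivAt
  have hx : pdx F (u t) (v t) = L (1, 0) := by
    have h := hL.comp_hasDerivAt (u t) ((hasDerivAt_id (u t)).prodMk (hasDerivAt_const (u t) (v t)))
    simp only [pdx]
    exact h.deriv
  have hy : pdy F (u t) (v t) = L (0, 1) := by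
    have h := hL.comp_hasDerivAt (v t) ((hasDerivAt_const (v t) (u t)).prodMk (hasDerivAt_id (v t)))
    simp only [pdy]
    exact h.deriv
  have hcurve : HasDerivAt (fun s => (u s, v s)) ((u', v') : ℝ × ℝ) t := hu.prodMk hv
  have h := hL.comp_hasDerivAt t hcurve
  have : L (u', v') = u' * pdx F (u t) (v t) + v' * pdy F (u t) (v t) := by
    rw [hx, hy]
    have : ((u', v') : ℝ × ℝ) = u' • ((1,0) : ℝ × ℝ) + v' • ((0,1) : ℝ × ℝ) := by
      simp [Prod.ext_iff]
    rw [this, map_add, map_smul, map_smul]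
    simp [smul_eq_mul]
  rwa [this] at h

lemma cube_root_lt {t s : ℝ} (ht : 0 ≤ t) (hs : 0 < s) (h : t < s ^ 3) :
    t ^ ((1:ℝ)/3) < s := by
  have h1 : t ^ ((1:ℝ)/3) < (s ^ 3) ^ ((1:ℝ)/3) := by
    apply Real.rpow_lt_rpow ht h (by norm_num)
  have h2 : (s ^ 3) ^ ((1:ℝ)/3) = s := by
    rw [← Real.rpow_natCast s 3, ← Real.rpow_mul hs.le]
    norm_num
  linarith

lemma lt_cube {t s : ℝ} (ht : 0 ≤ t) (h : t ^ ((1:ℝ)/3) < s) :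
    t < s ^ 3 := by
  have h1 : (t ^ ((1:ℝ)/3)) ^ 3 < s ^ 3 := by
    exact pow_lt_pow_left₀ h (Real.rpow_nonneg ht _) (by norm_num)
  have h2 : (t ^ ((1:ℝ)/3)) ^ 3 = t := by
    rw [← Real.rpow_natCast (t ^ ((1:ℝ)/3)) 3, ← Real.rpow_mul ht]
    norm_num
  linarith

lemma open_region (m δ : ℝ) : IsOpen {p : ℝ × ℝ | (|p.1| / m) ^ ((1 : ℝ) / 3) < |p.2| ∧ |p.2| < δ} := by
  apply IsOpen.and
  · apply isOpen_lt
    · apply Continuous.rpow_const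
      · exact (continuous_fst.abs.div_const m)
      · intro x; right; norm_num
    · exact continuous_snd.abs
  · exact isOpen_lt continuous_snd.abs continuous_const

lemma abs_sub_le' (a b : ℝ) : |a - b| ≤ |a| + |b| := by
  rw [sub_eq_add_neg]
  exact (abs_add_le _ _).trans (by rw [abs_neg])

lemma abs_le_of_abs_div_le {u v c : ℝ} (hv : v ≠ 0) (h : |u / v| ≤ c) : |u| ≤ c * |v| := by
  rw [abs_div] at h
  exact (div_le_iff₀ (abs_pos.mpr hv)).1 h

/-- Corollary 2.4: the composition `𝒫̃ ∘ 𝒫` of the maps provided by Lemmas 2.1 and 2.2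
expands as `𝒫̃(𝒫(y)) = -y + α y² - β x/y + r(x,y)`, where for any `m > 0` the remainder
`r` is `C²` on `{(x,y) : 0 < ∛(|x|/m) < |y|}` near the origin and satisfies
`r → 0`, `r'_y/y → 0`, `r'_x·y → 0` as `|x| ≤ m|y|³`, `y → 0`. -/
theorem stmt_8
    (f g : ℝ → ℝ → ℝ)
    (hf0 : f 0 0 = 0)
    (hfg0 : pdy f 0 0 * g 0 0 ≠ 0)
    (α β : ℝ)
    (hα : α = 2 * (pdx f 0 0 + pdy g 0 0) / g 0 0 + pdyy f 0 0 / pdy f 0 0)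
    (hβ : β = -2 * g 0 0 / pdy f 0 0)
    -- the maps provided by Lemmas 2.1 and 2.2 together with their expansions
    (P Pt R Rt : ℝ → ℝ → ℝ)
    (hP : ∀ x y : ℝ, P x y = -y + α * y ^ 2 + R x y)
    (hPt : ∀ x y : ℝ, y ≠ 0 → Pt x y = y + β * x / y + Rt x y)
    (hC2 : ∀ m : ℝ, 0 < m → ∃ δ > (0 : ℝ),
      ContDiffOn ℝ 2 (fun p : ℝ × ℝ => R p.1 p.2)
        {p : ℝ × ℝ | (|p.1| / m) ^ ((1 : ℝ) / 3) < |p.2| ∧ |p.2| < δ} ∧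
      ContDiffOn ℝ 2 (fun p : ℝ × ℝ => Rt p.1 p.2)
        {p : ℝ × ℝ | (|p.1| / m) ^ ((1 : ℝ) / 3) < |p.2| ∧ |p.2| < δ})
    (hRlim : ∀ m : ℝ, 0 < m → ∀ ε > (0 : ℝ), ∃ δ > (0 : ℝ), ∀ x y : ℝ,
      0 < |y| → |y| ≤ δ → |x| ≤ m * |y| ^ 3 →
      |R x y / y ^ 2| ≤ ε ∧ |pdy R x y / y| ≤ ε ∧ |pdx R x y * y| ≤ ε)
    (hRtlim : ∀ m : ℝ, 0 < m → ∀ ε > (0 : ℝ), ∃ δ > (0 : ℝ), ∀ x y : ℝ,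
      0 < |y| → |y| ≤ δ → |x| ≤ m * |y| ^ 3 →
      |Rt x y / y ^ 2| ≤ ε ∧ |pdy Rt x y / y| ≤ ε ∧ |pdx Rt x y * y| ≤ ε)
    -- the remainder of the composition
    (r : ℝ → ℝ → ℝ)
    (hr : ∀ x y : ℝ, r x y = Pt x (P x y) - (-y + α * y ^ 2 - β * x / y)) :
    ∀ m : ℝ, 0 < m →
      (∃ δ > (0 : ℝ), ContDiffOn ℝ 2 (fun p : ℝ × ℝ => r p.1 p.2)
        {p : ℝ × ℝ | 0 < (|p.1| / m) ^ ((1 : ℝ) / 3) ∧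
          (|p.1| / m) ^ ((1 : ℝ) / 3) < |p.2| ∧ |p.2| < δ}) ∧
      (∀ ε > (0 : ℝ), ∃ δ > (0 : ℝ), ∀ x y : ℝ,
        0 < |y| → |y| ≤ δ → |x| ≤ m * |y| ^ 3 →
        |r x y| ≤ ε ∧ |pdy r x y / y| ≤ ε ∧ |pdx r x y * y| ≤ ε) := by
  intro m hm0
  obtain ⟨δR, hδR0, hRC2, -⟩ := hC2 (2*m) (by linarith)
  obtain ⟨δRt, hδRt0, -, hRtC2⟩ := hC2 (16*m) (by linarith)
  obtain ⟨δB, hδB0, hB⟩ := hRlim (2*m) (by linarith) 1 one_pos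
  obtain ⟨a, ha_def⟩ : ∃ a : ℝ, a = |α| + 1 := ⟨_, rfl⟩
  obtain ⟨b, hb_def⟩ : ∃ b : ℝ, b = |β| := ⟨_, rfl⟩
  have ha1 : 1 ≤ a := by
    have := abs_nonneg α; rw [ha_def]; linarith
  have ha0 : 0 < a := by linarith
  have hb0 : 0 ≤ b := by rw [hb_def]; exact abs_nonneg β
  have hαa : |α| ≤ a := by rw [ha_def]; linarith
  set SR := {p : ℝ × ℝ | (|p.1| / (2*m)) ^ ((1 : ℝ) / 3) < |p.2| ∧ |p.2| < δR} with hSR_def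
  set SRt := {p : ℝ × ℝ | (|p.1| / (16*m)) ^ ((1 : ℝ) / 3) < |p.2| ∧ |p.2| < δRt} with hSRt_def
  obtain ⟨δ₀, hδ₀_def⟩ : ∃ d : ℝ, d = min (min δB (δR/2)) (min (δRt/4) (min (1/(4*a)) 1)) :=
    ⟨_, rfl⟩
  have hδ₀0 : 0 < δ₀ := by
    have h4a : (0:ℝ) < 1/(4*a) := by positivity
    rw [hδ₀_def]
    simp only [lt_min_iff]
    exact ⟨⟨hδB0, by linarith⟩, by linarith, h4a, one_pos⟩
  have hδ₀B : δ₀ ≤ δB := by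
    rw [hδ₀_def]; exact le_trans (min_le_left _ _) (min_le_left _ _)
  have hδ₀R : δ₀ ≤ δR/2 := by
    rw [hδ₀_def]; exact le_trans (min_le_left _ _) (min_le_right _ _)
  have hδ₀Rt : δ₀ ≤ δRt/4 := by
    rw [hδ₀_def]; exact le_trans (min_le_right _ _) (min_le_left _ _)
  have hδ₀a : δ₀ ≤ 1/(4*a) := by
    rw [hδ₀_def]
    exact le_trans (min_le_right _ _) (le_trans (min_le_right _ _) (min_le_left _ _))
  have hδ₀1 : δ₀ ≤ 1 := by
    rw [hδ₀_def]
    exact le_trans (min_le_right _ _) (le_trans (min_le_right _ _) (min_le_right _ _))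
  -- geometric facts
  have geo : ∀ x y : ℝ, 0 < |y| → |y| ≤ δ₀ → |x| ≤ m * |y| ^ 3 →
      |y|/2 ≤ |P x y| ∧ |P x y| ≤ 2*|y| ∧ (x, y) ∈ SR ∧ (x, P x y) ∈ SRt := by
    intro x y hy hyδ hx
    have hy0 : y ≠ 0 := abs_pos.mp hy
    have hy3 : (0:ℝ) < |y|^3 := by positivity
    have hx2 : |x| ≤ 2*m * |y| ^ 3 := by nlinarith
    have hyB : |y| ≤ δB := hyδ.trans hδ₀B
    obtain ⟨hB1, -, -⟩ := hB x y hy hyB hx2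
    have hR0 : |R x y| ≤ y^2 := by
      have h := abs_le_of_abs_div_le (pow_ne_zero 2 hy0) hB1
      calc |R x y| ≤ 1 * |y^2| := h
        _ = y^2 := by rw [one_mul, abs_pow, sq_abs]
    have hsum : |α*y^2 + R x y| ≤ a*y^2 := by
      have h1 := abs_add_le (α*y^2) (R x y)
      have h2 : |α*y^2| = |α| * y^2 := by rw [abs_mul, abs_pow, sq_abs]
      have h3 : |α| * y^2 ≤ (a-1)*y^2 := by nlinarith [sq_nonneg y, hαa]
      nlinarith
    have hay : a*|y| ≤ 1/4 := by
      have h1 : |y| ≤ 1/(4*a) := hyδ.trans hδ₀a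
      have h2 : a * |y| ≤ a * (1/(4*a)) := mul_le_mul_of_nonneg_left h1 ha0.le
      have h3 : a * (1/(4*a)) = 1/4 := by
        rw [mul_one_div]
        rw [div_eq_div_iff (by positivity) (by norm_num : (4:ℝ) ≠ 0)]
        ring
      linarith
    have hsum2 : |α*y^2 + R x y| ≤ |y|/2 := by
      have h5 : a*y^2 ≤ |y|/4 := by nlinarith [sq_abs y, abs_nonneg y]
      have h6 : |y|/4 ≤ |y|/2 := by linarith [abs_nonneg y]
      exact hsum.trans (h5.trans h6)
    have hPexp : P x y = -y + (α*y^2 + R x y) := by rw [hP]; ring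
    have htri1 : |y| ≤ |P x y| + |α*y^2 + R x y| := by
      have h2 : y = (α*y^2 + R x y) - P x y := by rw [hPexp]; ring
      calc |y| = |(α*y^2 + R x y) - P x y| := by rw [← h2]
        _ = |(α*y^2 + R x y) + -(P x y)| := by rw [sub_eq_add_neg]
        _ ≤ |α*y^2 + R x y| + |-(P x y)| := abs_add_le _ _
        _ = |α*y^2 + R x y| + |P x y| := by rw [abs_neg]
        _ = |P x y| + |α*y^2 + R x y| := by ring
    have hplo : |y|/2 ≤ |P x y| := by linarith
    have hphi : |P x y| ≤ 2*|y| := by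
      have := abs_add_le (-y) (α*y^2 + R x y)
      rw [← hPexp, abs_neg] at this
      linarith
    have hppos : 0 < |P x y| := by linarith
    refine ⟨hplo, hphi, ⟨?_, ?_⟩, ⟨?_, ?_⟩⟩
    · apply cube_root_lt (by positivity) hy
      rw [div_lt_iff₀ (by linarith : (0:ℝ) < 2*m)]
      nlinarith
    · calc |y| ≤ δ₀ := hyδ
        _ ≤ δR/2 := hδ₀R
        _ < δR := by linarith
    · apply cube_root_lt (by positivity) hppos
      rw [div_lt_iff₀ (by linarith : (0:ℝ) < 16*m)]
      have h3 : |y|^3 ≤ 8*|P x y|^3 := by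
        have := pow_le_pow_left₀ (abs_nonneg y) (by linarith : |y| ≤ 2*|P x y|) 3
        nlinarith
      nlinarith [pow_pos hppos 3]
    · calc |P x y| ≤ 2*|y| := hphi
        _ ≤ 2*δ₀ := by linarith
        _ ≤ δRt/2 := by linarith
        _ < δRt := by linarith
  -- the derivatives
  have derivs : ∀ x y : ℝ, 0 < |y| → |y| ≤ δ₀ → |x| ≤ m*|y|^3 →
      HasDerivAt (fun y' => r x y')
        ((-1 + 2*α*y + pdy R x y) * (1 - β*x/(P x y)^2 + pdy Rt x (P x y))
          + 1 - 2*α*y - β*x/y^2) y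
      ∧ HasDerivAt (fun x' => r x' y)
        ((pdx R x y) * (1 - β*x/(P x y)^2 + pdy Rt x (P x y))
          + β/(P x y) + pdx Rt x (P x y) + β/y) x := by
    intro x y hy hyδ hx
    obtain ⟨hplo, hphi, hmemR, hmemRt⟩ := geo x y hy hyδ hx
    have hy0 : y ≠ 0 := abs_pos.mp hy
    have hppos : 0 < |P x y| := lt_of_lt_of_le (by positivity) hplo
    have hpne : P x y ≠ 0 := abs_pos.mp hppos
    have hRdiff : DifferentiableAt ℝ (fun q : ℝ × ℝ => R q.1 q.2) (x, y) :=
      (hRC2.contDiffAt ((open_region (2*m) δR).mem_nhds hmemR)).differentiableAt two_ne_zero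
    have hRtdiff : DifferentiableAt ℝ (fun q : ℝ × ℝ => Rt q.1 q.2) (x, P x y) :=
      (hRtC2.contDiffAt ((open_region (16*m) δRt).mem_nhds hmemRt)).differentiableAt two_ne_zero
    have hRy : HasDerivAt (fun y' => R x y') (pdy R x y) y := by
      have h := hasDerivAt_comp2 hRdiff (hasDerivAt_const y x) (hasDerivAt_id y) rfl rfl
      simpa using h
    have hRx : HasDerivAt (fun x' => R x' y) (pdx R x y) x := by
      have h := hasDerivAt_comp2 hRdiff (hasDerivAt_id x) (hasDerivAt_const x y) rfl rfl
      simpa using h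
    have hPy : HasDerivAt (fun y' => P x y') (-1 + 2*α*y + pdy R x y) y := by
      have h0 : HasDerivAt (fun y' : ℝ => -y' + α * y' ^ 2 + R x y')
          (-1 + α * (2 * y ^ 1) + pdy R x y) y := by
        have h1 : HasDerivAt (fun y' : ℝ => -y') (-1) y := (hasDerivAt_id y).neg
        have h2 : HasDerivAt (fun y' : ℝ => α * y' ^ 2) (α * (2 * y ^ 1)) y := by
          have := (hasDerivAt_pow 2 y).const_mul α
          norm_num at this ⊢
          exact this
        exact (h1.add h2).add hRy
      have hfun : (fun y' => P x y') = fun y' : ℝ => -y' + α * y' ^ 2 + R x y' :=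
        funext fun y' => hP x y'
      rw [hfun]
      convert h0 using 1
      ring
    have hPx : HasDerivAt (fun x' => P x' y) (pdx R x y) x := by
      have h0 : HasDerivAt (fun x' : ℝ => -y + α * y ^ 2 + R x' y) (0 + pdx R x y) x :=
        (hasDerivAt_const x (-y + α * y ^ 2)).add hRx
      have hfun : (fun x' => P x' y) = fun x' : ℝ => -y + α * y ^ 2 + R x' y :=
        funext fun x' => hP x' y
      rw [hfun]
      simpa using h0
    constructor
    · -- y-derivative
      have hdiv1 : HasDerivAt (fun y' => β * x / P x y')
          ((0 * P x y - β * x * (-1 + 2*α*y + pdy R x y)) / (P x y)^2) y :=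
        (hasDerivAt_const y (β*x)).div hPy hpne
      have hRtPy : HasDerivAt (fun y' => Rt x (P x y'))
          (0 * pdx Rt x (P x y) + (-1 + 2*α*y + pdy R x y) * pdy Rt x (P x y)) y :=
        hasDerivAt_comp2 hRtdiff (hasDerivAt_const y x) hPy rfl rfl
      have hlast : HasDerivAt (fun y' : ℝ => β * x / y') ((0 * y - β * x * 1)/y^2) y :=
        (hasDerivAt_const y (β*x)).div (hasDerivAt_id y) hy0
      have hpoly : HasDerivAt (fun y' : ℝ => y' - α * y'^2) (1 - α*(2*y^1)) y := by
        have h2 : HasDerivAt (fun y' : ℝ => α * y' ^ 2) (α * (2 * y ^ 1)) y := by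
          have := (hasDerivAt_pow 2 y).const_mul α
          norm_num at this ⊢
          exact this
        exact (hasDerivAt_id y).sub h2
      have hψ : HasDerivAt
          (fun y' => P x y' + β*x/(P x y') + Rt x (P x y') + (y' - α*y'^2) + β*x/y')
          ((-1 + 2*α*y + pdy R x y)
            + (0 * P x y - β * x * (-1 + 2*α*y + pdy R x y)) / (P x y)^2
            + (0 * pdx Rt x (P x y) + (-1 + 2*α*y + pdy R x y) * pdy Rt x (P x y))
            + (1 - α*(2*y^1)) + (0 * y - β * x * 1)/y^2) y :=
        (((hPy.add hdiv1).add hRtPy).add hpoly).add hlast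
      have hev : (fun y' => r x y') =ᶠ[𝓝 y]
          (fun y' => P x y' + β*x/(P x y') + Rt x (P x y') + (y' - α*y'^2) + β*x/y') := by
        have h1 : ∀ᶠ y' in 𝓝 y, P x y' ≠ 0 := hPy.continuousAt.eventually_ne hpne
        have h2 : ∀ᶠ y' in 𝓝 y, y' ≠ 0 := eventually_ne_nhds hy0
        filter_upwards [h1, h2] with y' h1' h2'
        rw [hr, hPt x (P x y') h1']
        ring
      have hrY := hψ.congr_of_eventuallyEq hev
      refine hrY.congr_deriv ?_
      have e : ∀ D P y a b x Q z : ℝ, D * (1 - b * x / P ^ 2 + Q) + 1 - 2 * a * y - b * x / y ^ 2 = D + (0 * P - b * x * D) / P ^ 2 + (0 * z + D * Q) + (1 - a * (2 * y ^ 1)) + (0 * y - b * x * 1) / y ^ 2 := by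
        intros; ring
      exact (e _ _ _ _ _ _ _ _).symm
    · -- x-derivative
      have hdiv1 : HasDerivAt (fun x' => β * x' / P x' y)
          ((β * 1 * P x y - β * x * pdx R x y) / (P x y)^2) x :=
        ((hasDerivAt_id x).const_mul β).div hPx hpne
      have hRtPx : HasDerivAt (fun x' => Rt x' (P x' y))
          (1 * pdx Rt x (P x y) + pdx R x y * pdy Rt x (P x y)) x :=
        hasDerivAt_comp2 hRtdiff (hasDerivAt_id x) hPx rfl rfl
      have hlast : HasDerivAt (fun x' : ℝ => β * x' / y) (β * 1 / y) x := by
        have := ((hasDerivAt_id x).const_mul β).div_const y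
        simpa using this
      have hpoly : HasDerivAt (fun _ : ℝ => y - α*y^2) 0 x := hasDerivAt_const x _
      have hψ : HasDerivAt
          (fun x' => P x' y + β*x'/(P x' y) + Rt x' (P x' y) + (y - α*y^2) + β*x'/y)
          (pdx R x y
            + (β * 1 * P x y - β * x * pdx R x y) / (P x y)^2
            + (1 * pdx Rt x (P x y) + pdx R x y * pdy Rt x (P x y))
            + 0 + β * 1 / y) x :=
        (((hPx.add hdiv1).add hRtPx).add hpoly).add hlast
      have hev : (fun x' => r x' y) =ᶠ[𝓝 x]
          (fun x' => P x' y + β*x'/(P x' y) + Rt x' (P x' y) + (y - α*y^2) + β*x'/y) := by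
        have h1 : ∀ᶠ x' in 𝓝 x, P x' y ≠ 0 := hPx.continuousAt.eventually_ne hpne
        filter_upwards [h1] with x' h1'
        rw [hr, hPt x' (P x' y) h1']
        ring
      have hrX := hψ.congr_of_eventuallyEq hev
      refine hrX.congr_deriv ?_
      have e : ∀ S P y b x Q W : ℝ, P ≠ 0 → S * (1 - b*x/P^2 + Q) + b/P + W + b/y = S + (b*1*P - b*x*S)/P^2 + (1*W + S*Q) + 0 + b*1/y := by
        intros; field_simp; ring
      exact (e _ _ _ _ _ _ _ hpne).symm
  constructor
  · -- C² part
    refine ⟨δ₀, hδ₀0, ?_⟩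
    set T := {p : ℝ × ℝ | 0 < (|p.1| / m) ^ ((1 : ℝ) / 3) ∧
      (|p.1| / m) ^ ((1 : ℝ) / 3) < |p.2| ∧ |p.2| < δ₀} with hT_def
    have hfacts : ∀ p : ℝ × ℝ, p ∈ T → 0 < |p.2| ∧ |p.2| ≤ δ₀ ∧ |p.1| ≤ m * |p.2|^3 := by
      intro p hp
      obtain ⟨h1, h2, h3⟩ := hp
      have hy : 0 < |p.2| := lt_trans h1 h2
      have hxm : |p.1| < m * |p.2|^3 := by
        have h4 := lt_cube (by positivity : (0:ℝ) ≤ |p.1|/m) h2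
        rw [div_lt_iff₀ hm0] at h4
        linarith
      exact ⟨hy, le_of_lt h3, le_of_lt hxm⟩
    have hTsubR : T ⊆ SR := by
      intro p hp
      obtain ⟨hy, hyδ, hxx⟩ := hfacts p hp
      exact (geo p.1 p.2 hy hyδ hxx).2.2.1
    have hPne : ∀ p : ℝ × ℝ, p ∈ T → P p.1 p.2 ≠ 0 := by
      intro p hp
      obtain ⟨hy, hyδ, hxx⟩ := hfacts p hp
      have h1 := (geo p.1 p.2 hy hyδ hxx).1
      have h2 : 0 < |P p.1 p.2| := lt_of_lt_of_le (by positivity) h1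
      exact abs_pos.mp h2
    have hyne : ∀ p : ℝ × ℝ, p ∈ T → p.2 ≠ 0 := fun p hp => abs_pos.mp (hfacts p hp).1
    have hPcd : ContDiffOn ℝ 2 (fun q : ℝ × ℝ => P q.1 q.2) T := by
      have hpoly : ContDiffOn ℝ 2 (fun q : ℝ × ℝ => -q.2 + α * q.2^2) T :=
        ContDiff.contDiffOn ((contDiff_snd.neg).add (contDiff_const.mul (contDiff_snd.pow 2)))
      have h := hpoly.add (hRC2.mono hTsubR)
      exact h.congr (fun q hq => hP q.1 q.2)
    have hmaps : MapsTo (fun q : ℝ × ℝ => (q.1, P q.1 q.2)) T SRt := by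
      intro p hp
      obtain ⟨hy, hyδ, hxx⟩ := hfacts p hp
      exact (geo p.1 p.2 hy hyδ hxx).2.2.2
    have hRtcomp : ContDiffOn ℝ 2 (fun q : ℝ × ℝ => Rt q.1 (P q.1 q.2)) T := by
      have h := hRtC2.comp (ContDiffOn.prodMk (contDiff_fst.contDiffOn) hPcd) hmaps
      exact h
    have hdiv1 : ContDiffOn ℝ 2 (fun q : ℝ × ℝ => β * q.1 / P q.1 q.2) T := by
      apply ContDiffOn.div
      · exact ContDiff.contDiffOn (contDiff_const.mul contDiff_fst)
      · exact hPcd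
      · exact hPne
    have hdiv2 : ContDiffOn ℝ 2 (fun q : ℝ × ℝ => β * q.1 / q.2) T := by
      apply ContDiffOn.div
      · exact ContDiff.contDiffOn (contDiff_const.mul contDiff_fst)
      · exact ContDiff.contDiffOn contDiff_snd
      · exact hyne
    have hpoly2 : ContDiffOn ℝ 2 (fun q : ℝ × ℝ => q.2 - α * q.2^2) T :=
      ContDiff.contDiffOn (contDiff_snd.sub (contDiff_const.mul (contDiff_snd.pow 2)))
    have hG : ContDiffOn ℝ 2 (fun q : ℝ × ℝ =>
        P q.1 q.2 + β * q.1 / P q.1 q.2 + Rt q.1 (P q.1 q.2) + (q.2 - α * q.2^2)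
          + β * q.1 / q.2) T :=
      (((hPcd.add hdiv1).add hRtcomp).add hpoly2).add hdiv2
    apply hG.congr
    intro q hq
    rw [hr, hPt q.1 (P q.1 q.2) (hPne q hq)]
    ring
  · -- limit part
    intro ε hε0
    obtain ⟨C, hC_def⟩ : ∃ c : ℝ, c = 24*(1+a^2)*(1+b)*(1+m) := ⟨_, rfl⟩
    have hC0 : 0 < C := by
      rw [hC_def]
      have : 0 ≤ b := hb0
      positivity
    obtain ⟨ε', hε'_def⟩ : ∃ e : ℝ, e = min 1 (ε/(2*C)) := ⟨_, rfl⟩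
    have hε'0 : 0 < ε' := by
      rw [hε'_def]; exact lt_min one_pos (by positivity)
    have hε'1 : ε' ≤ 1 := by rw [hε'_def]; exact min_le_left _ _
    have hε'ε : ε' ≤ ε/(2*C) := by rw [hε'_def]; exact min_le_right _ _
    obtain ⟨δ₁, hδ₁0, h₁⟩ := hRlim (2*m) (by linarith) ε' hε'0
    obtain ⟨δ₂, hδ₂0, h₂⟩ := hRtlim (16*m) (by linarith) ε' hε'0
    obtain ⟨δ, hδ_def⟩ : ∃ d : ℝ, d = min δ₀ (min δ₁ (min (δ₂/2) (ε/(2*C)))) := ⟨_, rfl⟩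
    have hδ0 : 0 < δ := by
      rw [hδ_def]
      simp only [lt_min_iff]
      refine ⟨hδ₀0, hδ₁0, by linarith, by positivity⟩
    have hδδ₀ : δ ≤ δ₀ := by rw [hδ_def]; exact min_le_left _ _
    have hδδ₁ : δ ≤ δ₁ := by
      rw [hδ_def]; exact le_trans (min_le_right _ _) (min_le_left _ _)
    have hδδ₂ : δ ≤ δ₂/2 := by
      rw [hδ_def]
      exact le_trans (min_le_right _ _) (le_trans (min_le_right _ _) (min_le_left _ _))
    have hδε : δ ≤ ε/(2*C) := by
      rw [hδ_def]
      exact le_trans (min_le_right _ _) (le_trans (min_le_right _ _) (min_le_right _ _))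
    have hδ1 : δ ≤ 1 := hδδ₀.trans hδ₀1
    have hkey : ∀ c1 c2 : ℝ, 0 ≤ c1 → 0 ≤ c2 → c1 + c2 ≤ 2*C → c1*ε' + c2*δ ≤ ε := by
      intro c1 c2 hc1 hc2 hc
      have e1 : c1*ε' ≤ c1*(ε/(2*C)) := mul_le_mul_of_nonneg_left hε'ε hc1
      have e2 : c2*δ ≤ c2*(ε/(2*C)) := mul_le_mul_of_nonneg_left hδε hc2
      have e3 : (c1+c2)*(ε/(2*C)) ≤ (2*C)*(ε/(2*C)) :=
        mul_le_mul_of_nonneg_right hc (by positivity)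
      have e4 : (2*C)*(ε/(2*C)) = ε := by field_simp
      have e5 : c1*(ε/(2*C)) + c2*(ε/(2*C)) = (c1+c2)*(ε/(2*C)) := by ring
      linarith
    have hCexp : 2*C = 48*(1+a^2)*(1+b)*(1+m) := by rw [hC_def]; ring
    have hnn1 : 0 ≤ b*m := mul_nonneg hb0 hm0.le
    have hnn2 : 0 ≤ a*b*m := mul_nonneg (mul_nonneg ha0.le hb0) hm0.le
    have hnn3 : a*b*m ≤ a^2*b*m := by nlinarith
    have hnn4 : 0 ≤ a*b := mul_nonneg ha0.le hb0
    have hnn5 : a*b ≤ a^2*b := by nlinarith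
    have hnn6 : 0 ≤ a^2*b*m := by positivity
    have hnn7 : 0 ≤ a^2*b := by positivity
    have hnn8 : 0 ≤ a^2*m := by positivity
    refine ⟨δ, hδ0, ?_⟩
    intro x y hy hyδ hx
    have hy0 : y ≠ 0 := abs_pos.mp hy
    have hy1 : |y| ≤ 1 := le_trans (hyδ.trans hδδ₀) hδ₀1
    have hyδ₀ : |y| ≤ δ₀ := hyδ.trans hδδ₀
    obtain ⟨hplo, hphi, hmemR, hmemRt⟩ := geo x y hy hyδ₀ hx
    have hppos : 0 < |P x y| := lt_of_lt_of_le (by positivity) hplo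
    have hpne : P x y ≠ 0 := abs_pos.mp hppos
    have hy3 : (0:ℝ) < |y|^3 := by positivity
    have hx2 : |x| ≤ 2*m*|y|^3 := by
      have hmy : 0 < m*|y|^3 := by positivity
      linarith
    obtain ⟨hR0', hR2', hR1'⟩ := h₁ x y hy (hyδ.trans hδδ₁) hx2
    have hpδ₂ : |P x y| ≤ δ₂ := by
      have := hyδ.trans hδδ₂
      linarith
    have hxp : |x| ≤ 16*m*|P x y|^3 := by
      have h3 : |y|^3 ≤ 8*|P x y|^3 := by
        have h4 := pow_le_pow_left₀ (abs_nonneg y) (by linarith : |y| ≤ 2*|P x y|) 3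
        calc |y|^3 ≤ (2*|P x y|)^3 := h4
          _ = 8*|P x y|^3 := by ring
      have h5 : m*|y|^3 ≤ m*(8*|P x y|^3) := mul_le_mul_of_nonneg_left h3 hm0.le
      have h6 : 0 ≤ m*|P x y|^3 := by positivity
      linarith
    obtain ⟨hRt0', hRt2', hRt1'⟩ := h₂ x (P x y) hppos hpδ₂ hxp
    have hY2 : |y|^2 = y^2 := sq_abs y
    have hA1 : |R x y| ≤ ε' * y^2 := by
      have h := abs_le_of_abs_div_le (pow_ne_zero 2 hy0) hR0'
      calc |R x y| ≤ ε' * |y^2| := h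
        _ = ε' * y^2 := by rw [abs_pow, sq_abs]
    have hA2 : |pdy R x y| ≤ ε' * |y| := abs_le_of_abs_div_le hy0 hR2'
    have hA3 : |pdx R x y * y| ≤ ε' := hR1'
    have hB1 : |Rt x (P x y)| ≤ 4 * ε' * y^2 := by
      have h := abs_le_of_abs_div_le (pow_ne_zero 2 hpne) hRt0'
      calc |Rt x (P x y)| ≤ ε' * |(P x y)^2| := h
        _ = ε' * |P x y|^2 := by rw [abs_pow]
        _ ≤ ε' * (2*|y|)^2 := by
            apply mul_le_mul_of_nonneg_left _ hε'0.le
            exact pow_le_pow_left₀ (abs_nonneg _) hphi 2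
        _ = 4*ε'*|y|^2 := by ring
        _ = 4*ε'*y^2 := by rw [hY2]
    have hB2 : |pdy Rt x (P x y)| ≤ 2 * ε' * |y| := by
      have h := abs_le_of_abs_div_le hpne hRt2'
      calc |pdy Rt x (P x y)| ≤ ε' * |P x y| := h
        _ ≤ ε' * (2*|y|) := mul_le_mul_of_nonneg_left hphi hε'0.le
        _ = 2*ε'*|y| := by ring
    have hB3 : |pdx Rt x (P x y)| * |P x y| ≤ ε' := by rw [← abs_mul]; exact hRt1'
    have haux : |α| + ε' ≤ a := by simp only [ha_def]; linarith
    have hsum : |α*y^2 + R x y| ≤ a*y^2 := by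
      have h1 := abs_add_le (α*y^2) (R x y)
      have h2 : |α*y^2| = |α| * y^2 := by rw [abs_mul, abs_pow, sq_abs]
      have h4 : (|α| + ε') * y^2 ≤ a * y^2 := mul_le_mul_of_nonneg_right haux (sq_nonneg y)
      linarith [hA1]
    have hay : a*|y| ≤ 1/4 := by
      have h1 : |y| ≤ 1/(4*a) := hyδ₀.trans hδ₀a
      have h2 : a * |y| ≤ a * (1/(4*a)) := mul_le_mul_of_nonneg_left h1 ha0.le
      have h3 : a * (1/(4*a)) = 1/4 := by
        rw [mul_one_div]
        rw [div_eq_div_iff (by positivity) (by norm_num : (4:ℝ) ≠ 0)]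
        ring
      linarith
    have hy14 : |y| ≤ 1/4 := by
      have := mul_le_mul_of_nonneg_right ha1 (abs_nonneg y)
      linarith
    -- Goal 1
    have hrid : r x y = R x y + β*x*(α*y^2 + R x y)/(P x y * y) + Rt x (P x y) := by
      rw [hr, hPt x (P x y) hpne]
      have hq := hpne
      field_simp
      rw [hP x y]
      ring
    have hmid : |β*x*(α*y^2 + R x y)/(P x y * y)| ≤ 2*a*b*m*|y|^3 := by
      rw [abs_div, abs_mul, abs_mul]
      have e1 : |β| * |x| ≤ b * (m*|y|^3) := by
        have := mul_le_mul_of_nonneg_left hx (abs_nonneg β)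
        simp only [hb_def]
        linarith
      have hnum : |β| * |x| * |α*y^2 + R x y| ≤ b * (m*|y|^3) * (a*y^2) :=
        mul_le_mul e1 hsum (abs_nonneg _) (by positivity)
      have hden : y^2/2 ≤ |P x y * y| := by
        rw [abs_mul]
        have hm1 := mul_le_mul_of_nonneg_right hplo (abs_nonneg y)
        linarith [sq_abs y]
      have hden0 : (0:ℝ) < y^2/2 := by positivity
      calc |β| * |x| * |α*y^2 + R x y| / |P x y * y|
          ≤ (b * (m*|y|^3) * (a*y^2)) / (y^2/2) :=
            div_le_div₀ (by positivity) hnum hden0 hden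
        _ = 2*a*b*m*|y|^3 := by
            rw [div_eq_iff (ne_of_gt hden0), ← hY2]
            ring
    have hg1 : |r x y| ≤ 5*ε' + 2*a*b*m*δ := by
      rw [hrid]
      have t1 := abs_add_le (R x y + β*x*(α*y^2 + R x y)/(P x y * y)) (Rt x (P x y))
      have t2 := abs_add_le (R x y) (β*x*(α*y^2 + R x y)/(P x y * y))
      have hy2le : y^2 ≤ 1 := by
        have := mul_le_mul hy1 hy1 (abs_nonneg y) one_pos.le
        linarith [sq_abs y]
      have hy3le : |y|^3 ≤ δ :=
        (pow_le_of_le_one (abs_nonneg y) hy1 (by norm_num)).trans hyδ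
      have e1 : ε' * y^2 ≤ ε' := by
        have := mul_le_mul_of_nonneg_left hy2le hε'0.le
        linarith
      have e2 : 2*a*b*m*|y|^3 ≤ 2*a*b*m*δ :=
        mul_le_mul_of_nonneg_left hy3le (by positivity)
      have e3 : 4*ε'*y^2 ≤ 4*ε' := by
        have := mul_le_mul_of_nonneg_left hy2le (by positivity : (0:ℝ) ≤ 4*ε')
        linarith
      linarith [hA1, hmid, hB1]
    -- Goal 2
    have hSigy : pdy r x y = (-1 + 2*α*y + pdy R x y) * (1 - β*x/(P x y)^2
        + pdy Rt x (P x y)) + 1 - 2*α*y - β*x/y^2 := by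
      simp only [pdy]
      exact ((derivs x y hy hyδ₀ hx).1).deriv
    have hid2 : pdy r x y = pdy R x y + (-1 + 2*α*y + pdy R x y) * pdy Rt x (P x y)
        - β*x*((pdy R x y)*y^2 - 2*y*(R x y) + (α*y^2 + R x y)^2)/((P x y)^2*y^2) := by
      rw [hSigy]
      have hq := hpne
      field_simp
      rw [hP x y]
      ring
    have hDp : |(-1 + 2*α*y + pdy R x y)| ≤ 2 := by
      have t1 : |(-1 + 2*α*y) + pdy R x y| ≤ |(-1 + 2*α*y)| + |pdy R x y| := abs_add_le _ _
      have t2 : |(-1:ℝ) + 2*α*y| ≤ |(-1:ℝ)| + |2*α*y| := abs_add_le _ _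
      have t3 : |2*α*y| = 2*(|α| * |y|) := by
        rw [abs_mul, abs_mul, abs_two]
        ring
      have t4 : |α| * |y| ≤ 1/4 := by
        have := mul_le_mul_of_nonneg_right hαa (abs_nonneg y)
        linarith
      have t5 : |pdy R x y| ≤ 1/4 := by
        have : ε' * |y| ≤ 1 * |y| := mul_le_mul_of_nonneg_right hε'1 (abs_nonneg y)
        linarith
      have t6 : |(-1:ℝ)| = 1 := by norm_num
      linarith
    have hN : |pdy R x y * y^2 - 2*y*(R x y) + (α*y^2 + R x y)^2| ≤ (3*ε' + a^2*δ)*|y|^3 := by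
      have t1 := abs_add_le (pdy R x y * y^2 - 2*y*(R x y)) ((α*y^2 + R x y)^2)
      have t2 := abs_sub_le' (pdy R x y * y^2) (2*y*(R x y))
      have e1 : |pdy R x y * y^2| ≤ ε'*|y|^3 := by
        rw [abs_mul]
        have h2 : |y^2| = |y|^2 := by rw [abs_pow]
        rw [h2]
        have h5 := mul_le_mul_of_nonneg_right hA2 (by positivity : (0:ℝ) ≤ |y|^2)
        have h6 : ε' * |y| * |y|^2 = ε' * |y|^3 := by ring
        linarith
      have e2 : |2*y*(R x y)| ≤ 2*ε'*|y|^3 := by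
        have h4 : |2*y*(R x y)| = 2*|y| * |R x y| := by
          rw [abs_mul, abs_mul, abs_two]
        have h5 := mul_le_mul_of_nonneg_left hA1 (by positivity : (0:ℝ) ≤ 2*|y|)
        have h7 : 2*|y| *(ε'*y^2) = 2*ε'*|y|^3 := by rw [← sq_abs y]; ring
        rw [h4]
        linarith
      have e3 : |(α*y^2 + R x y)^2| ≤ a^2*δ*|y|^3 := by
        rw [abs_pow]
        have h1 : |α*y^2 + R x y|^2 ≤ (a*y^2)^2 := pow_le_pow_left₀ (abs_nonneg _) hsum 2
        have h2 : (a*y^2)^2 = a^2*(|y|^2)^2 := by rw [hY2]; ring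
        have h3 : (|y|^2)^2 ≤ δ*|y|^3 := by
          have h4 := mul_le_mul_of_nonneg_right hyδ (by positivity : (0:ℝ) ≤ |y|^3)
          have h5 : |y| * |y|^3 = (|y|^2)^2 := by ring
          linarith
        have h6 := mul_le_mul_of_nonneg_left h3 (by positivity : (0:ℝ) ≤ a^2)
        have h7 : a^2*(δ*|y|^3) = a^2*δ*|y|^3 := by ring
        linarith
      linarith
    have hdenP : |y|^2/4 ≤ |P x y|^2 := by
      have h1 := pow_le_pow_left₀ (by positivity : (0:ℝ) ≤ |y|/2) hplo 2
      have h2 : (|y|/2)^2 = |y|^2/4 := by ring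
      linarith
    have hthird : |β*x*((pdy R x y)*y^2 - 2*y*(R x y) + (α*y^2 + R x y)^2)/((P x y)^2*y^2)|
        ≤ (12*b*m*ε' + 4*a^2*b*m*δ)*|y| := by
      rw [abs_div, abs_mul]
      have e1 : |β*x| ≤ b * (m*|y|^3) := by
        rw [abs_mul]
        have := mul_le_mul_of_nonneg_left hx (abs_nonneg β)
        simp only [hb_def]
        linarith
      have hnum : |β*x| * |(pdy R x y)*y^2 - 2*y*(R x y) + (α*y^2 + R x y)^2|
          ≤ (b*(m*|y|^3)) * ((3*ε'+a^2*δ)*|y|^3) :=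
        mul_le_mul e1 hN (abs_nonneg _) (by positivity)
      have hden : |y|^4/4 ≤ |(P x y)^2*y^2| := by
        rw [abs_mul, abs_pow, abs_pow]
        have h1 := mul_le_mul_of_nonneg_right hdenP (by positivity : (0:ℝ) ≤ |y|^2)
        have h2 : |y|^2/4 * |y|^2 = |y|^4/4 := by ring
        linarith
      have hden0 : (0:ℝ) < |y|^4/4 := by positivity
      calc |β*x| * |(pdy R x y)*y^2 - 2*y*(R x y) + (α*y^2 + R x y)^2| / |(P x y)^2*y^2|
          ≤ ((b*(m*|y|^3)) * ((3*ε'+a^2*δ)*|y|^3)) / (|y|^4/4) :=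
            div_le_div₀ (by positivity) hnum hden0 hden
        _ = 4*b*m*(3*ε'+a^2*δ)*|y|^2 := by
            rw [div_eq_iff (ne_of_gt hden0)]
            ring
        _ ≤ (12*b*m*ε' + 4*a^2*b*m*δ)*|y| := by
            have h1 : |y|^2 ≤ |y| := by
              have := mul_le_mul_of_nonneg_right hy1 (abs_nonneg y)
              have h0 : |y| *|y| = |y|^2 := by ring
              linarith
            have h2 := mul_le_mul_of_nonneg_left h1
              (by positivity : (0:ℝ) ≤ 12*b*m*ε' + 4*a^2*b*m*δ)
            have h3 : 4*b*m*(3*ε'+a^2*δ)*|y|^2 = (12*b*m*ε' + 4*a^2*b*m*δ)*|y|^2 := by ring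
            linarith
    have hg2 : |pdy r x y| ≤ ((5+12*b*m)*ε' + 4*a^2*b*m*δ)*|y| := by
      rw [hid2]
      have t1 := abs_sub_le' (pdy R x y + (-1 + 2*α*y + pdy R x y) * pdy Rt x (P x y))
        (β*x*((pdy R x y)*y^2 - 2*y*(R x y) + (α*y^2 + R x y)^2)/((P x y)^2*y^2))
      have t2 := abs_add_le (pdy R x y) ((-1 + 2*α*y + pdy R x y) * pdy Rt x (P x y))
      have e1 : |(-1 + 2*α*y + pdy R x y) * pdy Rt x (P x y)| ≤ 4*ε'*|y| := by
        rw [abs_mul]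
        have := mul_le_mul hDp hB2 (abs_nonneg _) (by norm_num)
        linarith
      linarith [hA2, hthird]
    -- Goal 3
    have hSigx : pdx r x y = (pdx R x y) * (1 - β*x/(P x y)^2 + pdy Rt x (P x y))
        + β/(P x y) + pdx Rt x (P x y) + β/y := by
      simp only [pdx]
      exact ((derivs x y hy hyδ₀ hx).2).deriv
    have hid3 : pdx r x y * y = (pdx R x y * y) * (1 - β*x/(P x y)^2 + pdy Rt x (P x y))
        + β*(α*y^2 + R x y)/(P x y) + pdx Rt x (P x y) * y := by
      rw [hSigx]
      have hq := hpne
      field_simp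
      rw [hP x y]
      ring
    have hβx : |β*x/(P x y)^2| ≤ 4*b*m*|y| := by
      rw [abs_div]
      have e1 : |β*x| ≤ b * (m*|y|^3) := by
        rw [abs_mul]
        have := mul_le_mul_of_nonneg_left hx (abs_nonneg β)
        simp only [hb_def]
        linarith
      have hden : |y|^2/4 ≤ |(P x y)^2| := by rw [abs_pow]; exact hdenP
      have hden0 : (0:ℝ) < |y|^2/4 := by positivity
      calc |β*x| / |(P x y)^2| ≤ (b*(m*|y|^3)) / (|y|^2/4) :=
            div_le_div₀ (by positivity) e1 hden0 hden
        _ = 4*b*m*|y| := by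
            rw [div_eq_iff (ne_of_gt hden0)]
            ring
    have hS : |1 - β*x/(P x y)^2 + pdy Rt x (P x y)| ≤ 3 + 4*b*m := by
      have t1 := abs_add_le (1 - β*x/(P x y)^2) (pdy Rt x (P x y))
      have t2 := abs_sub_le' (1:ℝ) (β*x/(P x y)^2)
      have t3 : |(1:ℝ)| = 1 := by norm_num
      have e2 : 4*b*m*|y| ≤ 4*b*m := by
        have := mul_le_mul_of_nonneg_left hy1 (by positivity : (0:ℝ) ≤ 4*b*m)
        linarith
      have e3 : 2*ε'*|y| ≤ 2 := by
        have := mul_le_mul hε'1 hy1 (abs_nonneg y) one_pos.le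
        linarith
      linarith [hβx, hB2]
    have he1 : |(pdx R x y * y) * (1 - β*x/(P x y)^2 + pdy Rt x (P x y))| ≤ (3+4*b*m)*ε' := by
      rw [abs_mul]
      have := mul_le_mul hA3 hS (abs_nonneg _) hε'0.le
      linarith
    have he2 : |β*(α*y^2 + R x y)/(P x y)| ≤ 2*a*b*δ := by
      rw [abs_div, abs_mul]
      have hnum : |β| * |α*y^2 + R x y| ≤ b * (a*y^2) := by
        have := mul_le_mul_of_nonneg_left hsum (abs_nonneg β)
        simp only [hb_def]
        linarith
      have hden0 : (0:ℝ) < |y|/2 := by positivity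
      calc |β| * |α*y^2 + R x y| / |P x y| ≤ (b*(a*y^2)) / (|y|/2) :=
            div_le_div₀ (by positivity) hnum hden0 hplo
        _ = 2*a*b*|y| := by
            rw [div_eq_iff (ne_of_gt hden0), ← hY2]
            ring
        _ ≤ 2*a*b*δ := mul_le_mul_of_nonneg_left hyδ (by positivity)
    have he3 : |pdx Rt x (P x y) * y| ≤ 2*ε' := by
      rw [abs_mul]
      have h1 : |pdx Rt x (P x y)| * |y| ≤ |pdx Rt x (P x y)| * (2*|P x y|) :=
        mul_le_mul_of_nonneg_left (by linarith : |y| ≤ 2*|P x y|) (abs_nonneg _)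
      have h2 : |pdx Rt x (P x y)| * (2*|P x y|) = 2*(|pdx Rt x (P x y)| * |P x y|) := by ring
      linarith [hB3]
    have hg3 : |pdx r x y * y| ≤ (5+4*b*m)*ε' + 2*a*b*δ := by
      rw [hid3]
      have t1 := abs_add_le ((pdx R x y * y) * (1 - β*x/(P x y)^2 + pdy Rt x (P x y))
        + β*(α*y^2 + R x y)/(P x y)) (pdx Rt x (P x y) * y)
      have t2 := abs_add_le ((pdx R x y * y) * (1 - β*x/(P x y)^2 + pdy Rt x (P x y)))
        (β*(α*y^2 + R x y)/(P x y))
      linarith [he1, he2, he3]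
    -- conclude
    refine ⟨?_, ?_, ?_⟩
    · have hc : (5:ℝ) + 2*a*b*m ≤ 2*C := by
        rw [hCexp]
        linarith [hnn3, hnn1, hnn6, hnn7, hnn8, sq_nonneg a, hb0, hm0.le]
      have := hkey 5 (2*a*b*m) (by norm_num) (by positivity) hc
      linarith
    · have hc : ((5:ℝ)+12*b*m) + 4*a^2*b*m ≤ 2*C := by
        rw [hCexp]
        linarith [hnn1, hnn6, hnn7, hnn8, sq_nonneg a, hb0, hm0.le]
      have hcf := hkey (5+12*b*m) (4*a^2*b*m) (by positivity) (by positivity) hc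
      rw [abs_div, div_le_iff₀ hy]
      calc |pdy r x y| ≤ ((5+12*b*m)*ε' + 4*a^2*b*m*δ)*|y| := hg2
        _ ≤ ε * |y| := mul_le_mul_of_nonneg_right hcf (abs_nonneg y)
    · have hc : ((5:ℝ)+4*b*m) + 2*a*b ≤ 2*C := by
        rw [hCexp]
        linarith [hnn1, hnn4, hnn5, hnn6, hnn7, hnn8, sq_nonneg a, hb0, hm0.le]
      have hcf := hkey (5+4*b*m) (2*a*b) (by positivity) (by positivity) hc
      linarith [hg3]
end

section
/- Let δ > 0, γ > 0 and, for 0 < |x| < γ, let y(x) be the unique fixed point of y ↦ P(x,y) in I₋₁(x) ∪ I₁(x) (as provided by Proposition 2.7). Then x/y(x)³ → −α/β as x → 0 (x ≠ 0); in particular, for all sufficiently small |x| > 0 one has y(x) ∈ I_{sign(−αβx)}(x), i.e. the sign of y(x) equals the sign of −αβx. -/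
open Set Filter Topology

lemma cbrt_nonneg {u : ℝ} (hu : 0 ≤ u) : 0 ≤ cbrt u := Real.rpow_nonneg hu _

lemma cbrt_pos {u : ℝ} (hu : 0 < u) : 0 < cbrt u := Real.rpow_pos_of_pos hu _

lemma cube_cbrt {u : ℝ} (hu : 0 ≤ u) : (cbrt u) ^ 3 = u := by
  have : (cbrt u) ^ (3:ℕ) = (u ^ ((1:ℝ)/3)) ^ ((3:ℕ):ℝ) := (Real.rpow_natCast _ 3).symm
  rw [this, ← Real.rpow_mul hu]
  norm_num

lemma cbrt_cube {t : ℝ} (ht : 0 ≤ t) : cbrt (t ^ 3) = t := by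
  have h3 : (t:ℝ) ^ (3:ℕ) = t ^ ((3:ℕ):ℝ) := (Real.rpow_natCast _ 3).symm
  show (t ^ (3:ℕ) : ℝ) ^ ((1:ℝ)/3) = t
  rw [h3, ← Real.rpow_mul ht]
  norm_num

lemma cbrt_mono {u v : ℝ} (hu : 0 ≤ u) (huv : u ≤ v) : cbrt u ≤ cbrt v :=
  Real.rpow_le_rpow hu huv (by norm_num)

lemma cbrt_lt_of_lt_cube {u t : ℝ} (hu : 0 ≤ u) (ht : 0 ≤ t) (h : u < t ^ 3) : cbrt u < t := by
  have := Real.rpow_lt_rpow hu h (by norm_num : (0:ℝ) < 1/3)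
  rwa [show (t^3) ^ ((1:ℝ)/3) = cbrt (t^3) from rfl, cbrt_cube ht] at this

lemma cbrt_zero : cbrt 0 = 0 := Real.zero_rpow (by norm_num)

lemma cbrt_open (m : ℝ) : IsOpen {p : ℝ × ℝ | cbrt (|p.1| / m) < |p.2|} := by
  apply isOpen_lt
  · have hc : Continuous (fun s : ℝ => s ^ ((1:ℝ)/3)) :=
      continuous_iff_continuousAt.2 fun x => Real.continuousAt_rpow_const x _ (Or.inr (by norm_num))
    exact hc.comp ((continuous_fst.abs).div_const m)
  · exact continuous_snd.abs

section main
variable {m : ℝ} {R : ℝ → ℝ → ℝ}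
  (hRC2 : ContDiffOn ℝ 2 (fun p : ℝ × ℝ => R p.1 p.2) {p : ℝ × ℝ | cbrt (|p.1| / m) < |p.2|})

include hRC2 in
lemma Rdiff {x y : ℝ} (h : cbrt (|x| / m) < |y|) :
    DifferentiableAt ℝ (fun p : ℝ × ℝ => R p.1 p.2) (x, y) := by
  have hmem : (x, y) ∈ {p : ℝ × ℝ | cbrt (|p.1| / m) < |p.2|} := h
  exact (hRC2.contDiffAt ((cbrt_open m).mem_nhds hmem)).differentiableAt (by norm_num)

include hRC2 in
lemma Rdx {x y : ℝ} (h : cbrt (|x| / m) < |y|) :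
    HasDerivAt (fun x' => R x' y) (pdx R x y) x := by
  have hd : DifferentiableAt ℝ (fun x' => R x' y) x :=
    by have := (Rdiff hRC2 h).comp x ((differentiableAt_id (𝕜 := ℝ) (x := x)).prodMk (differentiableAt_const y)); exact this
  exact hd.hasDerivAt

include hRC2 in
lemma Rdy {x y : ℝ} (h : cbrt (|x| / m) < |y|) :
    HasDerivAt (fun y' => R x y') (pdy R x y) y := by
  have hd : DifferentiableAt ℝ (fun y' => R x y') y :=
    (Rdiff hRC2 h).comp y ((differentiableAt_const x).prodMk differentiableAt_id)
  exact hd.hasDerivAt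

lemma region_of (hm0 : 0 < m) {t y : ℝ} (h : |t| < m * |y| ^ 3) : cbrt (|t| / m) < |y| := by
  have h1 : |t| / m < |y| ^ 3 := (div_lt_iff₀ hm0).2 (by
    calc |t| < m * |y|^3 := h
    _ = |y|^3 * m := by ring)
  exact cbrt_lt_of_lt_cube (div_nonneg (abs_nonneg t) hm0.le) (abs_nonneg y) h1

lemma region0 (hm0 : 0 < m) {t : ℝ} (ht : 0 < |t|) : cbrt (|(0:ℝ)| / m) < |t| := by
  simpa [abs_zero, zero_div, cbrt_zero] using ht

variable (hRlim : ∀ ε > (0 : ℝ), ∃ δ > (0 : ℝ), ∀ x y : ℝ,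
      0 < |y| → |y| ≤ δ → |x| ≤ m * |y| ^ 3 →
      |R x y| ≤ ε ∧ |pdy R x y / y| ≤ ε ∧ |pdx R x y * y| ≤ ε)

include hRC2 hRlim in
lemma R_zero_slice (hm0 : 0 < m) : ∀ ε > (0:ℝ), ∃ δ₁ > (0:ℝ), ∀ y : ℝ,
    0 < |y| → |y| ≤ δ₁ → |R 0 y| ≤ ε * y ^ 2 := by
  intro ε hε
  obtain ⟨δ₁, hδ₁, hb⟩ := hRlim ε hε
  refine ⟨δ₁, hδ₁, fun y hy0 hyδ => ?_⟩
  apply le_of_forall_pos_le_add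
  intro ε' hε'
  obtain ⟨δ₂, hδ₂, hb'⟩ := hRlim ε' hε'
  set c := min δ₂ |y| with hc
  have hc0 : 0 < c := lt_min hδ₂ hy0
  have hcy : c ≤ |y| := min_le_right _ _
  have hcδ₂ : c ≤ δ₂ := min_le_left _ _
  -- the interval between y' and y, where y' = ±c has the sign of y
  have key : ∀ (y' : ℝ) (s : Set ℝ), Convex ℝ s → y' ∈ s → y ∈ s →
      (∀ t ∈ s, 0 < |t| ∧ |t| ≤ |y|) → |y'| = c → |y - y'| ≤ |y| →
      |R 0 y| ≤ ε * y ^ 2 + ε' := by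
    intro y' s hconv hy's hys hts habs hyy'
    have mvt : ‖R 0 y - R 0 y'‖ ≤ (ε * |y|) * ‖y - y'‖ := by
      apply hconv.norm_image_sub_le_of_norm_hasDerivWithin_le
        (f' := fun t => pdy R 0 t) ?_ ?_ hy's hys
      · intro t hts'
        exact (Rdy hRC2 (region0 hm0 (hts t hts').1)).hasDerivWithinAt
      · intro t hts'
        obtain ⟨ht0, hty⟩ := hts t hts'
        have hbt := (hb 0 t ht0 (hty.trans hyδ)
          (by simpa using mul_nonneg hm0.le (pow_nonneg (abs_nonneg t) 3))).2.1
        have ht0' : t ≠ 0 := fun h => by simp [h] at ht0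
        have : |pdy R 0 t| = |pdy R 0 t / t| * |t| := by
          rw [← abs_mul, div_mul_cancel₀ _ ht0']
        rw [Real.norm_eq_abs, this]
        exact mul_le_mul hbt hty (abs_nonneg t) hε.le
    have hR' : |R 0 y'| ≤ ε' := by
      refine (hb' 0 y' (by rw [habs]; exact hc0) (by rw [habs]; exact hcδ₂) ?_).1
      simpa using mul_nonneg hm0.le (pow_nonneg (abs_nonneg y') 3)
    have h1 : |R 0 y| ≤ |R 0 y - R 0 y'| + |R 0 y'| := by
      calc |R 0 y| = |(R 0 y - R 0 y') + R 0 y'| := by ring_nf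
      _ ≤ _ := abs_add_le _ _
    have h2 : |R 0 y - R 0 y'| ≤ ε * y ^ 2 := by
      have := mvt
      rw [Real.norm_eq_abs, Real.norm_eq_abs] at this
      calc |R 0 y - R 0 y'| ≤ ε * |y| * |y - y'| := this
      _ ≤ ε * |y| * |y| := by
        apply mul_le_mul_of_nonneg_left hyy' (mul_nonneg hε.le (abs_nonneg y))
      _ = ε * y ^ 2 := by rw [mul_assoc, abs_mul_abs_self, sq]
    linarith
  rcases lt_or_ge 0 y with hy | hy
  · have hyy : |y| = y := abs_of_pos hy
    refine key c (Icc c y) (convex_Icc _ _) ⟨le_refl c, by linarith [hcy, hyy.symm.le]⟩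
      ⟨by rw [hyy] at hcy; exact hcy, le_refl y⟩ ?_ (abs_of_pos hc0) ?_
    · intro t ⟨h1, h2⟩
      have ht : 0 < t := lt_of_lt_of_le hc0 h1
      constructor
      · rw [abs_of_pos ht]; exact ht
      · rw [abs_of_pos ht, hyy]; exact h2
    · rw [hyy] at hcy ⊢
      rw [abs_of_nonneg (by linarith)]
      linarith
  · have hy' : y < 0 := lt_of_le_of_ne hy (abs_pos.mp hy0)
    have hyy : |y| = -y := abs_of_neg hy'
    have hcy' : y ≤ -c := by rw [hyy] at hcy; linarith
    refine key (-c) (Icc y (-c)) (convex_Icc _ _) ⟨hcy', le_refl _⟩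
      ⟨le_refl y, by linarith⟩ ?_ (by rw [abs_neg, abs_of_pos hc0]) ?_
    · intro t ⟨h1, h2⟩
      have ht : t < 0 := lt_of_le_of_lt h2 (by linarith)
      constructor
      · rw [abs_of_neg ht]; linarith
      · rw [abs_of_neg ht, hyy]; linarith
    · rw [hyy]
      rw [abs_of_nonpos (by linarith)]
      linarith
include hRC2 hRlim in
lemma RA (hm0 : 0 < m) {m' : ℝ} (hm'0 : 0 ≤ m') (hm'm : m' < m) :
    ∀ ε > (0:ℝ), ∃ δ' > (0:ℝ), ∀ x y : ℝ, 0 < |y| → |y| ≤ δ' → |x| ≤ m' * |y| ^ 3 →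
    |R x y| ≤ ε * y ^ 2 := by
  intro ε hε
  have h1m : (0:ℝ) < 1 + m := by linarith
  set ε₁ := ε / (1 + m) with hε₁def
  have hε₁ : 0 < ε₁ := div_pos hε h1m
  obtain ⟨δ₁, hδ₁, hb⟩ := hRlim ε₁ hε₁
  obtain ⟨δ₀, hδ₀, h0⟩ := R_zero_slice hRC2 hRlim hm0 ε₁ hε₁
  refine ⟨min δ₁ δ₀, lt_min hδ₁ hδ₀, fun x y hy0 hyδ hxy => ?_⟩
  have hyδ₁ : |y| ≤ δ₁ := hyδ.trans (min_le_left _ _)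
  have hyδ₀ : |y| ≤ δ₀ := hyδ.trans (min_le_right _ _)
  have hy3 : 0 < |y| ^ 3 := pow_pos hy0 3
  have hm'm3 : m' * |y| ^ 3 < m * |y| ^ 3 := mul_lt_mul_of_pos_right hm'm hy3
  have habs : ∀ t ∈ Set.uIcc (0:ℝ) x, |t| ≤ |x| := by
    intro t ht
    rw [Set.mem_uIcc] at ht
    rcases ht with ⟨h1, h2⟩ | ⟨h1, h2⟩
    · exact abs_le.2 ⟨le_trans (neg_nonpos.2 (abs_nonneg x)) h1, h2.trans (le_abs_self x)⟩
    · exact abs_le.2 ⟨le_trans (neg_abs_le x) h1, h2.trans (abs_nonneg x)⟩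
  have hRx : ‖R x y - R 0 y‖ ≤ (ε₁ / |y|) * ‖x - 0‖ := by
    apply (convex_uIcc (0:ℝ) x).norm_image_sub_le_of_norm_hasDerivWithin_le
      (f' := fun t => pdx R t y) ?_ ?_ (Set.left_mem_uIcc) (Set.right_mem_uIcc)
    · intro t ht
      refine (Rdx hRC2 (region_of hm0 ?_)).hasDerivWithinAt
      exact lt_of_le_of_lt ((habs t ht).trans hxy) hm'm3
    · intro t ht
      have hbt := (hb t y hy0 hyδ₁
        (((habs t ht).trans hxy).trans hm'm3.le)).2.2
      rw [Real.norm_eq_abs, le_div_iff₀ hy0, ← abs_mul]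
      exact hbt
  have h0y : |R 0 y| ≤ ε₁ * y ^ 2 := h0 y hy0 hyδ₀
  rw [Real.norm_eq_abs, Real.norm_eq_abs, sub_zero] at hRx
  have hy2 : |y| ^ 3 = y ^ 2 * |y| := by
    rw [pow_succ, sq_abs]
  have key : ε₁ / |y| * |x| ≤ ε₁ * m' * y ^ 2 := by
    calc ε₁ / |y| * |x| ≤ ε₁ / |y| * (m' * |y| ^ 3) :=
      mul_le_mul_of_nonneg_left hxy (div_nonneg hε₁.le (abs_nonneg y))
    _ = ε₁ * m' * y ^ 2 := by
      rw [hy2]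
      field_simp
  have htot : |R x y| ≤ ε₁ * (1 + m') * y ^ 2 := by
    calc |R x y| = |(R x y - R 0 y) + R 0 y| := by ring_nf
    _ ≤ |R x y - R 0 y| + |R 0 y| := abs_add_le _ _
    _ ≤ ε₁ * m' * y ^ 2 + ε₁ * y ^ 2 := add_le_add (le_trans hRx key) h0y
    _ = ε₁ * (1 + m') * y ^ 2 := by ring
  calc |R x y| ≤ ε₁ * (1 + m') * y ^ 2 := htot
  _ ≤ ε₁ * (1 + m) * y ^ 2 := by nlinarith [mul_nonneg (mul_nonneg hε₁.le (sub_nonneg.2 hm'm.le)) (sq_nonneg y)]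
  _ = ε * y ^ 2 := by
    rw [hε₁def, div_mul_cancel₀ _ h1m.ne']

include hRC2 hRlim in
set_option maxHeartbeats 2000000 in
lemma core (α β : ℝ) (hα : α ≠ 0) (hβ : β ≠ 0) (hm : |α| / |β| < m)
    (P : ℝ → ℝ → ℝ)
    (hP : ∀ x y : ℝ, y ≠ 0 → P x y = y + α * y ^ 2 + β * x / y + R x y)
    (δ γ : ℝ) (hδ : 0 < δ) (hγ : 0 < γ) (yfix : ℝ → ℝ)
    (hyfix : ∀ x : ℝ, 0 < |x| → |x| < γ →
      (yfix x ∈ Set.Icc (-δ) (-(cbrt (|x| / m))) ∪ Set.Icc (cbrt (|x| / m)) δ) ∧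
      P x (yfix x) = yfix x ∧
      (∀ z ∈ Set.Icc (-δ) (-(cbrt (|x| / m))) ∪ Set.Icc (cbrt (|x| / m)) δ,
        P x z = z → z = yfix x)) :
    ∀ ε > (0:ℝ), ∃ γ' > (0:ℝ), ∀ x : ℝ, 0 < |x| → |x| < γ' →
      |x / (yfix x) ^ 3 + α / β| ≤ ε ∧
      (0 < -(α * β * x) → yfix x ∈ Set.Icc (cbrt (|x| / m)) δ) ∧
      (-(α * β * x) < 0 → yfix x ∈ Set.Icc (-δ) (-(cbrt (|x| / m)))) := by
  have hαa : 0 < |α| := abs_pos.2 hα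
  have hβa : 0 < |β| := abs_pos.2 hβ
  set c := |α| / |β| with hcdef
  clear_value c
  have hc : 0 < c := by rw [hcdef]; exact div_pos hαa hβa
  have hm0 : 0 < m := hc.trans hm
  set m' := (c + m) / 2 with hm'def
  clear_value m'
  have hm'c : c < m' := by rw [hm'def]; linarith
  have hm'm : m' < m := by rw [hm'def]; linarith
  have hm'0 : (0:ℝ) ≤ m' := by linarith
  intro ε hε
  set η := min 1 (min (ε / (c + 1)) ((m' - c) / (c + 1))) with hηdef
  clear_value η
  have hη : 0 < η := by
    rw [hηdef]
    apply lt_min one_pos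
    exact lt_min (div_pos hε (by linarith)) (div_pos (by linarith) (by linarith))
  have hη1 : η ≤ 1 := by rw [hηdef]; exact min_le_left _ _
  have hηε : η ≤ ε / (c + 1) := by rw [hηdef]; exact (min_le_right _ _).trans (min_le_left _ _)
  have hηm : η ≤ (m' - c) / (c + 1) := by rw [hηdef]; exact (min_le_right _ _).trans (min_le_right _ _)
  have h1η : (0:ℝ) < 1 + η := by linarith
  have hcη : c * (1 + η) ≤ m' := by
    have h1 : c * η ≤ c * ((m' - c) / (c + 1)) := mul_le_mul_of_nonneg_left hηm hc.le
    have h2 : c * ((m' - c) / (c + 1)) ≤ m' - c := by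
      rw [mul_div_assoc'] ; rw [div_le_iff₀ (by linarith : (0:ℝ) < c + 1)]
      nlinarith only [hc, hm'c]
    nlinarith only [h1, h2, hc, hm'c]
  have hcε : c * η ≤ ε := by
    have h1 : c * η ≤ c * (ε / (c + 1)) := mul_le_mul_of_nonneg_left hηε hc.le
    have h2 : c * (ε / (c + 1)) ≤ ε := by
      rw [mul_div_assoc'] ; rw [div_le_iff₀ (by linarith : (0:ℝ) < c + 1)]
      nlinarith only [hc, hε]
    linarith only [h1, h2]
  set ε₁ := |α| * η / 4 with hε₁def
  clear_value ε₁
  have hε₁ : 0 < ε₁ := by rw [hε₁def]; positivity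
  obtain ⟨δ', hδ'0, hA⟩ := RA hRC2 hRlim hm0 hm'0 hm'm ε₁ hε₁
  set δm := min δ δ' with hδmdef
  clear_value δm
  have hδm : 0 < δm := by rw [hδmdef]; exact lt_min hδ hδ'0
  refine ⟨min γ (|α| / |β| * δm ^ 3 / 2), lt_min hγ (by positivity), fun x hx0 hxγ' => ?_⟩
  have hxγ : |x| < γ := lt_of_lt_of_le hxγ' (min_le_left _ _)
  have hx2 : |x| ≤ |α| / |β| * δm ^ 3 / 2 := (lt_of_lt_of_le hxγ' (min_le_right _ _)).le
  have hxne : x ≠ 0 := abs_pos.mp hx0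
  set w := |β| * |x| / |α| with hwdef
  clear_value w
  have hw : 0 < w := by rw [hwdef]; positivity
  have hwc : w * c = |x| := by rw [hwdef, hcdef]; field_simp
  -- main construction, parametrized by the sign s
  have main : ∀ s : ℝ, (s = 1 ∨ s = -1) → β * (s * x) = -(α * w) →
      ∃ t₀ : ℝ, cbrt (|x| / m) ≤ t₀ ∧ 0 < t₀ ∧ t₀ ≤ δ ∧ yfix x = s * t₀ ∧
        |x / (yfix x) ^ 3 + α / β| ≤ ε := by
    intro s hs hsx
    set a := cbrt (w / (1 + η)) with hadef
    clear_value a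
    set b := cbrt (w * (1 + η)) with hbdef
    clear_value b
    have ha3 : a ^ 3 = w / (1 + η) := by rw [hadef]; exact cube_cbrt (by positivity)
    have hb3 : b ^ 3 = w * (1 + η) := by rw [hbdef]; exact cube_cbrt (by positivity)
    have ha0 : 0 < a := by rw [hadef]; exact cbrt_pos (by positivity)
    have hab : a ≤ b := by
      rw [hadef, hbdef]
      exact cbrt_mono (by positivity) (by rw [div_le_iff₀ h1η]; nlinarith only [mul_pos hw hη, mul_nonneg (mul_nonneg hw.le hη.le) hη.le])
    have hb0 : 0 < b := lt_of_lt_of_le ha0 hab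
    -- b ≤ δm
    have hw2 : 2 * w ≤ δm ^ 3 := by
      have h1 : |β| * |x| / |α| ≤ |β| * (|α| / |β| * δm ^ 3 / 2) / |α| := by gcongr
      have h2 : |β| * (|α| / |β| * δm ^ 3 / 2) / |α| = δm ^ 3 / 2 := by field_simp
      rw [hwdef]; linarith [h1.trans_eq h2]
    have hbδm : b ≤ δm := by
      have : b ^ 3 ≤ δm ^ 3 := by
        rw [hb3]
        have := mul_le_mul_of_nonneg_left hη1 hw.le
        linarith only [this, hw2]
      calc b = cbrt (b ^ 3) := (cbrt_cube hb0.le).symm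
      _ ≤ cbrt (δm ^ 3) := cbrt_mono (pow_nonneg (lt_of_lt_of_le ha0 hab).le 3) this
      _ = δm := cbrt_cube hδm.le
    have hbδ : b ≤ δ := hbδm.trans (by rw [hδmdef]; exact min_le_left _ _)
    have hbδ' : b ≤ δ' := hbδm.trans (by rw [hδmdef]; exact min_le_right _ _)
    -- cbrt (|x|/m) ≤ a
    have hacbrt : cbrt (|x| / m) ≤ a := by
      rw [hadef]
      apply cbrt_mono (by positivity)
      rw [div_le_div_iff₀ hm0 h1η]
      have h1 := mul_le_mul_of_nonneg_left (hcη.trans hm'm.le) hw.le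
      have h2 : w * (c * (1 + η)) = |x| * (1 + η) := by rw [← hwc]; ring
      linarith only [h1, h2]
    -- region facts for t ∈ [a, b]
    have hreg : ∀ t : ℝ, a ≤ t → t ≤ b → |x| ≤ m' * t ^ 3 ∧ |x| < m * t ^ 3 := by
      intro t hat htb
      have ht0 : 0 < t := lt_of_lt_of_le ha0 hat
      have ht3 : a ^ 3 ≤ t ^ 3 := pow_le_pow_left₀ ha0.le hat 3
      have h1 : |x| ≤ m' * a ^ 3 := by
        rw [ha3, ← hwc, ← mul_div_assoc, le_div_iff₀ h1η]
        nlinarith only [mul_le_mul_of_nonneg_left hcη hw.le, hwc]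
      have h2 : |x| ≤ m' * t ^ 3 := h1.trans (mul_le_mul_of_nonneg_left ht3 hm'0)
      exact ⟨h2, lt_of_le_of_lt h2 (mul_lt_mul_of_pos_right hm'm (pow_pos ht0 3))⟩
    have hregS : ∀ t : ℝ, a ≤ t → t ≤ b → cbrt (|x| / m) < t := by
      intro t hat htb
      have ht0 : 0 < t := lt_of_lt_of_le ha0 hat
      exact cbrt_lt_of_lt_cube (by positivity) ht0.le
        ((div_lt_iff₀ hm0).2 (by linarith only [(hreg t hat htb).2]))
    have hsabs : |s| = 1 := by rcases hs with h | h <;> rw [h] <;> norm_num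
    -- bound on R along the path
    have hRb : ∀ t : ℝ, a ≤ t → t ≤ b → |R x (s * t)| ≤ ε₁ * t ^ 2 := by
      intro t hat htb
      have ht0 : 0 < t := lt_of_lt_of_le ha0 hat
      have hst : |s * t| = t := by rw [abs_mul, hsabs, one_mul, abs_of_pos ht0]
      have := hA x (s * t) (by rw [hst]; exact ht0) (by rw [hst]; exact htb.trans hbδ')
        (by rw [hst]; exact (hreg t hat htb).1)
      have hst2 : (s * t) ^ 2 = t ^ 2 := by
        rcases hs with h | h <;> rw [h] <;> ring
      rwa [hst2] at this
    -- the IVT function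
    set F := fun t : ℝ => α * (1 - w / t ^ 3) + R x (s * t) / t ^ 2 with hFdef
    clear_value F
    have hFa : F a = -(α * η) + R x (s * a) / a ^ 2 := by
      rw [hFdef]
      show α * (1 - w / a ^ 3) + R x (s * a) / a ^ 2 = _
      have : w / a ^ 3 = 1 + η := by rw [ha3]; field_simp
      rw [this]; ring
    have hFb : F b = α * (η / (1 + η)) + R x (s * b) / b ^ 2 := by
      rw [hFdef]
      show α * (1 - w / b ^ 3) + R x (s * b) / b ^ 2 = _
      have : w / b ^ 3 = 1 / (1 + η) := by rw [hb3]; field_simp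
      rw [this]
      have : 1 - 1 / (1 + η) = η / (1 + η) := by field_simp; ring
      rw [this]
    have hRa2 : |R x (s * a) / a ^ 2| ≤ ε₁ := by
      rw [abs_div, abs_of_pos (pow_pos ha0 2), div_le_iff₀ (pow_pos ha0 2)]
      calc |R x (s * a)| ≤ ε₁ * a ^ 2 := hRb a le_rfl hab
      _ = ε₁ * a ^ 2 := rfl
    have hRb2 : |R x (s * b) / b ^ 2| ≤ ε₁ := by
      rw [abs_div, abs_of_pos (pow_pos hb0 2), div_le_iff₀ (pow_pos hb0 2)]
      exact hRb b hab le_rfl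
    -- continuity of F on [a,b]
    have hFcont : ContinuousOn F (Set.Icc a b) := by
      have hne3 : ∀ t ∈ Set.Icc a b, t ^ 3 ≠ 0 := fun t ht =>
        (pow_ne_zero 3 (ne_of_gt (lt_of_lt_of_le ha0 ht.1)))
      have hne2 : ∀ t ∈ Set.Icc a b, t ^ 2 ≠ 0 := fun t ht =>
        (pow_ne_zero 2 (ne_of_gt (lt_of_lt_of_le ha0 ht.1)))
      rw [hFdef]
      apply ContinuousOn.add
      · exact continuousOn_const.mul (continuousOn_const.sub
          (continuousOn_const.div ((continuous_pow 3).continuousOn) hne3))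
      · apply ContinuousOn.div _ ((continuous_pow 2).continuousOn) hne2
        have hmaps : ∀ t ∈ Set.Icc a b,
            ((x, s * t) : ℝ × ℝ) ∈ {p : ℝ × ℝ | cbrt (|p.1| / m) < |p.2|} := by
          intro t ht
          have ht0 : 0 < t := lt_of_lt_of_le ha0 ht.1
          show cbrt (|x| / m) < |s * t|
          rw [abs_mul, hsabs, one_mul, abs_of_pos ht0]
          exact hregS t ht.1 ht.2
        exact hRC2.continuousOn.comp
          ((continuous_const.prodMk (continuous_const.mul continuous_id)).continuousOn)
          hmaps
    -- signs at the endpoints and IVT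
    have hη2 : η / 2 ≤ η / (1 + η) := by
      rw [div_le_div_iff₀ (by linarith : (0:ℝ) < 2) h1η]
      nlinarith only [mul_le_mul_of_nonneg_left hη1 hη.le]
    -- endpoint signs and IVT
    obtain ⟨t₀, ht₀ab, hFt₀⟩ : ∃ t₀ ∈ Set.Icc a b, F t₀ = 0 := by
      have hra := abs_le.mp hRa2
      have hrb := abs_le.mp hRb2
      rcases hα.lt_or_gt with hαneg | hαpos
      · have habs : |α| = -α := abs_of_neg hαneg
        rw [habs] at hε₁def
        have hαη : 0 < -α * η := mul_pos (neg_pos.2 hαneg) hη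
        have hFa0 : 0 ≤ F a := by rw [hFa]; linarith only [hra.1, hε₁def, hαη]
        have hFb0 : F b ≤ 0 := by
          rw [hFb]
          have h3 := mul_le_mul_of_nonpos_left hη2 hαneg.le
          linarith only [hrb.2, h3, hε₁def, hαη]
        obtain ⟨t₀, ht₀, hF⟩ := intermediate_value_Icc' hab hFcont ⟨hFb0, hFa0⟩
        exact ⟨t₀, ht₀, hF⟩
      · have habs : |α| = α := abs_of_pos hαpos
        rw [habs] at hε₁def
        have hαη : 0 < α * η := mul_pos hαpos hη
        have hFa0 : F a ≤ 0 := by rw [hFa]; linarith only [hra.2, hε₁def, hαη]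
        have hFb0 : 0 ≤ F b := by
          rw [hFb]
          have h3 := mul_le_mul_of_nonneg_left hη2 hαpos.le
          linarith only [hrb.1, h3, hε₁def, hαη]
        obtain ⟨t₀, ht₀, hF⟩ := intermediate_value_Icc hab hFcont ⟨hFa0, hFb0⟩
        exact ⟨t₀, ht₀, hF⟩
    obtain ⟨ht₀a, ht₀b⟩ := ht₀ab
    have ht₀pos : 0 < t₀ := lt_of_lt_of_le ha0 ht₀a
    have hst₀3 : (0:ℝ) < t₀ ^ 3 := pow_pos ht₀pos 3
    have hz0 : s * t₀ ≠ 0 := by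
      rcases hs with h | h <;> rw [h] <;> simp [ht₀pos.ne']
    have hF' : α * (1 - w / t₀ ^ 3) + R x (s * t₀) / t₀ ^ 2 = 0 := by
      have := hFt₀; rw [hFdef] at this; exact this
    have hPz : P x (s * t₀) = s * t₀ := by
      rw [hP x (s * t₀) hz0]
      have hexp : α * (s * t₀) ^ 2 + β * x / (s * t₀) + R x (s * t₀) = 0 := by
        rcases hs with h | h <;> subst h
        · have hβx : β * x = -(α * w) := by linear_combination hsx
          have e1 : α * (1 * t₀) ^ 2 + β * x / (1 * t₀) + R x (1 * t₀) =
              t₀ ^ 2 * (α * (1 - w / t₀ ^ 3) + R x (1 * t₀) / t₀ ^ 2) := by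
            rw [hβx]; field_simp [ht₀pos.ne']; ring
          rw [e1, hF', mul_zero]
        · have hβx : β * x = α * w := by linear_combination -hsx
          have e1 : α * (-1 * t₀) ^ 2 + β * x / (-1 * t₀) + R x (-1 * t₀) =
              t₀ ^ 2 * (α * (1 - w / t₀ ^ 3) + R x (-1 * t₀) / t₀ ^ 2) := by
            rw [hβx]; field_simp [ht₀pos.ne']; ring
          rw [e1, hF', mul_zero]
      linarith only [hexp]
    have hmem : s * t₀ ∈ Set.Icc (-δ) (-(cbrt (|x| / m))) ∪ Set.Icc (cbrt (|x| / m)) δ := by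
      rcases hs with h | h <;> subst h
      · right
        exact ⟨by simpa using hacbrt.trans ht₀a, by simpa using ht₀b.trans hbδ⟩
      · left
        constructor
        · simp only [neg_one_mul, neg_le_neg_iff]
          exact ht₀b.trans hbδ
        · simp only [neg_one_mul, neg_le_neg_iff]
          exact hacbrt.trans ht₀a
    have hyx : s * t₀ = yfix x := (hyfix x hx0 hxγ).2.2 (s * t₀) hmem hPz
    refine ⟨t₀, hacbrt.trans ht₀a, ht₀pos, ht₀b.trans hbδ, hyx.symm, ?_⟩
    have hyfix3 : (yfix x) ^ 3 = s * t₀ ^ 3 := by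
      rw [← hyx]; rcases hs with h | h <;> rw [h] <;> ring
    have hxval : x / (yfix x) ^ 3 = -(α * w) / (β * t₀ ^ 3) := by
      rw [hyfix3]
      rcases hs with h | h <;> subst h
      · have hβx : β * x = -(α * w) := by linear_combination hsx
        rw [one_mul, div_eq_div_iff hst₀3.ne' (mul_ne_zero hβ hst₀3.ne')]
        linear_combination t₀ ^ 3 * hβx
      · have hβx : β * x = α * w := by linear_combination -hsx
        rw [div_eq_div_iff (mul_ne_zero (by norm_num : (-1:ℝ) ≠ 0) hst₀3.ne')
          (mul_ne_zero hβ hst₀3.ne')]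
        linear_combination t₀ ^ 3 * hβx
    have haw : w / (1 + η) ≤ t₀ ^ 3 := ha3 ▸ pow_le_pow_left₀ ha0.le ht₀a 3
    have htb3 : t₀ ^ 3 ≤ w * (1 + η) := hb3 ▸ pow_le_pow_left₀ ht₀pos.le ht₀b 3
    have h1 : w / t₀ ^ 3 ≤ 1 + η := by
      rw [div_le_iff₀ hst₀3]
      have := (div_le_iff₀ h1η).mp haw
      linarith only [this]
    have h2 : 1 - η ≤ w / t₀ ^ 3 := by
      rw [le_div_iff₀ hst₀3]
      nlinarith only [mul_le_mul_of_nonneg_left htb3 (sub_nonneg.2 hη1),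
        mul_nonneg (mul_nonneg hw.le hη.le) hη.le]
    rw [hxval]
    have heq : -(α * w) / (β * t₀ ^ 3) + α / β = α / β * (1 - w / t₀ ^ 3) := by
      field_simp; ring
    rw [heq, abs_mul]
    have hab2 : |α / β| = c := by rw [abs_div, ← hcdef]
    rw [hab2]
    have h3 : |1 - w / t₀ ^ 3| ≤ η := abs_le.2 ⟨by linarith only [h1], by linarith only [h2]⟩
    calc c * |1 - w / t₀ ^ 3| ≤ c * η := mul_le_mul_of_nonneg_left h3 hc.le
    _ ≤ ε := hcε
  -- use `main` in either sign case
  have hq : α * β * x ≠ 0 := mul_ne_zero (mul_ne_zero hα hβ) hxne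
  have h1w : α ^ 2 * w = |α * β * x| := by
    rw [hwdef, abs_mul, abs_mul]
    field_simp
    linear_combination -(sq_abs α)
  rcases hq.lt_or_gt with hneg | hpos
  · have h2 : α * β * x = -|α * β * x| := by
      rw [abs_of_neg hneg]; ring
    have hsx : β * ((1:ℝ) * x) = -(α * w) := by
      rw [one_mul]
      apply mul_left_cancel₀ hα
      rw [show α * -(α * w) = -(α ^ 2 * w) by ring, h1w]
      linarith only [h2]
    obtain ⟨t₀, hcb, ht0, htδ, hyxeq, hest⟩ := main 1 (Or.inl rfl) hsx
    refine ⟨hest, fun _ => ?_, fun hcontra => absurd hcontra (by intro h; linarith only [h, hneg])⟩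
    rw [hyxeq, one_mul]
    exact ⟨hcb, htδ⟩
  · have h2 : α * β * x = |α * β * x| := (abs_of_pos hpos).symm
    have hsx : β * ((-1:ℝ) * x) = -(α * w) := by
      apply mul_left_cancel₀ hα
      rw [show α * -(α * w) = -(α ^ 2 * w) by ring, h1w]
      linarith only [h2]
    obtain ⟨t₀, hcb, ht0, htδ, hyxeq, hest⟩ := main (-1) (Or.inr rfl) hsx
    refine ⟨hest, fun hcontra => absurd hcontra (by intro h; linarith only [h, hpos]), fun _ => ?_⟩
    rw [hyxeq]
    constructor
    · simp only [neg_one_mul, neg_le_neg_iff]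
      exact htδ
    · simp only [neg_one_mul, neg_le_neg_iff]
      exact hcb

end main

/-- Proposition 2.7, asymptotics of the fixed point: `x / y(x)³ → -α/β` as `x → 0`;
in particular `y(x) ∈ I_{sign(-αβx)}(x)` for small `|x| > 0`. -/
theorem stmt_11
    (α β m : ℝ) (hαβ : α * β ≠ 0) (hm : |α| / |β| < m)
    (R : ℝ → ℝ → ℝ)
    (hRC2 : ContDiffOn ℝ 2 (fun p : ℝ × ℝ => R p.1 p.2)
      {p : ℝ × ℝ | cbrt (|p.1| / m) < |p.2|})
    (hRlim : ∀ ε > (0 : ℝ), ∃ δ > (0 : ℝ), ∀ x y : ℝ,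
      0 < |y| → |y| ≤ δ → |x| ≤ m * |y| ^ 3 →
      |R x y| ≤ ε ∧ |pdy R x y / y| ≤ ε ∧ |pdx R x y * y| ≤ ε)
    (P : ℝ → ℝ → ℝ)
    (hP : ∀ x y : ℝ, y ≠ 0 → P x y = y + α * y ^ 2 + β * x / y + R x y)
    -- the fixed point provided by Proposition 2.7
    (δ γ : ℝ) (hδ : 0 < δ) (hγ : 0 < γ) (yfix : ℝ → ℝ)
    (hyfix : ∀ x : ℝ, 0 < |x| → |x| < γ →
      (yfix x ∈ Icc (-δ) (-(cbrt (|x| / m))) ∪ Icc (cbrt (|x| / m)) δ) ∧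
      P x (yfix x) = yfix x ∧
      (∀ z ∈ Icc (-δ) (-(cbrt (|x| / m))) ∪ Icc (cbrt (|x| / m)) δ,
        P x z = z → z = yfix x)) :
    Tendsto (fun x : ℝ => x / (yfix x) ^ 3) (nhdsWithin 0 {(0 : ℝ)}ᶜ)
      (nhds (-(α / β))) ∧
    ∃ γ' > (0 : ℝ), ∀ x : ℝ, 0 < |x| → |x| < γ' →
      (0 < -(α * β * x) → yfix x ∈ Icc (cbrt (|x| / m)) δ) ∧
      (-(α * β * x) < 0 → yfix x ∈ Icc (-δ) (-(cbrt (|x| / m)))) := by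
  have hα : α ≠ 0 := fun h => hαβ (by rw [h, zero_mul])
  have hβ : β ≠ 0 := fun h => hαβ (by rw [h, mul_zero])
  have hcore := core hRC2 hRlim α β hα hβ hm P hP δ γ hδ hγ yfix hyfix
  constructor
  · rw [Metric.tendsto_nhdsWithin_nhds]
    intro ε hε
    obtain ⟨γ', hγ'0, h⟩ := hcore (ε / 2) (half_pos hε)
    refine ⟨γ', hγ'0, fun {x} hx hdist => ?_⟩
    have hx0 : 0 < |x| := abs_pos.2 (Set.mem_compl_singleton_iff.mp hx)
    rw [Real.dist_eq, sub_zero] at hdist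
    have hb := (h x hx0 hdist).1
    rw [Real.dist_eq, sub_neg_eq_add]
    linarith only [hb, hε]
  · obtain ⟨γ', hγ'0, h⟩ := hcore 1 one_pos
    exact ⟨γ', hγ'0, fun x hx0 hxγ' => ⟨(h x hx0 hxγ').2.1, (h x hx0 hxγ').2.2⟩⟩
end

section
/- Let F : ℝ × ℝ × ℝ → ℝ be C¹ with F(0,0,0) = 0. Assume there exist M > 0, m > 0, δ₀ > 0 and n ∈ ℕ such that |F(0,ζ,y)| ≤ M·|y|ⁿ for all |ζ| ≤ m|y|³ and |y| ≤ δ₀. Assume further that there exist q ∈ (0,1) and L ≠ 0 such that F'_ξ(ξ,ζ,y) → L as |ξ| ≤ (M/(|L|q))·|y|ⁿ, |ζ| ≤ m|y|³, y → 0 (i.e. for every ε > 0 there is δ > 0 with |F'_ξ(ξ,ζ,y) − L| ≤ ε whenever 0 < |y| ≤ δ, |ξ| ≤ (M/(|L|q))·|y|ⁿ and |ζ| ≤ m|y|³). Then there exists δ ∈ (0, δ₀) such that for every (ζ,y) with |ζ| ≤ m|y|³ and |y| ≤ δ, the equation F(ξ,ζ,y) = 0 has a unique solution ξ = ξ(ζ,y)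 satisfying |ξ(ζ,y)| ≤ (M/(|L|q))·|y|ⁿ. Moreover, the function (ζ,y) ↦ ξ(ζ,y) is differentiable at every point of the interior of the region {(ζ,y) : |ζ| ≤ m|y|³, |y| ≤ δ}. -/
open Set Filter Topology

set_option maxHeartbeats 1000000 in
theorem aux14
    (F : ℝ → ℝ → ℝ → ℝ)
    (hF : ContDiff ℝ 1 (fun p : ℝ × ℝ × ℝ => F p.1 p.2.1 p.2.2))
    (hF0 : F 0 0 0 = 0)
    (M m δ₀ : ℝ) (hM : 0 < M) (hm : 0 < m) (hδ₀ : 0 < δ₀) (n : ℕ)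
    (hbd : ∀ ζ y : ℝ, |ζ| ≤ m * |y| ^ 3 → |y| ≤ δ₀ → |F 0 ζ y| ≤ M * |y| ^ n)
    (q L : ℝ) (hq : 0 < q) (hq1 : q < 1) (hL : 0 < L)
    (hlim : ∀ ε > (0 : ℝ), ∃ δ > (0 : ℝ), ∀ ξ ζ y : ℝ,
      0 < |y| → |y| ≤ δ → |ξ| ≤ M / (|L| * q) * |y| ^ n → |ζ| ≤ m * |y| ^ 3 →
      |deriv (fun s => F s ζ y) ξ - L| ≤ ε) :
    ∃ δ : ℝ, 0 < δ ∧ δ < δ₀ ∧ ∃ ξf : ℝ → ℝ → ℝ,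
      (∀ ζ y : ℝ, |ζ| ≤ m * |y| ^ 3 → |y| ≤ δ →
        F (ξf ζ y) ζ y = 0 ∧
        |ξf ζ y| ≤ M / (|L| * q) * |y| ^ n ∧
        ∀ ξ : ℝ, |ξ| ≤ M / (|L| * q) * |y| ^ n → F ξ ζ y = 0 → ξ = ξf ζ y) ∧
      ∀ p : ℝ × ℝ, p ∈ interior {p : ℝ × ℝ | |p.1| ≤ m * |p.2| ^ 3 ∧ |p.2| ≤ δ} →
        DifferentiableAt ℝ (fun p : ℝ × ℝ => ξf p.1 p.2) p := by
  rw [abs_of_pos hL] at hlim ⊢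
  set R : ℝ := M / (L * q) with hRdef
  have hR : 0 < R := div_pos hM (mul_pos hL hq)
  set ε : ℝ := L * (1 - q) / 2 with hεdef
  have hε : 0 < ε := by
    have h1 : 0 < 1 - q := by linarith
    positivity
  have hLε : 0 < L - ε := by
    have : L - ε = L * (1 + q) / 2 := by rw [hεdef]; ring
    rw [this]; positivity
  obtain ⟨δ₁, hδ₁, hcl⟩ := hlim ε hε
  set δ : ℝ := min δ₁ δ₀ / 2 with hδdef
  have hδpos : 0 < δ := by rw [hδdef]; have := lt_min hδ₁ hδ₀; positivity
  have hδδ₀ : δ < δ₀ := by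
    rw [hδdef]
    have : min δ₁ δ₀ ≤ δ₀ := min_le_right _ _
    linarith
  have hδδ₁ : δ ≤ δ₁ := by
    rw [hδdef]
    have : min δ₁ δ₀ ≤ δ₁ := min_le_left _ _
    linarith
  have hδle₀ : δ ≤ δ₀ := hδδ₀.le
  set Fu : ℝ × ℝ × ℝ → ℝ := fun p => F p.1 p.2.1 p.2.2 with hFudef
  set P : ℝ × ℝ × ℝ → ℝ := fun p => fderiv ℝ Fu p (1, 0, 0) with hPdef
  have hPcont : Continuous P :=
    (hF.continuous_fderiv one_ne_zero).clm_apply continuous_const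
  have hPd : ∀ ξ ζ y : ℝ, HasDerivAt (fun s => F s ζ y) (P (ξ, ζ, y)) ξ := by
    intro ξ ζ y
    have h1 : HasFDerivAt Fu (fderiv ℝ Fu (ξ, ζ, y)) (ξ, ζ, y) :=
      ((hF.differentiable one_ne_zero) (ξ, ζ, y)).hasFDerivAt
    have h2 : HasDerivAt (fun s : ℝ => (s, ζ, y)) ((1 : ℝ), (0 : ℝ), (0 : ℝ)) ξ :=
      (hasDerivAt_id ξ).prodMk (hasDerivAt_const ξ ((ζ, y) : ℝ × ℝ))
    exact h1.comp_hasDerivAt ξ h2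
  -- derivative estimate including y = 0
  have hcl' : ∀ ξ ζ y : ℝ, |y| ≤ δ₁ → |ξ| ≤ R * |y| ^ n → |ζ| ≤ m * |y| ^ 3 →
      |P (ξ, ζ, y) - L| ≤ ε := by
    intro ξ ζ y hy hξ hζ
    rcases eq_or_ne y 0 with rfl | hy0
    · have hζ0 : ζ = 0 := by
        have : |ζ| ≤ 0 := by simpa using hζ
        exact abs_nonpos_iff.mp this
      subst hζ0
      have key : ∀ t : ℝ, t ∈ Ioc (0 : ℝ) δ₁ → |P (ξ * t ^ n, 0, t) - L| ≤ ε := by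
        intro t ht
        have ht0 : 0 < t := ht.1
        have h01 : |(0 : ℝ)| ^ n ≤ 1 := by
          simp only [abs_zero]
          exact pow_le_one₀ le_rfl zero_le_one
        have hb : |ξ * t ^ n| ≤ R * |t| ^ n := by
          rw [abs_mul, abs_pow]
          calc |ξ| * |t| ^ n ≤ (R * |(0:ℝ)| ^ n) * |t| ^ n := by
                have : (0:ℝ) ≤ |t| ^ n := by positivity
                exact mul_le_mul_of_nonneg_right hξ this
            _ ≤ R * |t| ^ n := by
                have : R * |(0:ℝ)| ^ n ≤ R := by
                  nlinarith [h01, hR.le, abs_nonneg (0:ℝ)]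
                have h2 : (0:ℝ) ≤ |t| ^ n := by positivity
                nlinarith
        have := hcl (ξ * t ^ n) 0 t (by rw [abs_of_pos ht0]; exact ht0)
          (by rw [abs_of_pos ht0]; exact ht.2) hb (by simp; positivity)
        rwa [(hPd (ξ * t ^ n) 0 t).deriv] at this
      have htend : Tendsto (fun t : ℝ => |P (ξ * t ^ n, 0, t) - L|) (𝓝[>] 0)
          (𝓝 |P (ξ * (0:ℝ) ^ n, 0, 0) - L|) := by
        have hc : Continuous fun t : ℝ => |P (ξ * t ^ n, 0, t) - L| := by
          apply Continuous.abs
          apply Continuous.sub _ continuous_const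
          exact hPcont.comp ((continuous_const.mul (continuous_pow n)).prodMk (continuous_const.prodMk continuous_id))
        exact (hc.continuousAt.tendsto).mono_left nhdsWithin_le_nhds
      have hmem : Ioc (0:ℝ) δ₁ ∈ 𝓝[>] (0:ℝ) := Ioc_mem_nhdsGT_of_mem ⟨le_rfl, hδ₁⟩
      have hbound : |P (ξ * (0:ℝ) ^ n, 0, 0) - L| ≤ ε :=
        le_of_tendsto htend (eventually_of_mem hmem key)
      have hξeq : ξ * (0:ℝ) ^ n = ξ ∨ ξ = 0 := by
        cases n with
        | zero => left; simp
        | succ k =>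
          right
          have : |ξ| ≤ 0 := by simpa using hξ
          exact abs_nonpos_iff.mp this
      rcases hξeq with h | h
      · rwa [h] at hbound
      · subst h; simpa using hbound
    · have := hcl ξ ζ y (abs_pos.mpr hy0) hy hξ hζ
      rwa [(hPd ξ ζ y).deriv] at this
  -- P ≥ L - ε on the relevant box
  have hPlow : ∀ s ζ y : ℝ, |y| ≤ δ → |s| ≤ R * |y| ^ n → |ζ| ≤ m * |y| ^ 3 →
      L - ε ≤ P (s, ζ, y) := by
    intro s ζ y hy hs hζ
    have h1 := hcl' s ζ y (hy.trans hδδ₁) hs hζ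
    have h2 := (abs_le.mp h1).1
    linarith
  set c : ℝ := M * (1 - q) / (2 * q) with hcdef
  have hc : 0 < c := by
    have h1 : 0 < 1 - q := by linarith
    positivity
  have hLεR : (L - ε) * R = M + c := by
    rw [hεdef, hRdef, hcdef]
    field_simp
    ring
  have hcontg : ∀ ζ y : ℝ, Continuous fun s => F s ζ y := by
    intro ζ y
    have : Continuous fun s : ℝ => Fu (s, ζ, y) :=
      hF.continuous.comp (continuous_id.prodMk continuous_const)
    exact this
  have hmono : ∀ ζ y : ℝ, |ζ| ≤ m * |y| ^ 3 → |y| ≤ δ →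
      StrictMonoOn (fun s => F s ζ y) (Icc (-(R * |y| ^ n)) (R * |y| ^ n)) := by
    intro ζ y hζ hy
    apply strictMonoOn_of_deriv_pos (convex_Icc _ _) (hcontg ζ y).continuousOn
    intro x hx
    rw [interior_Icc] at hx
    rw [(hPd x ζ y).deriv]
    have hxb : |x| ≤ R * |y| ^ n := abs_le.mpr ⟨hx.1.le, hx.2.le⟩
    linarith [hPlow x ζ y hy hxb hζ]
  have hval : ∀ ζ y : ℝ, |ζ| ≤ m * |y| ^ 3 → |y| ≤ δ → y ≠ 0 →
      c * |y| ^ n ≤ F (R * |y| ^ n) ζ y ∧ F (-(R * |y| ^ n)) ζ y ≤ -(c * |y| ^ n) := by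
    intro ζ y hζ hy hy0
    set B := R * |y| ^ n with hBdef
    have hay : 0 < |y| := abs_pos.mpr hy0
    have hB : 0 < B := by rw [hBdef]; positivity
    have hIcc : ∀ x ∈ Icc (-B) B, HasDerivWithinAt (fun s => F s ζ y - L * s)
        (P (x, ζ, y) - L) (Icc (-B) B) x := by
      intro x _
      have h2 : HasDerivAt (fun s : ℝ => L * s) L x := by
        simpa using (hasDerivAt_id x).const_mul L
      exact ((hPd x ζ y).sub h2).hasDerivWithinAt
    have hbd' : ∀ x ∈ Icc (-B) B, ‖P (x, ζ, y) - L‖ ≤ ε := by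
      intro x hx
      exact hcl' x ζ y (hy.trans hδδ₁) (abs_le.mpr ⟨hx.1, hx.2⟩) hζ
    have h0mem : (0 : ℝ) ∈ Icc (-B) B := ⟨by linarith, by linarith⟩
    have hBmem : B ∈ Icc (-B) B := ⟨by linarith, le_rfl⟩
    have hnBmem : -B ∈ Icc (-B) B := ⟨le_rfl, by linarith⟩
    have h0 := hbd ζ y hζ (hy.trans hδle₀)
    have h0' := abs_le.mp h0
    have hLB : (L - ε) * B = (M + c) * |y| ^ n := by
      rw [hBdef, ← mul_assoc, hLεR]
    have hLB : L * B - ε * B = M * |y| ^ n + c * |y| ^ n := by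
      rw [hBdef, show L * (R * |y| ^ n) - ε * (R * |y| ^ n) = (L - ε) * R * |y| ^ n by ring,
        hLεR]
      ring
    constructor
    · have hmvt := Convex.norm_image_sub_le_of_norm_hasDerivWithin_le hIcc hbd'
        (convex_Icc _ _) h0mem hBmem
      rw [Real.norm_eq_abs, Real.norm_eq_abs, sub_zero, abs_of_pos hB] at hmvt
      have h3 := (abs_le.mp hmvt).1
      have h4 := h0'.1
      linarith
    · have hmvt := Convex.norm_image_sub_le_of_norm_hasDerivWithin_le hIcc hbd'
        (convex_Icc _ _) h0mem hnBmem
      rw [Real.norm_eq_abs, Real.norm_eq_abs, sub_zero, abs_of_neg (by linarith : -B < 0)] at hmvt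
      have h3 := (abs_le.mp hmvt).2
      have h4 := h0'.2
      have h5 : ε * - -B = ε * B := by ring
      rw [h5] at hmvt
      have h3' := (abs_le.mp hmvt).2
      linarith
  have key : ∀ ζ y : ℝ, |ζ| ≤ m * |y| ^ 3 → |y| ≤ δ →
      ∃ ξ, |ξ| ≤ R * |y| ^ n ∧ F ξ ζ y = 0 ∧
        (∀ ξ', |ξ'| ≤ R * |y| ^ n → F ξ' ζ y = 0 → ξ' = ξ) ∧
        (y ≠ 0 → |ξ| < R * |y| ^ n) := by
    intro ζ y hζ hy
    set B := R * |y| ^ n with hBdef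
    have hB0 : 0 ≤ B := by rw [hBdef]; positivity
    have hmo := hmono ζ y hζ hy
    rcases eq_or_ne y 0 with rfl | hy0
    · have hζ0 : ζ = 0 := abs_nonpos_iff.mp (by simpa using hζ)
      subst hζ0
      refine ⟨0, by simpa using hB0, hF0, ?_, fun h => absurd rfl h⟩
      intro ξ' hξ' h0'
      have h1 : ξ' ∈ Icc (-B) B := abs_le.mp hξ'
      have h2 : (0 : ℝ) ∈ Icc (-B) B := ⟨by linarith, hB0⟩
      exact hmo.injOn h1 h2 (h0'.trans hF0.symm)
    · obtain ⟨hpos, hneg⟩ := hval ζ y hζ hy hy0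
      have hay : 0 < |y| := abs_pos.mpr hy0
      have hB : 0 < B := by rw [hBdef]; positivity
      have hcy : 0 < c * |y| ^ n := by positivity
      have hsub := intermediate_value_Icc (by linarith : -B ≤ B) (hcontg ζ y).continuousOn
      have h0mem : (0 : ℝ) ∈ Icc (F (-B) ζ y) (F B ζ y) := ⟨by linarith, by linarith⟩
      obtain ⟨ξ, hξmem, hξ0⟩ := hsub h0mem
      have hξ0' : F ξ ζ y = 0 := hξ0
      have hne1 : ξ ≠ B := by
        intro h
        have hz : F B ζ y = 0 := by rw [← h]; exact hξ0'
        rw [hBdef] at hz; rw [hz] at hpos; linarith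
      have hne2 : ξ ≠ -B := by
        intro h
        have hz : F (-B) ζ y = 0 := by rw [← h]; exact hξ0'
        rw [hBdef] at hz; rw [hz] at hneg; linarith
      refine ⟨ξ, abs_le.mpr ⟨hξmem.1, hξmem.2⟩, hξ0', ?_, ?_⟩
      · intro ξ' hξ' h0'
        exact hmo.injOn (abs_le.mp hξ') hξmem (h0'.trans hξ0'.symm)
      · intro _
        exact abs_lt.mpr ⟨lt_of_le_of_ne hξmem.1 (Ne.symm hne2), lt_of_le_of_ne hξmem.2 hne1⟩
  classical
  set ξf : ℝ → ℝ → ℝ := fun ζ y =>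
    if h : ∃ ξ, |ξ| ≤ R * |y| ^ n ∧ F ξ ζ y = 0 then h.choose else 0 with hξfdef
  have hξfeq : ∀ ζ y : ℝ, |ζ| ≤ m * |y| ^ 3 → |y| ≤ δ →
      ∀ ξ, |ξ| ≤ R * |y| ^ n → F ξ ζ y = 0 →
      (∀ ξ', |ξ'| ≤ R * |y| ^ n → F ξ' ζ y = 0 → ξ' = ξ) → ξf ζ y = ξ := by
    intro ζ y hζ hy ξ h1 h2 h3
    have hex : ∃ ξ, |ξ| ≤ R * |y| ^ n ∧ F ξ ζ y = 0 := ⟨ξ, h1, h2⟩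
    rw [hξfdef]
    simp only [dif_pos hex]
    exact h3 _ hex.choose_spec.1 hex.choose_spec.2
  have hmain : ∀ ζ y : ℝ, |ζ| ≤ m * |y| ^ 3 → |y| ≤ δ →
      F (ξf ζ y) ζ y = 0 ∧ |ξf ζ y| ≤ R * |y| ^ n ∧
      ∀ ξ : ℝ, |ξ| ≤ R * |y| ^ n → F ξ ζ y = 0 → ξ = ξf ζ y := by
    intro ζ y hζ hy
    obtain ⟨ξ, h1, h2, h3, _⟩ := key ζ y hζ hy
    have heq := hξfeq ζ y hζ hy ξ h1 h2 h3
    rw [heq]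
    exact ⟨h2, h1, h3⟩
  have hstrictlt : ∀ ζ y : ℝ, |ζ| ≤ m * |y| ^ 3 → |y| ≤ δ → y ≠ 0 →
      |ξf ζ y| < R * |y| ^ n := by
    intro ζ y hζ hy hy0
    obtain ⟨ξ, h1, h2, h3, h4⟩ := key ζ y hζ hy
    rw [hξfeq ζ y hζ hy ξ h1 h2 h3]
    exact h4 hy0
  refine ⟨δ, hδpos, hδδ₀, ξf, hmain, ?_⟩
  intro p hp
  have hpS : p ∈ {p : ℝ × ℝ | |p.1| ≤ m * |p.2| ^ 3 ∧ |p.2| ≤ δ} := interior_subset hp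
  have hy0 : p.2 ≠ 0 := by
    intro h0
    have hp1 : p.1 = 0 := by
      have h1 := hpS.1
      rw [h0] at h1
      simp at h1
      exact abs_nonpos_iff.mp (by simpa using h1)
    have hnh : {p' : ℝ × ℝ | |p'.1| ≤ m * |p'.2| ^ 3 ∧ |p'.2| ≤ δ} ∈ 𝓝 p :=
      mem_interior_iff_mem_nhds.mp hp
    obtain ⟨t, ht, hball⟩ := Metric.mem_nhds_iff.mp hnh
    have hd : dist ((p.1 + t / 2, p.2) : ℝ × ℝ) p < t := by
      rw [Prod.dist_eq]
      apply max_lt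
      · rw [Real.dist_eq, add_sub_cancel_left, abs_of_pos (by linarith : (0:ℝ) < t / 2)]
        linarith
      · simpa using ht
    have hmem := hball (Metric.mem_ball.mpr hd)
    have h2 : |p.1 + t / 2| ≤ m * |p.2| ^ 3 := hmem.1
    rw [h0, hp1, zero_add] at h2
    have h4 : m * |(0 : ℝ)| ^ 3 = 0 := by simp
    rw [h4] at h2
    have h5 : |t / 2| = t / 2 := abs_of_pos (by linarith)
    rw [h5] at h2
    linarith
  obtain ⟨hFz, hbnd, huniq⟩ := hmain p.1 p.2 hpS.1 hpS.2
  set ξ₀ : ℝ := ξf p.1 p.2 with hξ₀def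
  have hlt : |ξ₀| < R * |p.2| ^ n := hstrictlt p.1 p.2 hpS.1 hpS.2 hy0
  set pt : ℝ × ℝ × ℝ := (ξ₀, p.1, p.2) with hptdef
  have hPpos : 0 < P pt := by
    have := hPlow ξ₀ p.1 p.2 hpS.2 hlt.le hpS.1
    have := hLε
    linarith
  have hFu' : HasStrictFDerivAt Fu (fderiv ℝ Fu pt) pt := hF.hasStrictFDerivAt one_ne_zero
  set A : (ℝ × ℝ × ℝ) →L[ℝ] ℝ := fderiv ℝ Fu pt with hAdef
  set T : (ℝ × ℝ × ℝ) →L[ℝ] ℝ × ℝ × ℝ := A.prod (ContinuousLinearMap.snd ℝ ℝ (ℝ × ℝ))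
    with hTdef
  have hA1 : A (1, 0, 0) = P pt := rfl
  have hTinj : Function.Injective T := by
    intro a b hab
    have h2t : (T a).2 = (T b).2 := congrArg Prod.snd hab
    have h1t : (T a).1 = (T b).1 := congrArg Prod.fst hab
    have h2 : a.2 = b.2 := h2t
    have h1 : A a = A b := h1t
    have hd : a - b = (a.1 - b.1) • ((1 : ℝ), (0 : ℝ), (0 : ℝ)) := by
      have : a.2 - b.2 = 0 := by rw [h2, sub_self]
      ext
      · simp
      · show a.2.1 - b.2.1 = _
        rw [show a.2.1 - b.2.1 = (a.2 - b.2).1 from rfl, this]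
        simp
      · show a.2.2 - b.2.2 = _
        rw [show a.2.2 - b.2.2 = (a.2 - b.2).2 from rfl, this]
        simp
    have h3 : A (a - b) = 0 := by rw [map_sub, h1, sub_self]
    rw [hd, map_smul, hA1, smul_eq_mul] at h3
    have h4 : a.1 - b.1 = 0 := by
      rcases mul_eq_zero.mp h3 with h | h
      · exact h
      · exact absurd h hPpos.ne'
    have h5 : a.1 = b.1 := by linarith
    exact Prod.ext h5 h2
  have hTsurj : Function.Surjective T := LinearMap.injective_iff_surjective.mp hTinj
  set e : (ℝ × ℝ × ℝ) ≃L[ℝ] ℝ × ℝ × ℝ :=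
    (LinearEquiv.ofBijective (T : (ℝ × ℝ × ℝ) →ₗ[ℝ] ℝ × ℝ × ℝ)
      ⟨hTinj, hTsurj⟩).toContinuousLinearEquiv with hedef
  have hecoe : (e : (ℝ × ℝ × ℝ) →L[ℝ] ℝ × ℝ × ℝ) = T := by
    apply ContinuousLinearMap.ext
    intro x
    rfl
  set G : ℝ × ℝ × ℝ → ℝ × ℝ × ℝ := fun x => (Fu x, x.2) with hGdef
  have hG : HasStrictFDerivAt G (e : (ℝ × ℝ × ℝ) →L[ℝ] ℝ × ℝ × ℝ) pt := by
    rw [hecoe]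
    exact hFu'.prodMk (ContinuousLinearMap.snd ℝ ℝ (ℝ × ℝ)).hasStrictFDerivAt
  have hGpt : G pt = ((0 : ℝ), p) := by
    have h1 : Fu pt = 0 := hFz
    exact Prod.ext h1 rfl
  set g : ℝ × ℝ × ℝ → ℝ × ℝ × ℝ := hG.localInverse G e pt with hgdef
  have hginv : g (G pt) = pt := hG.localInverse_apply_image
  have hgd : HasStrictFDerivAt g ((e.symm : (ℝ × ℝ × ℝ) →L[ℝ] ℝ × ℝ × ℝ)) (G pt) :=
    hG.to_localInverse
  set φ : ℝ × ℝ → ℝ := fun u => (g ((0 : ℝ), u)).1 with hφdef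
  have hφdiff : DifferentiableAt ℝ φ p := by
    have h1 : DifferentiableAt ℝ g ((0 : ℝ), p) := by
      rw [← hGpt]; exact hgd.differentiableAt
    have h2 : DifferentiableAt ℝ (fun u : ℝ × ℝ => (((0 : ℝ), u) : ℝ × ℝ × ℝ)) p :=
      (differentiableAt_const _).prodMk differentiableAt_id
    exact (h1.comp p h2).fst
  have hev1 : ∀ᶠ u : ℝ × ℝ in 𝓝 p, G (g ((0 : ℝ), u)) = ((0 : ℝ), u) := by
    have ht : Tendsto (fun u : ℝ × ℝ => (((0 : ℝ), u) : ℝ × ℝ × ℝ)) (𝓝 p) (𝓝 (G pt)) := by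
      rw [hGpt]
      exact (continuous_const.prodMk continuous_id).tendsto p
    exact ht.eventually hG.eventually_right_inverse
  have hev2 : ∀ᶠ u : ℝ × ℝ in 𝓝 p, F (φ u) u.1 u.2 = 0 := by
    filter_upwards [hev1] with u hu
    have h1 : Fu (g ((0 : ℝ), u)) = 0 := congrArg Prod.fst hu
    have h2 : (g ((0 : ℝ), u)).2 = u := congrArg Prod.snd hu
    have h3 : F (φ u) u.1 u.2 = Fu (g ((0 : ℝ), u)) := by
      show F (g ((0 : ℝ), u)).1 u.1 u.2 =
        F (g ((0 : ℝ), u)).1 (g ((0 : ℝ), u)).2.1 (g ((0 : ℝ), u)).2.2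
      rw [h2]
    rw [h3, h1]
  have hφp : φ p = ξ₀ := by
    have h1 : g ((0 : ℝ), p) = pt := by rw [← hGpt]; exact hginv
    show (g ((0 : ℝ), p)).1 = ξ₀
    rw [h1]
  have hev3 : ∀ᶠ u : ℝ × ℝ in 𝓝 p, |φ u| < R * |u.2| ^ n := by
    have hca : ContinuousAt (fun u : ℝ × ℝ => R * |u.2| ^ n - |φ u|) p := by
      apply ContinuousAt.sub
      · exact (continuous_const.mul ((continuous_abs.comp continuous_snd).pow n)).continuousAt
      · exact hφdiff.continuousAt.abs
    have hpos : (0 : ℝ) < R * |p.2| ^ n - |φ p| := by rw [hφp]; linarith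
    have h := continuousAt_const.eventually_lt hca hpos
    filter_upwards [h] with u hu
    linarith
  have hev4 : ∀ᶠ u : ℝ × ℝ in 𝓝 p, |u.1| ≤ m * |u.2| ^ 3 ∧ |u.2| ≤ δ :=
    mem_of_superset (isOpen_interior.mem_nhds hp) fun u hu => interior_subset hu
  have heqf : (fun u : ℝ × ℝ => ξf u.1 u.2) =ᶠ[𝓝 p] φ := by
    filter_upwards [hev2, hev3, hev4] with u h2 h3 h4
    exact ((hmain u.1 u.2 h4.1 h4.2).2.2 (φ u) h3.le h2).symm
  exact heqf.differentiableAt_iff.mpr hφdiff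

/-- Theorem C.1: an implicit function theorem for implicit functions that branch from
the boundary of a set. -/
theorem stmt_14
    (F : ℝ → ℝ → ℝ → ℝ)
    (hF : ContDiff ℝ 1 (fun p : ℝ × ℝ × ℝ => F p.1 p.2.1 p.2.2))
    (hF0 : F 0 0 0 = 0)
    (M m δ₀ : ℝ) (hM : 0 < M) (hm : 0 < m) (hδ₀ : 0 < δ₀) (n : ℕ)
    (hbd : ∀ ζ y : ℝ, |ζ| ≤ m * |y| ^ 3 → |y| ≤ δ₀ → |F 0 ζ y| ≤ M * |y| ^ n)
    (q L : ℝ) (hq : 0 < q) (hq1 : q < 1) (hL : L ≠ 0)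
    (hlim : ∀ ε > (0 : ℝ), ∃ δ > (0 : ℝ), ∀ ξ ζ y : ℝ,
      0 < |y| → |y| ≤ δ → |ξ| ≤ M / (|L| * q) * |y| ^ n → |ζ| ≤ m * |y| ^ 3 →
      |deriv (fun s => F s ζ y) ξ - L| ≤ ε) :
    ∃ δ : ℝ, 0 < δ ∧ δ < δ₀ ∧ ∃ ξf : ℝ → ℝ → ℝ,
      (∀ ζ y : ℝ, |ζ| ≤ m * |y| ^ 3 → |y| ≤ δ →
        F (ξf ζ y) ζ y = 0 ∧
        |ξf ζ y| ≤ M / (|L| * q) * |y| ^ n ∧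
        ∀ ξ : ℝ, |ξ| ≤ M / (|L| * q) * |y| ^ n → F ξ ζ y = 0 → ξ = ξf ζ y) ∧
      ∀ p : ℝ × ℝ, p ∈ interior {p : ℝ × ℝ | |p.1| ≤ m * |p.2| ^ 3 ∧ |p.2| ≤ δ} →
        DifferentiableAt ℝ (fun p : ℝ × ℝ => ξf p.1 p.2) p := by
  rcases hL.lt_or_gt with hneg | hpos
  · have hF' : ContDiff ℝ 1 (fun p : ℝ × ℝ × ℝ => -F p.1 p.2.1 p.2.2) := hF.neg
    have hlim' : ∀ ε > (0 : ℝ), ∃ δ > (0 : ℝ), ∀ ξ ζ y : ℝ,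
        0 < |y| → |y| ≤ δ → |ξ| ≤ M / (|(-L)| * q) * |y| ^ n → |ζ| ≤ m * |y| ^ 3 →
        |deriv (fun s => -F s ζ y) ξ - -L| ≤ ε := by
      intro ε hε
      obtain ⟨δ', hδ', h⟩ := hlim ε hε
      refine ⟨δ', hδ', fun ξ ζ y h1 h2 h3 h4 => ?_⟩
      rw [abs_neg] at h3
      have h5 := h ξ ζ y h1 h2 h3 h4
      have h6 : deriv (fun s => -F s ζ y) ξ = -deriv (fun s => F s ζ y) ξ := by
        simp [deriv.neg]
      rw [h6, show -deriv (fun s => F s ζ y) ξ - -L = -(deriv (fun s => F s ζ y) ξ - L) by ring,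
        abs_neg]
      exact h5
    obtain ⟨δ, h1, h2, ξf, h3, h4⟩ := aux14 (fun a b c => -F a b c) hF'
      (by simp [hF0]) M m δ₀ hM hm hδ₀ n
      (fun ζ y hζ hy => by simpa using hbd ζ y hζ hy) q (-L) hq hq1 (by linarith) hlim'
    refine ⟨δ, h1, h2, ξf, fun ζ y hζ hy => ?_, h4⟩
    obtain ⟨ha, hb, hc⟩ := h3 ζ y hζ hy
    rw [abs_neg] at hb
    refine ⟨neg_eq_zero.mp ha, hb, fun ξ hξ h0 => ?_⟩
    rw [← abs_neg L] at hξ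
    exact hc ξ hξ (neg_eq_zero.mpr h0)
  · exact aux14 F hF hF0 M m δ₀ hM hm hδ₀ n hbd q L hq hq1 hpos hlim
end
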